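/- arXiv:1412.2467 — 10 statements merged into one kernel-verified Lean document; each statement's English description precedes it below -/
import Mathlib

section
/- Let A be a commutative unital ring, let π be an ideal of A, and let n ≥ 3. Then the normal elementary subgroup E_n(π) is a normal subgroup of SL_n(A). -/
open Matrix

/-- `SL n A` is the special linear group `SL_n(A)`. -/
abbrev SL (n : ℕ) (A : Type) [CommRing A] : Type := Matrix.SpecialLinearGroup (Fin n) A

/-- The elementary matrix `e_{ij}(a) = 1_n + a·e_{ij}` as an element of `SL_n(A)` (for `i ≠ j`). -/
def elem (A : Type) [CommRing A] {n : ℕ} (i j : Fin n) (hij : i ≠ j) (a : A) : SL n A :=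
  ⟨Matrix.transvection i j a, Matrix.det_transvection_of_ne i j hij a⟩

/-- The (absolute) elementary subgroup `E_n(A)`: the subgroup of `SL_n(A)` generated by all
elementary matrices. -/
def EgrpAbs (A : Type) [CommRing A] (n : ℕ) : Subgroup (SL n A) :=
  Subgroup.closure {x | ∃ (i j : Fin n) (hij : i ≠ j) (a : A), x = elem A i j hij a}

/-- The normal (relative) elementary subgroup `E_n(π)`: the normal subgroup of `E_n(A)`
generated by the elementary matrices with coefficients in `π`, viewed inside `SL_n(A)`;
as a subgroup of `SL_n(A)` it is generated by all `E_n(A)`-conjugates of the elementary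
matrices with coefficients in `π`. -/
def Egrp (A : Type) [CommRing A] (n : ℕ) (π : Ideal A) : Subgroup (SL n A) :=
  Subgroup.closure {x | ∃ g ∈ EgrpAbs A n, ∃ (i j : Fin n) (hij : i ≠ j), ∃ a ∈ π,
    x = g * elem A i j hij a * g⁻¹}

namespace SuslinAux

variable {A : Type} [CommRing A] {n : ℕ}

lemma vmv_mul_vmv (v w v' w' : Fin n → A) :
    vecMulVec v w * vecMulVec v' w' = (w ⬝ᵥ v') • vecMulVec v w' := by
  ext r c
  simp only [mul_apply, vecMulVec_apply, Matrix.smul_apply, smul_eq_mul, dotProduct, Finset.sum_mul]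
  exact Finset.sum_congr rfl fun k _ => by ring

lemma vmv_add_right (v w1 w2 : Fin n → A) :
    vecMulVec v (w1 + w2) = vecMulVec v w1 + vecMulVec v w2 := by
  ext r c; simp [vecMulVec_apply, mul_add]

lemma vmv_add_left (v1 v2 w : Fin n → A) :
    vecMulVec (v1 + v2) w = vecMulVec v1 w + vecMulVec v2 w := by
  ext r c; simp [vecMulVec_apply, add_mul]

/-- `1 + v wᵀ` as an element of `SL_n(A)`, for `w ⬝ v = 0`. -/
def mk1 (v w : Fin n → A) (h : w ⬝ᵥ v = 0) : SL n A :=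
  ⟨1 + vecMulVec v w, by
    rw [vecMulVec_eq (Unit), det_one_add_replicateCol_mul_replicateRow, h, add_zero]⟩

@[simp] lemma mk1_coe (v w : Fin n → A) (h : w ⬝ᵥ v = 0) :
    (mk1 v w h : Matrix (Fin n) (Fin n) A) = 1 + vecMulVec v w := rfl

lemma mk1_congr {v w w' : Fin n → A} (e : w = w') (h : w ⬝ᵥ v = 0) (h' : w' ⬝ᵥ v = 0) :
    mk1 v w h = mk1 v w' h' := by subst e; rfl

lemma mk1_congr' {v v' w : Fin n → A} (e : v = v') (h : w ⬝ᵥ v = 0) (h' : w ⬝ᵥ v' = 0) :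
    mk1 v w h = mk1 v' w h' := by subst e; rfl

lemma mk1_zero (v : Fin n → A) (h : (0 : Fin n → A) ⬝ᵥ v = 0) : mk1 v 0 h = 1 := by
  apply Subtype.ext
  show (1 : Matrix (Fin n) (Fin n) A) + vecMulVec v 0 = 1
  ext r c; simp [vecMulVec_apply]

lemma mk1_add_right (v w1 w2 : Fin n → A) (h1 : w1 ⬝ᵥ v = 0) (h2 : w2 ⬝ᵥ v = 0) :
    mk1 v (w1 + w2) (by rw [add_dotProduct, h1, h2, add_zero]) =
      mk1 v w1 h1 * mk1 v w2 h2 := by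
  apply Subtype.ext
  show (1 : Matrix (Fin n) (Fin n) A) + vecMulVec v (w1 + w2)
      = (1 + vecMulVec v w1) * (1 + vecMulVec v w2)
  rw [mul_add, add_mul, add_mul, vmv_mul_vmv, h1, zero_smul, vmv_add_right]
  noncomm_ring

lemma mk1_add_left (v1 v2 w : Fin n → A) (h1 : w ⬝ᵥ v1 = 0) (h2 : w ⬝ᵥ v2 = 0) :
    mk1 (v1 + v2) w (by rw [dotProduct_add, h1, h2, add_zero]) =
      mk1 v1 w h1 * mk1 v2 w h2 := by
  apply Subtype.ext
  show (1 : Matrix (Fin n) (Fin n) A) + vecMulVec (v1 + v2) w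
      = (1 + vecMulVec v1 w) * (1 + vecMulVec v2 w)
  rw [mul_add, add_mul, add_mul, vmv_mul_vmv, h2, zero_smul, vmv_add_left]
  noncomm_ring

lemma vmv_single_single (i j : Fin n) (c d : A) :
    vecMulVec (Pi.single i c) (Pi.single j d) = Matrix.single i j (c * d) := by
  ext r s
  simp only [vecMulVec_apply, Pi.single_apply, Matrix.single, of_apply]
  split_ifs with h1 h2 h3 <;> simp_all <;> ring

lemma mk1_single_single (i j : Fin n) (hij : i ≠ j) (c d : A)
    (h : Pi.single j d ⬝ᵥ Pi.single i c = 0) :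
    mk1 (Pi.single i c) (Pi.single j d) h = elem A i j hij (c * d) := by
  apply Subtype.ext
  show (1 : Matrix (Fin n) (Fin n) A) + vecMulVec (Pi.single i c) (Pi.single j d)
      = transvection i j (c * d)
  rw [vmv_single_single, transvection]


section Membership

variable (π : Ideal A)

lemma elem_mem_abs (i j : Fin n) (hij : i ≠ j) (a : A) :
    elem A i j hij a ∈ EgrpAbs A n :=
  Subgroup.subset_closure ⟨i, j, hij, a, rfl⟩

lemma gen_mem {g : SL n A} (hg : g ∈ EgrpAbs A n) (i j : Fin n) (hij : i ≠ j)
    {a : A} (ha : a ∈ π) : g * elem A i j hij a * g⁻¹ ∈ Egrp A n π :=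
  Subgroup.subset_closure ⟨g, hg, i, j, hij, a, ha, rfl⟩

lemma elem_mem (i j : Fin n) (hij : i ≠ j) {a : A} (ha : a ∈ π) :
    elem A i j hij a ∈ Egrp A n π := by
  have := gen_mem π (one_mem (EgrpAbs A n)) i j hij ha
  simpa using this

lemma conj_mem_abs {g x : SL n A} (hg : g ∈ EgrpAbs A n) (hx : x ∈ Egrp A n π) :
    g * x * g⁻¹ ∈ Egrp A n π := by
  induction hx using Subgroup.closure_induction with
  | mem y hy =>
    obtain ⟨h, hh, i, j, hij, a, ha, rfl⟩ := hy
    have : g * (h * elem A i j hij a * h⁻¹) * g⁻¹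
        = (g * h) * elem A i j hij a * (g * h)⁻¹ := by group
    rw [this]
    exact gen_mem π (mul_mem hg hh) i j hij ha
  | one => simpa using one_mem (Egrp A n π)
  | mul x y hx hy px py =>
    have : g * (x * y) * g⁻¹ = (g * x * g⁻¹) * (g * y * g⁻¹) := by group
    rw [this]; exact mul_mem px py
  | inv x hx px =>
    have : g * x⁻¹ * g⁻¹ = (g * x * g⁻¹)⁻¹ := by group
    rw [this]; exact inv_mem px

lemma dot_single_eq_zero {w : Fin n → A} {r0 : Fin n} (h0 : w r0 = 0) (c : A) :
    w ⬝ᵥ Pi.single r0 c = 0 := by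
  rw [dotProduct_single, h0, zero_mul]

/-- A matrix differing from 1 only in row `r0`, with off-diagonal entries in `π`. -/
lemma row_mem (r0 : Fin n) (c : A) :
    ∀ t : Finset (Fin n), ∀ w : Fin n → A, (∀ s ∉ t, w s = 0) → (∀ s, w s ∈ π) →
      w r0 = 0 → ∀ h, mk1 (Pi.single r0 c) w h ∈ Egrp A n π := by
  intro t
  induction t using Finset.induction with
  | empty =>
    intro w hsupp _ _ h
    have : w = 0 := funext fun s => hsupp s (Finset.notMem_empty s)
    rw [mk1_congr this h (by simp), mk1_zero]
    exact one_mem _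
  | @insert s t hs ih =>
    intro w hsupp hπ h0 h
    set w1 : Fin n → A := Pi.single s (w s) with hw1
    set w2 : Fin n → A := Function.update w s 0 with hw2
    have hsum : w = w1 + w2 := by
      funext r
      by_cases hr : r = s
      · subst hr; simp [hw1, hw2]
      · simp [hw1, hw2, Function.update_of_ne hr, Pi.single_eq_of_ne hr]
    have hw1r0 : w1 r0 = 0 := by
      by_cases hrs : r0 = s
      · subst hrs; simp [hw1, h0]
      · simp [hw1, Pi.single_eq_of_ne hrs]
    have hw2r0 : w2 r0 = 0 := by
      by_cases hrs : r0 = s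
      · subst hrs; simp [hw2]
      · simp [hw2, Function.update_of_ne hrs, h0]
    have h1 : w1 ⬝ᵥ Pi.single r0 c = 0 := dot_single_eq_zero hw1r0 c
    have h2 : w2 ⬝ᵥ Pi.single r0 c = 0 := dot_single_eq_zero hw2r0 c
    rw [mk1_congr hsum h (by rw [add_dotProduct, h1, h2, add_zero]), mk1_add_right _ _ _ h1 h2]
    refine mul_mem ?_ (ih w2 ?_ ?_ hw2r0 h2)
    · -- single piece
      by_cases hrs : s = r0
      · have : w s = 0 := by rw [hrs, h0]
        rw [mk1_congr (by rw [hw1, this, Pi.single_zero]) h1 (by simp), mk1_zero]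
        exact one_mem _
      · rw [mk1_single_single r0 s (Ne.symm hrs) c (w s) h1]
        exact elem_mem π r0 s (Ne.symm hrs) (π.mul_mem_left c (hπ s))
    · intro r hr
      by_cases hrs : r = s
      · subst hrs; simp [hw2]
      · simp only [hw2, Function.update_of_ne hrs]
        exact hsupp r (by simp [hrs, hr])
    · intro r
      by_cases hrs : r = s
      · subst hrs; simp [hw2]
      · simp only [hw2, Function.update_of_ne hrs]; exact hπ r

/-- A matrix `1 + z wᵀ` where `z` is supported in `t` and `w` vanishes on `t`,
and `w` has entries in `π`. -/
lemma block_mem :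
    ∀ t : Finset (Fin n), ∀ z w : Fin n → A, (∀ r ∉ t, z r = 0) → (∀ r ∈ t, w r = 0) →
      (∀ s, w s ∈ π) → ∀ h, mk1 z w h ∈ Egrp A n π := by
  intro t
  induction t using Finset.induction with
  | empty =>
    intro z w hz _ _ h
    have : z = 0 := funext fun r => hz r (Finset.notMem_empty r)
    rw [mk1_congr' this h (by simp)]
    have : (1 : Matrix (Fin n) (Fin n) A) + vecMulVec (0 : Fin n → A) w = 1 := by
      ext r c; simp [vecMulVec_apply]
    rw [show mk1 (0 : Fin n → A) w (by simp) = 1 from Subtype.ext this]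
    exact one_mem _
  | @insert s t hs ih =>
    intro z w hz hw hπ h
    set z1 : Fin n → A := Pi.single s (z s) with hz1
    set z2 : Fin n → A := Function.update z s 0 with hz2
    have hsum : z = z1 + z2 := by
      funext r
      by_cases hr : r = s
      · subst hr; simp [hz1, hz2]
      · simp [hz1, hz2, Function.update_of_ne hr, Pi.single_eq_of_ne hr]
    have hws : w s = 0 := hw s (Finset.mem_insert_self s t)
    have h1 : w ⬝ᵥ z1 = 0 := dot_single_eq_zero hws (z s)
    have h2 : w ⬝ᵥ z2 = 0 := by
      rw [hz2]
      apply Finset.sum_eq_zero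
      intro r _
      by_cases hrs : r = s
      · subst hrs; simp
      · rw [Function.update_of_ne hrs]
        by_cases hrt : r ∈ t
        · rw [hw r (Finset.mem_insert_of_mem hrt), zero_mul]
        · rw [hz r (by simp [hrs, hrt]), mul_zero]
    rw [mk1_congr' hsum h (by rw [dotProduct_add, h1, h2, add_zero]), mk1_add_left _ _ _ h1 h2]
    refine mul_mem (row_mem π s (z s) Finset.univ w (by simp) hπ hws h1) (ih z2 w ?_ ?_ hπ h2)
    · intro r hr
      by_cases hrs : r = s
      · subst hrs; simp [hz2]
      · simp only [hz2, Function.update_of_ne hrs]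
        exact hz r (by simp [hrs, hr])
    · intro r hr
      exact hw r (Finset.mem_insert_of_mem hr)


set_option maxHeartbeats 1000000 in
/-- The Suslin commutator lemma: for distinct `k, l, m` and `b ∈ π`,
`1 + (p e_k + q e_l)(bp e_l - bq e_k)ᵀ ∈ E_n(π)`. -/
lemma comm_mem (k l m : Fin n) (hkl : k ≠ l) (hmk : m ≠ k) (hml : m ≠ l)
    (p q b : A) (hb : b ∈ π) :
    ∀ h, mk1 (Pi.single k p + Pi.single l q)
      (Pi.single k (-(b * q)) + Pi.single l (b * p)) h ∈ Egrp A n π := by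
  intro h
  have hX0 : (Pi.single m 1 : Fin n → A) ⬝ᵥ Pi.single k p = 0 :=
    dot_single_eq_zero (Pi.single_eq_of_ne (Ne.symm hmk) 1) p
  have hX1 : (Pi.single m 1 : Fin n → A) ⬝ᵥ Pi.single l q = 0 :=
    dot_single_eq_zero (Pi.single_eq_of_ne (Ne.symm hml) 1) q
  have hXu : (Pi.single m 1 : Fin n → A) ⬝ᵥ (Pi.single k p + Pi.single l q) = 0 := by
    rw [dotProduct_add, hX0, hX1, add_zero]
  have hY0 : (Pi.single k (-(b * q)) : Fin n → A) ⬝ᵥ Pi.single m 1 = 0 :=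
    dot_single_eq_zero (Pi.single_eq_of_ne hmk _) 1
  have hY1 : (Pi.single l (b * p) : Fin n → A) ⬝ᵥ Pi.single m 1 = 0 :=
    dot_single_eq_zero (Pi.single_eq_of_ne hml _) 1
  have hYw : (Pi.single k (-(b * q)) + Pi.single l (b * p) : Fin n → A) ⬝ᵥ Pi.single m 1 = 0 := by
    rw [add_dotProduct, hY0, hY1, add_zero]
  set X : SL n A := mk1 (Pi.single k p + Pi.single l q) (Pi.single m 1) hXu with hXdef
  set Y : SL n A := mk1 (Pi.single m 1)
    (Pi.single k (-(b * q)) + Pi.single l (b * p)) hYw with hYdef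
  -- X is a product of elementary matrices
  have hXabs : X ∈ EgrpAbs A n := by
    have hXeq : X = mk1 (Pi.single k p) (Pi.single m 1) hX0
        * mk1 (Pi.single l q) (Pi.single m 1) hX1 := mk1_add_left _ _ _ hX0 hX1
    rw [hXeq, mk1_single_single k m (Ne.symm hmk) p 1 hX0,
      mk1_single_single l m (Ne.symm hml) q 1 hX1]
    exact mul_mem (elem_mem_abs k m (Ne.symm hmk) _) (elem_mem_abs l m (Ne.symm hml) _)
  -- Y is in E_n(π)
  have hYmem : Y ∈ Egrp A n π := by
    have hYeq : Y = mk1 (Pi.single m 1) (Pi.single k (-(b * q))) hY0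
        * mk1 (Pi.single m 1) (Pi.single l (b * p)) hY1 := mk1_add_right _ _ _ hY0 hY1
    rw [hYeq, mk1_single_single m k hmk 1 _ hY0, mk1_single_single m l hml 1 _ hY1]
    exact mul_mem (elem_mem π m k hmk (by rw [one_mul]; exact π.neg_mem (π.mul_mem_right q hb)))
      (elem_mem π m l hml (by rw [one_mul]; exact π.mul_mem_right p hb))
  -- the commutator identity
  have key : mk1 (Pi.single k p + Pi.single l q)
      (Pi.single k (-(b * q)) + Pi.single l (b * p)) h * (Y * X) = X * Y := by
    apply Subtype.ext
    set u : Fin n → A := Pi.single k p + Pi.single l q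
    set w : Fin n → A := Pi.single k (-(b * q)) + Pi.single l (b * p)
    set dm : Fin n → A := Pi.single m 1
    show ((1 : Matrix (Fin n) (Fin n) A) + vecMulVec u w)
        * ((1 + vecMulVec dm w) * (1 + vecMulVec u dm))
        = (1 + vecMulVec u dm) * (1 + vecMulVec dm w)
    have e1 : vecMulVec dm w * vecMulVec u dm = 0 := by
      rw [vmv_mul_vmv, h, zero_smul]
    have e2 : vecMulVec u w * vecMulVec dm w = 0 := by
      rw [vmv_mul_vmv, hYw, zero_smul]
    have e3 : vecMulVec u w * vecMulVec u dm = 0 := by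
      rw [vmv_mul_vmv, h, zero_smul]
    have e4 : vecMulVec u dm * vecMulVec dm w = vecMulVec u w := by
      rw [vmv_mul_vmv]
      have : dm ⬝ᵥ dm = 1 := by
        show (Pi.single m 1 : Fin n → A) ⬝ᵥ Pi.single m 1 = 1
        rw [dotProduct_single, Pi.single_eq_same, one_mul]
      rw [this, one_smul]
    simp only [mul_add, add_mul, mul_one, one_mul, e1, e2, e3, e4, mul_zero, zero_mul,
      add_zero, zero_add]
    abel
  have heq : mk1 (Pi.single k p + Pi.single l q)
      (Pi.single k (-(b * q)) + Pi.single l (b * p)) h = X * Y * X⁻¹ * Y⁻¹ := by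
    rw [← key]; group
  rw [heq, show X * Y * X⁻¹ * Y⁻¹ = (X * Y * X⁻¹) * Y⁻¹ from rfl]
  exact mul_mem (conj_mem_abs π hXabs hYmem) (inv_mem hYmem)

/-- Key lemma (Suslin): for any vector `v`, `b ∈ π` and `k ≠ l`,
`1 + v · (b v_k e_l - b v_l e_k)ᵀ ∈ E_n(π)`, provided `n ≥ 3`. -/
lemma pair_mem (hn : 3 ≤ n) (k l : Fin n) (hkl : k ≠ l) (b : A) (hb : b ∈ π)
    (v : Fin n → A) :
    ∀ h, mk1 v (Pi.single k (-(b * v l)) + Pi.single l (b * v k)) h ∈ Egrp A n π := by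
  intro h
  -- find a third index m
  obtain ⟨m, hm⟩ : ∃ m : Fin n, m ∉ ({k, l} : Finset (Fin n)) := by
    by_contra hcon
    push_neg at hcon
    have : (Finset.univ : Finset (Fin n)) ⊆ {k, l} := fun x _ => hcon x
    have hcard := Finset.card_le_card this
    simp only [Finset.card_univ, Fintype.card_fin] at hcard
    have : ({k, l} : Finset (Fin n)).card ≤ 2 := Finset.card_insert_le _ _ |>.trans (by simp)
    omega
  simp only [Finset.mem_insert, Finset.mem_singleton, not_or] at hm
  obtain ⟨hmk, hml⟩ := hm
  set w : Fin n → A := Pi.single k (-(b * v l)) + Pi.single l (b * v k) with hwdef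
  set v2 : Fin n → A := Pi.single k (v k) + Pi.single l (v l) with hv2
  set z : Fin n → A := v - v2 with hz
  have hwk : w k = -(b * v l) := by
    simp [hwdef, Pi.single_eq_of_ne hkl]
  have hwl : w l = b * v k := by
    simp [hwdef, Pi.single_eq_of_ne (Ne.symm hkl)]
  have hwother : ∀ r, r ≠ k → r ≠ l → w r = 0 := by
    intro r hrk hrl
    simp [hwdef, Pi.single_eq_of_ne hrk, Pi.single_eq_of_ne hrl]
  have hv2other : ∀ r, r ≠ k → r ≠ l → v2 r = 0 := by
    intro r hrk hrl
    simp [hv2, Pi.single_eq_of_ne hrk, Pi.single_eq_of_ne hrl]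
  have hwv2 : w ⬝ᵥ v2 = 0 := by
    have : ∀ r, w r * v2 r = 0 ∨ True := fun r => Or.inr trivial
    show ∑ r, w r * v2 r = 0
    rw [Finset.sum_eq_add_of_mem k l (Finset.mem_univ k) (Finset.mem_univ l) hkl ?_]
    · have h1 : v2 k = v k := by simp [hv2, Pi.single_eq_of_ne hkl]
      have h2 : v2 l = v l := by simp [hv2, Pi.single_eq_of_ne (Ne.symm hkl)]
      rw [hwk, hwl, h1, h2]; ring
    · intro r _ hr
      rw [hwother r hr.1 hr.2, zero_mul]
  have hwz : w ⬝ᵥ z = 0 := by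
    rw [hz, dotProduct_sub, hwv2, h, sub_zero]
  have hsum : v = z + v2 := by rw [hz]; ring
  rw [mk1_congr' hsum h (by rw [dotProduct_add, hwz, hwv2, add_zero]),
    mk1_add_left _ _ _ hwz hwv2]
  refine mul_mem ?_ ?_
  · -- block part
    refine block_mem π ({k, l} : Finset (Fin n))ᶜ z w ?_ ?_ ?_ hwz
    · intro r hr
      simp only [Finset.notMem_compl, Finset.mem_insert, Finset.mem_singleton] at hr
      rcases hr with hr | hr <;> subst hr
      · simp [hz, hv2, Pi.single_eq_of_ne hkl]
      · simp [hz, hv2, Pi.single_eq_of_ne (Ne.symm hkl)]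
    · intro r hr
      simp only [Finset.mem_compl, Finset.mem_insert, Finset.mem_singleton, not_or] at hr
      exact hwother r hr.1 hr.2
    · intro s
      refine Ideal.add_mem π ?_ ?_
      · by_cases hs : s = k
        · subst hs; rw [Pi.single_eq_same]
          exact π.neg_mem (π.mul_mem_right _ hb)
        · rw [Pi.single_eq_of_ne hs]; exact π.zero_mem
      · by_cases hs : s = l
        · subst hs; rw [Pi.single_eq_same]; exact π.mul_mem_right _ hb
        · rw [Pi.single_eq_of_ne hs]; exact π.zero_mem
  · -- commutator part
    exact comm_mem π k l m hkl hmk hml (v k) (v l) b hb hwv2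


lemma dotProduct_finsum {ι : Type} (t : Finset ι) (F : ι → Fin n → A) (v : Fin n → A) :
    (∑ p ∈ t, F p) ⬝ᵥ v = ∑ p ∈ t, (F p ⬝ᵥ v) := by
  show ∑ r, (∑ p ∈ t, F p) r * v r = _
  simp only [Finset.sum_apply, Finset.sum_mul]
  exact Finset.sum_comm

lemma single_finsum {ι : Type} (t : Finset ι) (k : Fin n) (f : ι → A) :
    Pi.single k (∑ l ∈ t, f l) = ∑ l ∈ t, (Pi.single k (f l) : Fin n → A) := by
  funext r
  rw [Finset.sum_apply]
  by_cases hr : r = k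
  · subst hr; simp
  · simp [Pi.single_eq_of_ne hr]

lemma sum_pairs {M : Type} [AddCommMonoid M] (f : Fin n → Fin n → M) (hdiag : ∀ k, f k k = 0) :
    ∑ p : Fin n × Fin n, f p.1 p.2
      = ∑ p ∈ Finset.univ.filter (fun p : Fin n × Fin n => p.1 < p.2),
          (f p.1 p.2 + f p.2 p.1) := by
  classical
  rw [Finset.sum_add_distrib]
  rw [← Finset.sum_filter_add_sum_filter_not Finset.univ
    (fun p : Fin n × Fin n => p.1 < p.2) (fun p => f p.1 p.2)]
  congr 1
  have step1 : ∑ p ∈ Finset.univ.filter (fun p : Fin n × Fin n => p.2 < p.1), f p.1 p.2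
      = ∑ p ∈ Finset.univ.filter (fun p : Fin n × Fin n => ¬ p.1 < p.2), f p.1 p.2 := by
    apply Finset.sum_subset_zero_on_sdiff
    · intro p hp
      simp only [Finset.mem_filter, Finset.mem_univ, true_and] at hp ⊢
      exact not_lt.mpr hp.le
    · intro p hp
      simp only [Finset.mem_sdiff, Finset.mem_filter, Finset.mem_univ, true_and, not_lt] at hp
      have e : p.2 = p.1 := le_antisymm hp.1 hp.2
      rw [e]; exact hdiag p.1
    · intro p _; rfl
  have step2 : ∑ p ∈ Finset.univ.filter (fun p : Fin n × Fin n => p.2 < p.1), f p.1 p.2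
      = ∑ p ∈ Finset.univ.filter (fun p : Fin n × Fin n => p.1 < p.2), f p.2 p.1 := by
    refine Finset.sum_nbij' (fun p => Prod.swap p) (fun p => Prod.swap p) ?_ ?_ ?_ ?_ ?_
    · intro p hp
      simp only [Finset.mem_filter, Finset.mem_univ, true_and] at hp ⊢
      exact hp
    · intro p hp
      simp only [Finset.mem_filter, Finset.mem_univ, true_and] at hp ⊢
      exact hp
    · intro p _; rfl
    · intro p _; rfl
    · intro p _; rfl
  rw [← step1, step2]

/-- Sums of admissible vectors give elements of `E_n(π)`. -/
lemma sum_mem_mk1 (v : Fin n → A) {ι : Type} (t : Finset ι) (F : ι → Fin n → A)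
    (hd : ∀ p ∈ t, F p ⬝ᵥ v = 0)
    (hm : ∀ p ∈ t, ∀ hp, mk1 v (F p) hp ∈ Egrp A n π) :
    ∀ h, mk1 v (∑ p ∈ t, F p) h ∈ Egrp A n π := by
  classical
  induction t using Finset.induction with
  | empty =>
    intro h
    rw [mk1_congr Finset.sum_empty h (by simp), mk1_zero]
    exact one_mem _
  | @insert s t hs ih =>
    intro h
    have hds : F s ⬝ᵥ v = 0 := hd s (Finset.mem_insert_self s t)
    have hdt : (∑ p ∈ t, F p) ⬝ᵥ v = 0 := by
      rw [dotProduct_finsum]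
      exact Finset.sum_eq_zero fun p hp => hd p (Finset.mem_insert_of_mem hp)
    rw [mk1_congr (Finset.sum_insert hs) h
        (by rw [add_dotProduct, hds, hdt, add_zero]),
      mk1_add_right _ _ _ hds hdt]
    exact mul_mem (hm s (Finset.mem_insert_self s t) hds)
      (ih (fun p hp => hd p (Finset.mem_insert_of_mem hp))
        (fun p hp hq => hm p (Finset.mem_insert_of_mem hp) hq) hdt)

/-- Suslin's lemma: if `v` is unimodular (witnessed by `u`), `w ⬝ v = 0` and the entries of
`w` lie in `π`, then `1 + v wᵀ ∈ E_n(π)`. -/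
lemma orth_mem (hn : 3 ≤ n) (v u w : Fin n → A) (huv : u ⬝ᵥ v = 1)
    (hwπ : ∀ r, w r ∈ π) (h : w ⬝ᵥ v = 0) : mk1 v w h ∈ Egrp A n π := by
  classical
  set c : Fin n → Fin n → A := fun k l => w k * u l - u k * w l with hc
  set G : Fin n × Fin n → (Fin n → A) :=
    fun p => Pi.single p.1 (c p.1 p.2 * v p.2) + Pi.single p.2 (c p.2 p.1 * v p.1) with hG
  set T := Finset.univ.filter (fun p : Fin n × Fin n => p.1 < p.2) with hT
  -- w is the sum of the pieces G p over T
  have hsum : ∑ p ∈ T, G p = w := by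
    have hps := sum_pairs (fun k l => (Pi.single k (c k l * v l) : Fin n → A))
      (fun k => by
        have hckk : c k k = 0 := by rw [hc]; ring
        simp [hckk])
    rw [hT, show G = fun p : Fin n × Fin n => (Pi.single p.1 (c p.1 p.2 * v p.2)
        + Pi.single p.2 (c p.2 p.1 * v p.1) : Fin n → A) from rfl]
    rw [← hps, Fintype.sum_prod_type]
    have inner : ∀ k : Fin n, ∑ l : Fin n, (Pi.single k (c k l * v l) : Fin n → A)
        = Pi.single k (w k) := by
      intro k
      rw [← single_finsum]
      congr 1
      have expand : ∑ l : Fin n, c k l * v l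
          = w k * (∑ l : Fin n, u l * v l) - u k * (∑ l : Fin n, w l * v l) := by
        rw [Finset.mul_sum, Finset.mul_sum, ← Finset.sum_sub_distrib]
        exact Finset.sum_congr rfl fun l _ => by rw [hc]; ring
      rw [expand, show ∑ l : Fin n, u l * v l = 1 from huv,
        show ∑ l : Fin n, w l * v l = 0 from h]
      ring
    calc ∑ k : Fin n, ∑ l : Fin n, (Pi.single k (c k l * v l) : Fin n → A)
        = ∑ k : Fin n, Pi.single k (w k) := Finset.sum_congr rfl fun k _ => inner k
      _ = w := Finset.univ_sum_single w
  -- each piece is admissible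
  have hdot : ∀ p ∈ T, G p ⬝ᵥ v = 0 := by
    intro p _
    rw [hG]
    show (Pi.single p.1 (c p.1 p.2 * v p.2) + Pi.single p.2 (c p.2 p.1 * v p.1)
        : Fin n → A) ⬝ᵥ v = 0
    rw [add_dotProduct, single_dotProduct, single_dotProduct, hc]
    ring
  have hmem : ∀ p ∈ T, ∀ hp, mk1 v (G p) hp ∈ Egrp A n π := by
    intro p hp hdp
    have hlt : p.1 < p.2 := by
      rw [hT] at hp
      simpa using (Finset.mem_filter.mp hp).2
    have hne : p.1 ≠ p.2 := ne_of_lt hlt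
    have hb : c p.2 p.1 ∈ π := by
      rw [hc]
      exact Ideal.sub_mem π (π.mul_mem_right _ (hwπ p.2)) (π.mul_mem_left _ (hwπ p.1))
    have e : G p = Pi.single p.1 (-(c p.2 p.1 * v p.2)) + Pi.single p.2 (c p.2 p.1 * v p.1) := by
      rw [hG]
      show (Pi.single p.1 (c p.1 p.2 * v p.2) + Pi.single p.2 (c p.2 p.1 * v p.1) : Fin n → A)
          = _
      have hcc : c p.1 p.2 * v p.2 = -(c p.2 p.1 * v p.2) := by rw [hc]; ring
      rw [hcc]
    have h2 : (Pi.single p.1 (-(c p.2 p.1 * v p.2))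
        + Pi.single p.2 (c p.2 p.1 * v p.1) : Fin n → A) ⬝ᵥ v = 0 := by
      rw [← e]; exact hdp
    rw [mk1_congr e hdp h2]
    exact pair_mem π hn p.1 p.2 hne (c p.2 p.1) hb v h2
  have h2 : (∑ p ∈ T, G p) ⬝ᵥ v = 0 := by rw [hsum]; exact h
  rw [mk1_congr hsum.symm h h2]
  exact sum_mem_mk1 π v T G hdot hmem h2

lemma mul_vmv (M : Matrix (Fin n) (Fin n) A) (x y : Fin n → A) :
    M * vecMulVec x y = vecMulVec (M *ᵥ x) y := by
  ext r s
  simp only [mul_apply, vecMulVec_apply, mulVec, dotProduct, Finset.sum_mul]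
  exact Finset.sum_congr rfl fun k _ => by ring

lemma vmv_mul (M : Matrix (Fin n) (Fin n) A) (x y : Fin n → A) :
    vecMulVec x y * M = vecMulVec x (y ᵥ* M) := by
  ext r s
  simp only [mul_apply, vecMulVec_apply, vecMul, dotProduct, Finset.mul_sum]
  exact Finset.sum_congr rfl fun k _ => by ring

/-- The key consequence of Suslin's lemma: any `SL_n(A)`-conjugate of an elementary matrix
with coefficient in `π` lies in `E_n(π)`. -/
lemma conj_elem_mem (hn : 3 ≤ n) (s : SL n A) (i j : Fin n) (hij : i ≠ j)
    {a : A} (ha : a ∈ π) : s * elem A i j hij a * s⁻¹ ∈ Egrp A n π := by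
  classical
  set S : Matrix (Fin n) (Fin n) A := (s : Matrix (Fin n) (Fin n) A) with hS
  set S2 : Matrix (Fin n) (Fin n) A := ((s⁻¹ : SL n A) : Matrix (Fin n) (Fin n) A) with hS2
  have hS2S : S2 * S = 1 :=
    calc S2 * S = ((s⁻¹ * s : SL n A) : Matrix (Fin n) (Fin n) A) := rfl
      _ = ((1 : SL n A) : Matrix (Fin n) (Fin n) A) := by rw [inv_mul_cancel]
      _ = 1 := rfl
  have hSS2 : S * S2 = 1 :=
    calc S * S2 = ((s * s⁻¹ : SL n A) : Matrix (Fin n) (Fin n) A) := rfl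
      _ = ((1 : SL n A) : Matrix (Fin n) (Fin n) A) := by rw [mul_inv_cancel]
      _ = 1 := rfl
  set v : Fin n → A := fun r => S r i with hv
  set w : Fin n → A := fun r => a * S2 j r with hw
  set u : Fin n → A := fun r => S2 i r with hu
  have h : w ⬝ᵥ v = 0 := by
    show ∑ r, (a * S2 j r) * (S r i) = 0
    have e : ∑ r, (a * S2 j r) * (S r i) = a * ∑ r, S2 j r * S r i := by
      rw [Finset.mul_sum]
      exact Finset.sum_congr rfl fun r _ => by ring
    rw [e, show ∑ r, S2 j r * S r i = (S2 * S) j i from (mul_apply).symm, hS2S,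
      one_apply_ne (Ne.symm hij), mul_zero]
  have huv : u ⬝ᵥ v = 1 := by
    show ∑ r, (S2 i r) * (S r i) = 1
    rw [show ∑ r, S2 i r * S r i = (S2 * S) i i from (mul_apply).symm, hS2S, one_apply_eq]
  have key : s * elem A i j hij a * s⁻¹ = mk1 v w h := by
    apply Subtype.ext
    show S * (transvection i j a) * S2 = 1 + vecMulVec v w
    rw [transvection, mul_add, mul_one, add_mul, hSS2]
    congr 1
    rw [show Matrix.single i j a = vecMulVec (Pi.single i a) (Pi.single j 1) by
        rw [vmv_single_single, mul_one],
      mul_vmv, vmv_mul, mulVec_single, single_vecMul]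
    ext r q
    rw [vecMulVec_apply, vecMulVec_apply, hv, hw]
    simp only [Pi.smul_apply, op_smul_eq_mul, smul_eq_mul, col_apply, row_apply, one_mul]
    ring
  rw [key]
  exact orth_mem π hn v u w huv (fun r => π.mul_mem_right _ ha) h

end Membership

end SuslinAux

/-- **Suslin's relative normality theorem.** For a commutative unital ring `A`, an ideal `π`
of `A` and `n ≥ 3`, the normal elementary subgroup `E_n(π)` is normal in `SL_n(A)`. -/
theorem suslin_normality (A : Type) [CommRing A] (π : Ideal A) (n : ℕ) (hn : 3 ≤ n) :
    (Egrp A n π).Normal := by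
  constructor
  intro x hx g
  induction hx using Subgroup.closure_induction with
  | mem y hy =>
    obtain ⟨t, ht, i, j, hij, a, ha, rfl⟩ := hy
    have e : g * (t * elem A i j hij a * t⁻¹) * g⁻¹
        = (g * t) * elem A i j hij a * (g * t)⁻¹ := by group
    rw [e]
    exact SuslinAux.conj_elem_mem π hn (g * t) i j hij ha
  | one => simpa using one_mem (Egrp A n π)
  | mul x y hx hy px py =>
    have e : g * (x * y) * g⁻¹ = (g * x * g⁻¹) * (g * y * g⁻¹) := by group
    rw [e]; exact mul_mem px py
  | inv x hx px =>
    have e : g * x⁻¹ * g⁻¹ = (g * x * g⁻¹)⁻¹ := by group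
    rw [e]; exact inv_mem px
end

section
/- Let A be a commutative unital ring, let π be an ideal of A, and let n ≥ 3. Then the true elementary subgroup F_n(π) is a normal subgroup of Ω_n(π) = {g ∈ SL_n(A) : all off-diagonal entries of g lie in π}. -/
open Matrix

/-- The true elementary subgroup `F_n(π)`: the subgroup of `SL_n(A)` generated by the
elementary matrices with coefficients in the ideal `π`. -/
def Fgrp (A : Type) [CommRing A] (n : ℕ) (π : Ideal A) : Subgroup (SL n A) :=
  Subgroup.closure {x | ∃ (i j : Fin n) (hij : i ≠ j), ∃ a ∈ π, x = elem A i j hij a}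

/-- `Ω_n(π) = {g ∈ SL_n(A) : g mod π is diagonal}`: the set of matrices in `SL_n(A)` all of
whose off-diagonal entries lie in `π`. -/
def Ωset (A : Type) [CommRing A] (n : ℕ) (π : Ideal A) : Set (SL n A) :=
  {g | ∀ p q : Fin n, p ≠ q → (g : Matrix (Fin n) (Fin n) A) p q ∈ π}

namespace TrueElemProof

open Finset

variable {A : Type} [CommRing A] {n : ℕ} {π : Ideal A}

/-- `InF π M`: `M` is the matrix of an element of `Fgrp`. -/
def InF (π : Ideal A) (M : Matrix (Fin n) (Fin n) A) : Prop :=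
  ∃ h : SL n A, h ∈ Fgrp A n π ∧ (h : Matrix (Fin n) (Fin n) A) = M

theorem InF.mul {M N : Matrix (Fin n) (Fin n) A} (hM : InF π M) (hN : InF π N) :
    InF π (M * N) := by
  obtain ⟨h, hh, rfl⟩ := hM
  obtain ⟨h', hh', rfl⟩ := hN
  exact ⟨h * h', mul_mem hh hh', rfl⟩

theorem InF_one : InF π (1 : Matrix (Fin n) (Fin n) A) := ⟨1, one_mem _, rfl⟩

theorem InF_transvection {i j : Fin n} (hij : i ≠ j) {c : A} (hc : c ∈ π) :
    InF π (Matrix.transvection i j c) :=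
  ⟨elem A i j hij c, Subgroup.subset_closure ⟨i, j, hij, c, hc, rfl⟩, rfl⟩

theorem vmv_mul_vmv (x y x' y' : Fin n → A) :
    vecMulVec x y * vecMulVec x' y' = (y ⬝ᵥ x') • vecMulVec x y' := by
  ext p q
  simp only [Matrix.mul_apply, vecMulVec_apply, Matrix.smul_apply, dotProduct, smul_eq_mul]
  rw [Finset.sum_mul]
  exact Finset.sum_congr rfl fun r _ => by ring

theorem vmv_add (x y z : Fin n → A) :
    vecMulVec x (y + z) = vecMulVec x y + vecMulVec x z := by
  ext p q
  simp [vecMulVec_apply, mul_add]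

theorem add_vmv (x y z : Fin n → A) :
    vecMulVec (x + y) z = vecMulVec x z + vecMulVec y z := by
  ext p q
  simp [vecMulVec_apply, add_mul]

theorem unip_mul_unip {v y y' : Fin n → A} (h : y ⬝ᵥ v = 0) :
    (1 + vecMulVec v y) * (1 + vecMulVec v y') = 1 + vecMulVec v (y + y') := by
  rw [mul_add, mul_one, add_mul, one_mul, vmv_mul_vmv, h, zero_smul, add_zero, vmv_add]
  abel

theorem unip_mul_unip_col {x x' y : Fin n → A} (h : y ⬝ᵥ x' = 0) :
    (1 + vecMulVec x y) * (1 + vecMulVec x' y) = 1 + vecMulVec (x + x') y := by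
  rw [mul_add, mul_one, add_mul, one_mul, vmv_mul_vmv, h, zero_smul, add_zero, add_vmv]
  abel

theorem vmv_single_single (p q : Fin n) (c d : A) :
    vecMulVec (Pi.single p c) (Pi.single q d) = Matrix.single p q (c * d) := by
  ext r s
  simp only [vecMulVec_apply, Matrix.single, Pi.single_apply, Matrix.of_apply]
  split_ifs <;> simp_all <;> ring

theorem transvection_eq (p q : Fin n) (c : A) :
    Matrix.transvection p q c = 1 + vecMulVec (Pi.single p 1) (Pi.single q c) := by
  rw [Matrix.transvection, vmv_single_single, one_mul]

/-- scaling the left vector -/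
theorem vmv_scale_left (p : Fin n) (c : A) (y : Fin n → A) :
    vecMulVec (Pi.single p c) y = vecMulVec (Pi.single p 1) (fun q => c * y q) := by
  ext r s
  simp only [vecMulVec_apply, Pi.single_apply]
  split_ifs <;> simp <;> ring

/-- A matrix `1 + (basis column p) ⬝ y` with `y p = 0` and entries of `y` in `π` is in `F`. -/
theorem rowInF (p : Fin n) (y : Fin n → A) (hp : y p = 0) (hy : ∀ q, y q ∈ π) :
    InF π (1 + vecMulVec (Pi.single p 1) y) := by
  classical
  have main : ∀ s : Finset (Fin n), ∀ y : Fin n → A, (∀ q, y q ∈ π) → y p = 0 →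
      (∀ q, q ∉ s → y q = 0) → InF π (1 + vecMulVec (Pi.single p 1) y) := by
    intro s
    induction s using Finset.induction_on with
    | empty =>
      intro y _ _ h0
      have hy0 : y = 0 := funext fun q => h0 q (by simp)
      have hz : vecMulVec (Pi.single p 1) (0 : Fin n → A) = 0 := by
        ext r s; simp [vecMulVec_apply]
      rw [hy0, hz, add_zero]
      exact InF_one
    | insert q s hq ih =>
      intro y hy hp h0
      by_cases hqp : q = p
      · refine ih y hy hp fun r hr => ?_
        by_cases hrq : r = q
        · rw [hrq, hqp]; exact hp
        · exact h0 r (by simp [hr, hrq])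
      · have hupd : ∀ r, Function.update y q 0 r ∈ π := by
          intro r
          rw [Function.update_apply]
          split
          · exact π.zero_mem
          · exact hy r
        have hupdp : Function.update y q 0 p = 0 := by
          rw [Function.update_apply]
          split
          · rfl
          · exact hp
        have hsupp : ∀ r, r ∉ s → Function.update y q 0 r = 0 := by
          intro r hr
          rw [Function.update_apply]
          split
          · rfl
          · exact h0 r (by simp_all)
        have h1 := ih (Function.update y q 0) hupd hupdp hsupp
        have horth : (Function.update y q 0) ⬝ᵥ (Pi.single p 1) = 0 := by
          rw [dotProduct_single, hupdp, zero_mul]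
        have key := unip_mul_unip (v := Pi.single p 1) (y' := Pi.single q (y q)) horth
        have hsum : Function.update y q 0 + Pi.single q (y q) = y := by
          funext r
          by_cases hrq : r = q
          · subst hrq
            simp [Function.update_apply, Pi.single_apply]
          · simp [Function.update_apply, hrq, Pi.single_apply]
        rw [hsum] at key
        rw [← key]
        refine h1.mul ?_
        rw [← transvection_eq]
        exact InF_transvection (fun h => hqp h.symm) (hy q)
  exact main Finset.univ y hy hp (by simp)

end TrueElemProof

section Chunk2

open Matrix Finset

namespace TrueElemProof

variable {A : Type} [CommRing A] {n : ℕ} {π : Ideal A}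

def tri (k l m : Fin n) : Fin 3 → Fin n := ![k, l, m]

variable {k l m : Fin n}

theorem tri_inj (hkl : k ≠ l) (hkm : k ≠ m) (hlm : l ≠ m) :
    Function.Injective (tri k l m) := by
  intro a b hab
  fin_cases a <;> fin_cases b <;> simp_all [tri]

noncomputable def triEquiv (hkl : k ≠ l) (hkm : k ≠ m) (hlm : l ≠ m) :
    (Fin 3 ⊕ {x : Fin n // x ≠ k ∧ x ≠ l ∧ x ≠ m}) ≃ Fin n :=
  Equiv.ofBijective (Sum.elim (tri k l m) Subtype.val) (by
    constructor
    · rintro (a | a) (b | b) hab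
      · exact congrArg Sum.inl (tri_inj hkl hkm hlm hab)
      · exfalso
        obtain ⟨x, hx1, hx2, hx3⟩ := b
        fin_cases a <;> simp [tri] at hab <;> simp_all
      · exfalso
        obtain ⟨x, hx1, hx2, hx3⟩ := a
        fin_cases b <;> simp [tri] at hab <;> simp_all
      · exact congrArg Sum.inr (Subtype.ext hab)
    · intro x
      by_cases h1 : x = k
      · exact ⟨Sum.inl 0, by simp [tri, h1]⟩
      by_cases h2 : x = l
      · exact ⟨Sum.inl 1, by simp [tri, h2]⟩
      by_cases h3 : x = m
      · exact ⟨Sum.inl 2, by simp [tri, h3]⟩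
      exact ⟨Sum.inr ⟨x, h1, h2, h3⟩, rfl⟩)

noncomputable def Phi (hkl : k ≠ l) (hkm : k ≠ m) (hlm : l ≠ m)
    (X : Matrix (Fin 3) (Fin 3) A) : Matrix (Fin n) (Fin n) A :=
  (Matrix.fromBlocks X 0 0
      (1 : Matrix {x : Fin n // x ≠ k ∧ x ≠ l ∧ x ≠ m} {x : Fin n // x ≠ k ∧ x ≠ l ∧ x ≠ m} A)).submatrix
    (triEquiv hkl hkm hlm).symm (triEquiv hkl hkm hlm).symm

variable (hkl : k ≠ l) (hkm : k ≠ m) (hlm : l ≠ m)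

theorem Phi_mul (X Y : Matrix (Fin 3) (Fin 3) A) :
    Phi hkl hkm hlm (X * Y) = Phi hkl hkm hlm X * Phi hkl hkm hlm Y := by
  rw [Phi, Phi, Phi, Matrix.submatrix_mul_equiv _ _ _ (triEquiv hkl hkm hlm).symm _,
    Matrix.fromBlocks_multiply]
  simp

def ext3 (k l m : Fin n) (u : Fin 3 → A) : Fin n → A :=
  fun x => if x = k then u 0 else if x = l then u 1 else if x = m then u 2 else 0

theorem ext3_elim (u : Fin 3 → A) (x : Fin n) :
    ext3 k l m u x = Sum.elim u (fun _ => (0 : A)) ((triEquiv hkl hkm hlm).symm x) := by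
  rcases h : (triEquiv hkl hkm hlm).symm x with a | a
  · have hx : x = tri k l m a := by
      have := congrArg (triEquiv hkl hkm hlm) h
      rwa [Equiv.apply_symm_apply] at this
    subst hx
    fin_cases a <;>
      simp [ext3, tri, Ne.symm hkl, Ne.symm hkm, Ne.symm hlm]
  · have hx : x = a.val := by
      have := congrArg (triEquiv hkl hkm hlm) h
      rwa [Equiv.apply_symm_apply] at this
    subst hx
    obtain ⟨x, hx1, hx2, hx3⟩ := a
    simp [ext3, hx1, hx2, hx3]

theorem Phi_unip (u w : Fin 3 → A) :
    Phi hkl hkm hlm (1 + vecMulVec u w) =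
      1 + vecMulVec (ext3 k l m u) (ext3 k l m w) := by
  rw [Phi]
  have hsplit : Matrix.fromBlocks (1 + vecMulVec u w) 0 0
      (1 : Matrix {x : Fin n // x ≠ k ∧ x ≠ l ∧ x ≠ m} {x : Fin n // x ≠ k ∧ x ≠ l ∧ x ≠ m} A)
      = Matrix.fromBlocks 1 0 0 1 + Matrix.fromBlocks (vecMulVec u w) 0 0 0 := by
    rw [Matrix.fromBlocks_add]
    simp
  rw [hsplit]
  rw [show ∀ (X Y : Matrix (Fin 3 ⊕ {x : Fin n // x ≠ k ∧ x ≠ l ∧ x ≠ m})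
        (Fin 3 ⊕ {x : Fin n // x ≠ k ∧ x ≠ l ∧ x ≠ m}) A),
      (X + Y).submatrix (triEquiv hkl hkm hlm).symm (triEquiv hkl hkm hlm).symm
        = X.submatrix (triEquiv hkl hkm hlm).symm (triEquiv hkl hkm hlm).symm
          + Y.submatrix (triEquiv hkl hkm hlm).symm (triEquiv hkl hkm hlm).symm
      from fun X Y => rfl]
  rw [Matrix.fromBlocks_one, Matrix.submatrix_one_equiv]
  congr 1
  ext x y
  rw [Matrix.submatrix_apply, vecMulVec_apply, ext3_elim hkl hkm hlm, ext3_elim hkl hkm hlm]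
  rcases (triEquiv hkl hkm hlm).symm x with a | a <;>
    rcases (triEquiv hkl hkm hlm).symm y with b | b <;>
      simp [vecMulVec_apply]

include hkl hkm hlm in
theorem ext3_single (p : Fin 3) (d : A) :
    ext3 k l m (Pi.single p d) = Pi.single (tri k l m p) d := by
  funext x
  rw [ext3_elim hkl hkm hlm]
  rcases h : (triEquiv hkl hkm hlm).symm x with a | a
  · have hx : x = tri k l m a := by
      have := congrArg (triEquiv hkl hkm hlm) h
      rw [Equiv.apply_symm_apply] at this
      exact this
    subst hx
    rw [Sum.elim_inl]
    by_cases hap : a = p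
    · subst hap
      simp [Pi.single_apply]
    · have : tri k l m a ≠ tri k l m p := fun hh => hap (tri_inj hkl hkm hlm hh)
      simp [Pi.single_apply, hap, this]
  · have hx : x = a.val := by
      have := congrArg (triEquiv hkl hkm hlm) h
      rw [Equiv.apply_symm_apply] at this
      exact this
    subst hx
    rw [Sum.elim_inr]
    have hne : a.val ≠ tri k l m p := by
      fin_cases p <;> simp [tri, a.2.1, a.2.2.1, a.2.2.2]
    simp [Pi.single_apply, hne]

theorem Phi_transvection (p q : Fin 3) (c : A) :
    Phi hkl hkm hlm (Matrix.transvection p q c) =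
      Matrix.transvection (tri k l m p) (tri k l m q) c := by
  rw [transvection_eq, transvection_eq, Phi_unip hkl hkm hlm,
    ext3_single hkl hkm hlm, ext3_single hkl hkm hlm]

end TrueElemProof

end Chunk2

section Chunk3
open Matrix

namespace TrueElemProof

variable {A : Type} [CommRing A]

theorem tv01 (c : A) : Matrix.transvection (0 : Fin 3) 1 c = !![1,c,0; 0,1,0; 0,0,1] := by
  ext a b
  fin_cases a <;> fin_cases b <;>
    simp [Matrix.transvection, Matrix.single, Matrix.one_apply, Matrix.vecHead, Matrix.vecTail]

theorem tv10 (c : A) : Matrix.transvection (1 : Fin 3) 0 c = !![1,0,0; c,1,0; 0,0,1] := by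
  ext a b
  fin_cases a <;> fin_cases b <;>
    simp [Matrix.transvection, Matrix.single, Matrix.one_apply, Matrix.vecHead, Matrix.vecTail]

theorem tv12 (c : A) : Matrix.transvection (1 : Fin 3) 2 c = !![1,0,0; 0,1,c; 0,0,1] := by
  ext a b
  fin_cases a <;> fin_cases b <;>
    simp [Matrix.transvection, Matrix.single, Matrix.one_apply, Matrix.vecHead, Matrix.vecTail]

theorem tv21 (c : A) : Matrix.transvection (2 : Fin 3) 1 c = !![1,0,0; 0,1,0; 0,c,1] := by
  ext a b
  fin_cases a <;> fin_cases b <;>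
    simp [Matrix.transvection, Matrix.single, Matrix.one_apply, Matrix.vecHead, Matrix.vecTail]

theorem tv20 (c : A) : Matrix.transvection (2 : Fin 3) 0 c = !![1,0,0; 0,1,0; c,0,1] := by
  ext a b
  fin_cases a <;> fin_cases b <;>
    simp [Matrix.transvection, Matrix.single, Matrix.one_apply, Matrix.vecHead, Matrix.vecTail]

set_option maxHeartbeats 1000000 in
theorem boss3 (t a b : A) :
    (1 : Matrix (Fin 3) (Fin 3) A) + vecMulVec ![a, b, 0] ![-(t*b), t*a, 0] =
    Matrix.transvection (1:Fin 3) 2 (-b) * Matrix.transvection (0:Fin 3) 1 (t*a^2) *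
    Matrix.transvection (2:Fin 3) 1 (-(t*a)) * Matrix.transvection (0:Fin 3) 1 (-(t*a)) *
    Matrix.transvection (2:Fin 3) 1 t * Matrix.transvection (1:Fin 3) 2 (a*b) *
    Matrix.transvection (1:Fin 3) 0 b * Matrix.transvection (2:Fin 3) 1 (-t) *
    Matrix.transvection (0:Fin 3) 1 (t*a) * Matrix.transvection (1:Fin 3) 2 (-(a*b)) *
    Matrix.transvection (1:Fin 3) 0 (-b) * Matrix.transvection (1:Fin 3) 2 b *
    Matrix.transvection (2:Fin 3) 1 (t*a) * Matrix.transvection (2:Fin 3) 0 (-(t*b)) := by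
  have lhs : (1 : Matrix (Fin 3) (Fin 3) A) + vecMulVec ![a, b, 0] ![-(t*b), t*a, 0]
      = !![1 - a*(t*b), a*(t*a), 0; -(b*(t*b)), 1 + b*(t*a), 0; 0, 0, 1] := by
    ext p q
    fin_cases p <;> fin_cases q <;>
      simp [vecMulVec_apply, Matrix.one_apply] <;> ring
  rw [lhs]
  simp only [tv01, tv10, tv12, tv21, tv20, Matrix.mul_fin_three]
  ext p q
  fin_cases p <;> fin_cases q <;> simp <;> ring

end TrueElemProof
end Chunk3

section Chunk4
open Matrix Finset

namespace TrueElemProof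

variable {A : Type} [CommRing A] {n : ℕ} {π : Ideal A}

@[simp] theorem tri0 {k l m : Fin n} : tri k l m 0 = k := rfl
@[simp] theorem tri1 {k l m : Fin n} : tri k l m 1 = l := rfl
@[simp] theorem tri2 {k l m : Fin n} : tri k l m 2 = m := rfl

theorem vmv_zero_left (y : Fin n → A) : vecMulVec (0 : Fin n → A) y = 0 := by
  ext p q; simp [vecMulVec_apply]

theorem sum_pieces (y : Fin n → A) (s : Finset (Fin n)) (F : Fin n → Fin n → A)
    (hdot : ∀ i ∈ s, y ⬝ᵥ F i = 0) (hmem : ∀ i ∈ s, InF π (1 + vecMulVec (F i) y)) :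
    y ⬝ᵥ (∑ i ∈ s, F i) = 0 ∧ InF π (1 + vecMulVec (∑ i ∈ s, F i) y) := by
  classical
  induction s using Finset.induction_on with
  | empty =>
    constructor
    · simp
    · rw [Finset.sum_empty, vmv_zero_left, add_zero]
      exact InF_one
  | insert q t hq ih =>
    obtain ⟨ih1, ih2⟩ := ih (fun i hi => hdot i (Finset.mem_insert_of_mem hi))
      (fun i hi => hmem i (Finset.mem_insert_of_mem hi))
    have hqdot := hdot q (Finset.mem_insert_self q t)
    have hqmem := hmem q (Finset.mem_insert_self q t)
    rw [Finset.sum_insert hq]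
    constructor
    · rw [dotProduct_add, hqdot, ih1, add_zero]
    · have hstep := unip_mul_unip_col (x := F q) (x' := ∑ i ∈ t, F i) (y := y) ih1
      rw [← hstep]
      exact hqmem.mul ih2

/-- Main pair lemma: `1 + v ⊗ (λ(v_k e_l − v_l e_k)) ∈ F` when `v_l ∈ π`, `λ ∈ π`. -/
theorem pairInF (hn : 3 ≤ n) {k l : Fin n} (hkl : k ≠ l) (v : Fin n → A)
    (hvl : v l ∈ π) {lam : A} (hlam : lam ∈ π) :
    InF π (1 + vecMulVec v (Pi.single l (lam * v k) - Pi.single k (lam * v l))) := by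
  classical
  have hcard : ¬ (Finset.univ : Finset (Fin n)) ⊆ {k, l} := by
    intro hsub
    have h2 : (Finset.univ : Finset (Fin n)).card ≤ ({k, l} : Finset (Fin n)).card :=
      Finset.card_le_card hsub
    have h3 : ({k, l} : Finset (Fin n)).card ≤ 2 := by
      refine le_trans (Finset.card_insert_le _ _) ?_
      simp
    rw [Finset.card_univ, Fintype.card_fin] at h2
    omega
  obtain ⟨m, -, hm⟩ := Finset.not_subset.mp hcard
  have hmk : m ≠ k := by intro h; exact hm (by simp [h])
  have hml : m ≠ l := by intro h; exact hm (by simp [h])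
  have hkm : k ≠ m := Ne.symm hmk
  have hlm : l ≠ m := Ne.symm hml
  set y : Fin n → A := Pi.single l (lam * v k) - Pi.single k (lam * v l) with hy
  have hyπ : ∀ q, y q ∈ π := by
    intro q
    rw [hy]
    refine Ideal.sub_mem _ ?_ ?_ <;>
      · rw [Pi.single_apply]
        split
        · exact π.mul_mem_right _ hlam
        · exact π.zero_mem
  have hyk : y k = -(lam * v l) := by
    rw [hy]; simp [Pi.single_apply, hkl, Ne.symm hkl]
  have hyl : y l = lam * v k := by
    rw [hy]; simp [Pi.single_apply, hkl, Ne.symm hkl]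
  have hyother : ∀ q, q ≠ k → q ≠ l → y q = 0 := by
    intro q h1 h2
    rw [hy]; simp [Pi.single_apply, h1, h2]
  have hydot : ∀ x : Fin n → A, y ⬝ᵥ x = (lam * v k) * x l - (lam * v l) * x k := by
    intro x
    rw [hy, sub_dotProduct, single_dotProduct, single_dotProduct]
  set x0 : Fin n → A := Pi.single k (v k) + Pi.single l (v l) with hx0def
  have hx0k : x0 k = v k := by rw [hx0def]; simp [Pi.single_apply, hkl, Ne.symm hkl]
  have hx0l : x0 l = v l := by rw [hx0def]; simp [Pi.single_apply, hkl, Ne.symm hkl]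
  have hx0other : ∀ q, q ≠ k → q ≠ l → x0 q = 0 := by
    intro q h1 h2; rw [hx0def]; simp [Pi.single_apply, h1, h2]
  have hplane : InF π (1 + vecMulVec x0 y) := by
    have hΦ := Phi_unip (k := k) (l := l) (m := m) hkl hkm hlm
      ![v k, v l, 0] ![-(lam * v l), lam * v k, 0]
    have hex1 : ext3 k l m ![v k, v l, (0:A)] = x0 := by
      funext x
      by_cases h1 : x = k
      · subst h1; simp [ext3, hx0k]
      · by_cases h2 : x = l
        · subst h2; simp [ext3, Ne.symm hkl, hx0l]
        · by_cases h3 : x = m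
          · subst h3; simp [ext3, Ne.symm hkm, Ne.symm hlm, hx0other x h1 h2]
          · simp [ext3, h1, h2, h3, hx0other x h1 h2]
    have hex2 : ext3 k l m ![-(lam * v l), lam * v k, (0:A)] = y := by
      funext x
      by_cases h1 : x = k
      · subst h1; simp [ext3, hyk]
      · by_cases h2 : x = l
        · subst h2; simp [ext3, Ne.symm hkl, hyl]
        · by_cases h3 : x = m
          · subst h3; simp [ext3, Ne.symm hkm, Ne.symm hlm, hyother x h1 h2]
          · simp [ext3, h1, h2, h3, hyother x h1 h2]
    rw [hex1, hex2] at hΦ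
    rw [← hΦ, boss3 lam (v k) (v l)]
    simp only [Phi_mul hkl hkm hlm, Phi_transvection hkl hkm hlm, tri0, tri1, tri2]
    have e1 : InF π (Matrix.transvection l m (-(v l))) :=
      InF_transvection hlm (π.neg_mem hvl)
    have e2 : InF π (Matrix.transvection k l (lam * (v k)^2)) :=
      InF_transvection hkl (π.mul_mem_right _ hlam)
    have e3 : InF π (Matrix.transvection m l (-(lam * v k))) :=
      InF_transvection (Ne.symm hlm) (π.neg_mem (π.mul_mem_right _ hlam))
    have e4 : InF π (Matrix.transvection k l (-(lam * v k))) :=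
      InF_transvection hkl (π.neg_mem (π.mul_mem_right _ hlam))
    have e5 : InF π (Matrix.transvection m l lam) :=
      InF_transvection (Ne.symm hlm) hlam
    have e6 : InF π (Matrix.transvection l m (v k * v l)) :=
      InF_transvection hlm (π.mul_mem_left _ hvl)
    have e7 : InF π (Matrix.transvection l k (v l)) :=
      InF_transvection (Ne.symm hkl) hvl
    have e8 : InF π (Matrix.transvection m l (-lam)) :=
      InF_transvection (Ne.symm hlm) (π.neg_mem hlam)
    have e9 : InF π (Matrix.transvection k l (lam * v k)) :=
      InF_transvection hkl (π.mul_mem_right _ hlam)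
    have e10 : InF π (Matrix.transvection l m (-(v k * v l))) :=
      InF_transvection hlm (π.neg_mem (π.mul_mem_left _ hvl))
    have e11 : InF π (Matrix.transvection l k (-(v l))) :=
      InF_transvection (Ne.symm hkl) (π.neg_mem hvl)
    have e12 : InF π (Matrix.transvection l m (v l)) :=
      InF_transvection hlm hvl
    have e13 : InF π (Matrix.transvection m l (lam * v k)) :=
      InF_transvection (Ne.symm hlm) (π.mul_mem_right _ hlam)
    have e14 : InF π (Matrix.transvection m k (-(lam * v l))) :=
      InF_transvection (Ne.symm hkm) (π.neg_mem (π.mul_mem_right _ hlam))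
    exact ((((((((((((e1.mul e2).mul e3).mul e4).mul e5).mul e6).mul e7).mul e8).mul
      e9).mul e10).mul e11).mul e12).mul e13).mul e14
  set s : Finset (Fin n) := (Finset.univ.erase k).erase l with hs
  have hsingle : ∀ i ∈ s, InF π (1 + vecMulVec (Pi.single i (v i)) y) := by
    intro i hi
    have hik : i ≠ k := Finset.ne_of_mem_erase (Finset.mem_of_mem_erase hi)
    have hil : i ≠ l := Finset.ne_of_mem_erase hi
    rw [vmv_scale_left]
    refine rowInF i _ ?_ ?_
    · rw [hyother i hik hil, mul_zero]
    · intro q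
      exact π.mul_mem_left _ (hyπ q)
  have hsingledot : ∀ i ∈ s, y ⬝ᵥ (Pi.single i (v i)) = 0 := by
    intro i hi
    have hik : i ≠ k := Finset.ne_of_mem_erase (Finset.mem_of_mem_erase hi)
    have hil : i ≠ l := Finset.ne_of_mem_erase hi
    rw [hydot]
    simp [Pi.single_apply, Ne.symm hik, Ne.symm hil]
  obtain ⟨hX1dot, hX1⟩ := sum_pieces y s (fun i => Pi.single i (v i)) hsingledot hsingle
  have hv : v = x0 + ∑ i ∈ s, Pi.single i (v i) := by
    funext r
    rw [Pi.add_apply, Finset.sum_apply]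
    by_cases h1 : r = k
    · have hz : ∑ i ∈ s, Pi.single i (v i) k = 0 := Finset.sum_eq_zero (fun i hi => by
        have hik : i ≠ k := Finset.ne_of_mem_erase (Finset.mem_of_mem_erase hi)
        simp [Pi.single_apply, Ne.symm hik])
      rw [h1, hx0k, hz, add_zero]
    · by_cases h2 : r = l
      · have hz : ∑ i ∈ s, Pi.single i (v i) l = 0 := Finset.sum_eq_zero (fun i hi => by
          have hil : i ≠ l := Finset.ne_of_mem_erase hi
          simp [Pi.single_apply, Ne.symm hil])
        rw [h2, hx0l, hz, add_zero]
      · have hrs : r ∈ s := by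
          rw [hs]
          exact Finset.mem_erase.mpr ⟨h2, Finset.mem_erase.mpr ⟨h1, Finset.mem_univ r⟩⟩
        rw [hx0other r h1 h2, zero_add,
          Finset.sum_eq_single_of_mem r hrs (fun i _ hir => by simp [Pi.single_apply, Ne.symm hir])]
        simp
  have hfin := unip_mul_unip_col (x := x0) (x' := ∑ i ∈ s, Pi.single i (v i)) (y := y) hX1dot
  rw [hv, ← hfin]
  exact hplane.mul hX1

end TrueElemProof
end Chunk4

section Chunk5
open Matrix Finset

namespace TrueElemProof

variable {A : Type} [CommRing A] {n : ℕ} {π : Ideal A}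

theorem vmv_zero_right (v : Fin n → A) : vecMulVec v (0 : Fin n → A) = 0 := by
  ext p q; simp [vecMulVec_apply]

theorem sum_pieces_row (v : Fin n → A) {ι : Type} [DecidableEq ι] (s : Finset ι)
    (Y : ι → Fin n → A)
    (hdot : ∀ i ∈ s, Y i ⬝ᵥ v = 0) (hmem : ∀ i ∈ s, InF π (1 + vecMulVec v (Y i))) :
    (∑ i ∈ s, Y i) ⬝ᵥ v = 0 ∧ InF π (1 + vecMulVec v (∑ i ∈ s, Y i)) := by
  classical
  induction s using Finset.induction_on with
  | empty =>
    constructor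
    · simp
    · rw [Finset.sum_empty, vmv_zero_right, add_zero]
      exact InF_one
  | insert q t hq ih =>
    obtain ⟨ih1, ih2⟩ := ih (fun i hi => hdot i (Finset.mem_insert_of_mem hi))
      (fun i hi => hmem i (Finset.mem_insert_of_mem hi))
    have hqdot := hdot q (Finset.mem_insert_self q t)
    have hqmem := hmem q (Finset.mem_insert_self q t)
    rw [Finset.sum_insert hq]
    constructor
    · rw [add_dotProduct, hqdot, ih1, add_zero]
    · have hstep := unip_mul_unip (v := v) (y := ∑ i ∈ t, Y i) (y' := Y q) ih1
      rw [add_comm (∑ i ∈ t, Y i) (Y q)] at hstep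
      rw [← hstep]
      exact ih2.mul hqmem

theorem mul_vmv (X : Matrix (Fin n) (Fin n) A) (u w : Fin n → A) :
    X * vecMulVec u w = vecMulVec (X *ᵥ u) w := by
  ext p q
  simp only [Matrix.mul_apply, vecMulVec_apply, Matrix.mulVec, dotProduct]
  rw [Finset.sum_mul]
  exact Finset.sum_congr rfl fun r _ => by ring

theorem vmv_mul (u w : Fin n → A) (Y : Matrix (Fin n) (Fin n) A) :
    vecMulVec u w * Y = vecMulVec u (w ᵥ* Y) := by
  ext p q
  simp only [Matrix.mul_apply, vecMulVec_apply, Matrix.vecMul, dotProduct]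
  rw [Finset.mul_sum]
  exact Finset.sum_congr rfl fun r _ => by ring

theorem conj_unip_coe (X Y : Matrix (Fin n) (Fin n) A) (hXY : X * Y = 1)
    (i j : Fin n) (a : A) :
    X * (1 + Matrix.single i j a) * Y
      = 1 + vecMulVec (fun p => X p i) (fun q => a * Y j q) := by
  have hstd : Matrix.single i j a = vecMulVec (Pi.single i 1) (Pi.single j a) := by
    rw [vmv_single_single, one_mul]
  have h1 : X *ᵥ Pi.single i (1 : A) = fun p => X p i := by
    rw [Matrix.mulVec_single]
    funext p
    exact mul_one _
  have h2 : Pi.single j a ᵥ* Y = fun q => a * Y j q := by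
    rw [Matrix.single_vecMul]
    rfl
  rw [hstd, mul_add, mul_one, add_mul, hXY, mul_vmv, vmv_mul, h1, h2]

/-- the pair piece of the row expansion -/
def Ypiece (a : A) (c w v : Fin n → A) (p : Fin n × Fin n) : Fin n → A :=
  Pi.single p.2 ((a * c p.1 * w p.2) * v p.1) - Pi.single p.1 ((a * c p.1 * w p.2) * v p.2)

theorem conj_gen_mem (hn : 3 ≤ n) (g : SL n A)
    (hg : ∀ p q : Fin n, p ≠ q → (g : Matrix (Fin n) (Fin n) A) p q ∈ π)
    {i j : Fin n} (hij : i ≠ j) {a : A} (ha : a ∈ π) :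
    g * elem A i j hij a * g⁻¹ ∈ Fgrp A n π := by
  classical
  set G : Matrix (Fin n) (Fin n) A := (g : Matrix (Fin n) (Fin n) A) with hG
  set Gi : Matrix (Fin n) (Fin n) A := ((g⁻¹ : SL n A) : Matrix (Fin n) (Fin n) A) with hGi
  set v : Fin n → A := fun p => G p i with hv
  set c : Fin n → A := fun r => Gi i r with hc
  set w : Fin n → A := fun r => Gi j r with hw
  have hGiG : Gi * G = 1 := by
    rw [hGi, hG, ← Matrix.SpecialLinearGroup.coe_mul, inv_mul_cancel g,
      Matrix.SpecialLinearGroup.coe_one]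
  have hGGi : G * Gi = 1 := by
    rw [hGi, hG, ← Matrix.SpecialLinearGroup.coe_mul, mul_inv_cancel g,
      Matrix.SpecialLinearGroup.coe_one]
  have hcv : ∑ r, c r * v r = 1 := by
    have h1 : (Gi * G) i i = (1 : Matrix (Fin n) (Fin n) A) i i := by rw [hGiG]
    rw [Matrix.mul_apply, Matrix.one_apply_eq] at h1
    exact h1
  have hwv : ∑ r, w r * v r = 0 := by
    have h1 : (Gi * G) j i = (1 : Matrix (Fin n) (Fin n) A) j i := by rw [hGiG]
    rw [Matrix.mul_apply, Matrix.one_apply_ne (Ne.symm hij)] at h1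
    exact h1
  have hcoe : ((g * elem A i j hij a * g⁻¹ : SL n A) : Matrix (Fin n) (Fin n) A)
      = 1 + vecMulVec v (fun q => a * w q) := by
    rw [Matrix.SpecialLinearGroup.coe_mul, Matrix.SpecialLinearGroup.coe_mul]
    have helem : ((elem A i j hij a : SL n A) : Matrix (Fin n) (Fin n) A)
        = 1 + Matrix.single i j a := rfl
    rw [helem, ← hG, ← hGi, conj_unip_coe G Gi hGGi i j a]
  have hrow : ∀ q, a * w q = (∑ p : Fin n × Fin n, Ypiece a c w v p) q := by
    intro q
    rw [Finset.sum_apply]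
    simp only [Ypiece, Pi.sub_apply]
    rw [Finset.sum_sub_distrib]
    have hA : (∑ p : Fin n × Fin n, (Pi.single p.2 ((a * c p.1 * w p.2) * v p.1) : Fin n → A) q)
        = ∑ k, (a * c k * w q) * v k := by
      rw [← Finset.univ_product_univ, Finset.sum_product]
      refine Finset.sum_congr rfl fun k _ => ?_
      simp [Pi.single_apply]
    have hB : (∑ p : Fin n × Fin n, (Pi.single p.1 ((a * c p.1 * w p.2) * v p.2) : Fin n → A) q)
        = ∑ l, (a * c q * w l) * v l := by
      rw [← Finset.univ_product_univ, Finset.sum_product, Finset.sum_comm]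
      refine Finset.sum_congr rfl fun l _ => ?_
      simp [Pi.single_apply]
    rw [hA, hB]
    have e1 : ∑ k, (a * c k * w q) * v k = a * w q * ∑ k, c k * v k := by
      rw [Finset.mul_sum]
      exact Finset.sum_congr rfl fun k _ => by ring
    have e2 : ∑ l, (a * c q * w l) * v l = a * c q * ∑ l, w l * v l := by
      rw [Finset.mul_sum]
      exact Finset.sum_congr rfl fun l _ => by ring
    rw [e1, e2, hcv, hwv]
    ring
  have hdots : ∀ p : Fin n × Fin n, p ∈ (Finset.univ : Finset (Fin n × Fin n)) →
      Ypiece a c w v p ⬝ᵥ v = 0 := by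
    intro p _
    simp only [Ypiece, sub_dotProduct, single_dotProduct]
    ring
  have hmems : ∀ p : Fin n × Fin n, p ∈ (Finset.univ : Finset (Fin n × Fin n)) →
      InF π (1 + vecMulVec v (Ypiece a c w v p)) := by
    rintro ⟨k, l⟩ -
    rcases eq_or_ne k l with rfl | hkl
    · have h0 : Ypiece a c w v (k, k) = 0 := by
        simp [Ypiece]
      rw [h0, vmv_zero_right, add_zero]
      exact InF_one
    · have hlamπ : a * c k * w l ∈ π := π.mul_mem_right _ (π.mul_mem_right _ ha)
      rcases eq_or_ne l i with rfl | hli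
      · -- here the special index `i` has been renamed to `l`
        have hvk : v k ∈ π := hg k l hkl
        have hmem := pairInF (π := π) hn (Ne.symm hkl) v hvk (π.neg_mem hlamπ)
        have hflip : Pi.single k (-(a * c k * w l) * v l) - Pi.single l (-(a * c k * w l) * v k)
            = Ypiece a c w v (k, l) := by
          funext q
          simp only [Ypiece, Pi.sub_apply, Pi.single_apply]
          split_ifs <;> ring
        rw [hflip] at hmem
        exact hmem
      · have hvl : v l ∈ π := hg l i hli
        have hmem := pairInF (π := π) hn hkl v hvl hlamπ
        have hid : Pi.single l ((a * c k * w l) * v k) - Pi.single k ((a * c k * w l) * v l)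
            = Ypiece a c w v (k, l) := rfl
        rw [hid] at hmem
        exact hmem
  obtain ⟨-, hsum⟩ := sum_pieces_row (π := π) v Finset.univ (Ypiece a c w v) hdots hmems
  have hfun : (fun q => a * w q) = ∑ p : Fin n × Fin n, Ypiece a c w v p := funext hrow
  rw [← hfun] at hsum
  obtain ⟨hF, hFmem, hcoeF⟩ := hsum
  have heq : hF = g * elem A i j hij a * g⁻¹ := Subtype.ext (by exact hcoeF.trans hcoe.symm)
  exact heq ▸ hFmem

end TrueElemProof
end Chunk5

section Chunk6
open Matrix Finset

namespace TrueElemProof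

variable {A : Type} [CommRing A] {n : ℕ} {π : Ideal A}

theorem inv_mem_Ω {g : SL n A} (hg : g ∈ Ωset A n π) : g⁻¹ ∈ Ωset A n π := by
  classical
  intro p q hpq
  set φ : A →+* A ⧸ π := Ideal.Quotient.mk π with hφ
  set d : Fin n → A ⧸ π := fun r => φ ((g : Matrix (Fin n) (Fin n) A) r r) with hd
  have hcoe_map : ∀ h : SL n A,
      ((Matrix.SpecialLinearGroup.map φ h : Matrix.SpecialLinearGroup (Fin n) (A ⧸ π)) :
        Matrix (Fin n) (Fin n) (A ⧸ π)) = (h : Matrix (Fin n) (Fin n) A).map φ := fun h => rfl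
  have hgdiag : ((Matrix.SpecialLinearGroup.map φ g : Matrix.SpecialLinearGroup (Fin n) (A ⧸ π)) :
      Matrix (Fin n) (Fin n) (A ⧸ π)) = Matrix.diagonal d := by
    rw [hcoe_map]
    ext r s
    rcases eq_or_ne r s with rfl | hrs
    · rw [Matrix.map_apply, Matrix.diagonal_apply_eq]
    · rw [Matrix.map_apply, Matrix.diagonal_apply_ne _ hrs]
      exact Ideal.Quotient.eq_zero_iff_mem.mpr (hg r s hrs)
  have hdet : ∏ r, d r = 1 := by
    have h1 := (Matrix.SpecialLinearGroup.map φ g).2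
    rw [show ((Matrix.SpecialLinearGroup.map φ g : Matrix.SpecialLinearGroup (Fin n) (A ⧸ π)) :
      Matrix (Fin n) (Fin n) (A ⧸ π)) = Matrix.diagonal d from hgdiag, Matrix.det_diagonal] at h1
    exact h1
  set d' : Fin n → A ⧸ π := fun r => ∏ s ∈ Finset.univ.erase r, d s with hd'
  have hdd' : ∀ r, d r * d' r = 1 := by
    intro r
    rw [hd']
    rw [Finset.mul_prod_erase _ _ (Finset.mem_univ r)]
    exact hdet
  have hdet' : (Matrix.diagonal d').det = 1 := by
    rw [Matrix.det_diagonal]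
    have h2 : (∏ r, d' r) * (∏ r, d r) = 1 := by
      rw [← Finset.prod_mul_distrib]
      refine Finset.prod_eq_one fun r _ => ?_
      rw [mul_comm]
      exact hdd' r
    rw [hdet, mul_one] at h2
    exact h2
  let D' : Matrix.SpecialLinearGroup (Fin n) (A ⧸ π) := ⟨Matrix.diagonal d', hdet'⟩
  have hmul : Matrix.SpecialLinearGroup.map φ g * D' = 1 := by
    apply Subtype.ext
    rw [Matrix.SpecialLinearGroup.coe_mul, hgdiag]
    show Matrix.diagonal d * Matrix.diagonal d' = _
    rw [Matrix.diagonal_mul_diagonal, Matrix.SpecialLinearGroup.coe_one,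
      show (fun r => d r * d' r) = fun _ => (1 : A ⧸ π) from funext hdd', Matrix.diagonal_one]
  have hinv : Matrix.SpecialLinearGroup.map φ g⁻¹ = D' := by
    rw [map_inv]
    exact inv_eq_of_mul_eq_one_right hmul
  have hentry : φ (((g⁻¹ : SL n A) : Matrix (Fin n) (Fin n) A) p q) = 0 := by
    have h3 := congrArg
      (fun M : Matrix.SpecialLinearGroup (Fin n) (A ⧸ π) =>
        (M : Matrix (Fin n) (Fin n) (A ⧸ π)) p q) hinv
    simp only [hcoe_map, Matrix.map_apply] at h3
    rw [h3]
    show Matrix.diagonal d' p q = 0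
    rw [Matrix.diagonal_apply_ne _ hpq]
  rwa [Ideal.Quotient.eq_zero_iff_mem] at hentry

def Ωgrp (A : Type) [CommRing A] (n : ℕ) (π : Ideal A) : Subgroup (SL n A) where
  carrier := Ωset A n π
  one_mem' := by
    intro p q hpq
    show ((1 : SL n A) : Matrix (Fin n) (Fin n) A) p q ∈ π
    rw [Matrix.SpecialLinearGroup.coe_one, Matrix.one_apply_ne hpq]
    exact π.zero_mem
  mul_mem' := by
    intro g h hgΩ hhΩ
    intro p q hpq
    show ((g * h : SL n A) : Matrix (Fin n) (Fin n) A) p q ∈ π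
    rw [Matrix.SpecialLinearGroup.coe_mul, Matrix.mul_apply]
    refine Ideal.sum_mem _ fun r _ => ?_
    rcases eq_or_ne p r with rfl | hpr
    · exact π.mul_mem_left _ (hhΩ p q hpq)
    · exact π.mul_mem_right _ (hgΩ p r hpr)
  inv_mem' := by
    intro g hgΩ
    exact inv_mem_Ω hgΩ

end TrueElemProof
end Chunk6


/-- **Main theorem.** For a commutative unital ring `A`, an ideal `π` of `A` and `n ≥ 3`,
the true elementary subgroup `F_n(π)` is a normal subgroup of
`Ω_n(π) = {g ∈ SL_n(A) : g mod π is diagonal}`: the set `Ω_n(π)` is (the carrier of) a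
subgroup of `SL_n(A)` containing `F_n(π)`, and `F_n(π)` is stable under conjugation by the
elements of `Ω_n(π)`. -/
theorem trueElementary_normal_in_Omega (A : Type) [CommRing A] (π : Ideal A) (n : ℕ)
    (hn : 3 ≤ n) :
    ∃ O : Subgroup (SL n A), (O : Set (SL n A)) = Ωset A n π ∧
      Fgrp A n π ≤ O ∧ ∀ g ∈ O, ∀ x ∈ Fgrp A n π, g * x * g⁻¹ ∈ Fgrp A n π := by

  classical
  refine ⟨TrueElemProof.Ωgrp A n π, rfl, ?_, ?_⟩
  · rw [Fgrp]
    refine (Subgroup.closure_le _).mpr ?_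
    rintro x ⟨i, j, hij, a, haπ, rfl⟩
    intro p q hpq
    show ((elem A i j hij a : SL n A) : Matrix (Fin n) (Fin n) A) p q ∈ π
    rw [show ((elem A i j hij a : SL n A) : Matrix (Fin n) (Fin n) A)
      = 1 + Matrix.single i j a from rfl]
    rw [Matrix.add_apply, Matrix.one_apply_ne hpq]
    rw [zero_add]
    show (if i = p ∧ j = q then a else 0) ∈ π
    split
    · exact haπ
    · exact π.zero_mem
  · intro g hgΩ x hx
    have hgΩ' : ∀ p q : Fin n, p ≠ q → (g : Matrix (Fin n) (Fin n) A) p q ∈ π := hgΩ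
    have hmap : (Fgrp A n π).map (MulAut.conj g).toMonoidHom ≤ Fgrp A n π := by
      rw [Fgrp, MonoidHom.map_closure]
      refine (Subgroup.closure_le _).mpr ?_
      rintro y ⟨z, hz, rfl⟩
      obtain ⟨i, j, hij, a, ha, rfl⟩ := hz
      have := TrueElemProof.conj_gen_mem hn g hgΩ' hij ha
      simpa [MulAut.conj_apply, Fgrp] using this
    have hmem : g * x * g⁻¹ ∈ (Fgrp A n π).map (MulAut.conj g).toMonoidHom :=
      ⟨x, hx, by simp [MulAut.conj_apply]⟩
    exact hmap hmem
end

section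
/- Let A be a commutative unital ring, let π be an ideal of A, and let n ≥ 3. Then E_n(π²) is contained in F_n(π), where π² is the product ideal. -/
open Matrix

namespace TitsProof
variable {A : Type} [CommRing A] {n : ℕ}

/-- transvection-like matrix `1 + u vᵀ`. -/
def tv (u v : Fin n → A) : Matrix (Fin n) (Fin n) A := 1 + vecMulVec u v

lemma vmv_add_left (u u' v : Fin n → A) :
    vecMulVec (u + u') v = vecMulVec u v + vecMulVec u' v := by
  ext p q; simp [vecMulVec_apply]; ring

lemma vmv_add_right (u v v' : Fin n → A) :
    vecMulVec u (v + v') = vecMulVec u v + vecMulVec u v' := by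
  ext p q; simp [vecMulVec_apply]; ring

lemma vmv_neg_left (u v : Fin n → A) : vecMulVec (-u) v = -vecMulVec u v := by
  ext p q; simp [vecMulVec_apply]

lemma vmv_neg_right (u v : Fin n → A) : vecMulVec u (-v) = -vecMulVec u v := by
  ext p q; simp [vecMulVec_apply]

lemma vmv_smul_left (c : A) (u v : Fin n → A) :
    vecMulVec (c • u) v = c • vecMulVec u v := by
  ext p q; simp [vecMulVec_apply]; ring

lemma vmv_single (p q : Fin n) (c d c' d' : A) (h : c * d = c' * d') :
    vecMulVec (Pi.single p c) (Pi.single q d)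
      = vecMulVec (Pi.single p c') (Pi.single q d') := by
  ext x y
  simp only [vecMulVec_apply, Pi.single_apply]
  split_ifs <;> simp_all

lemma vmv_mul_vmv (u v u' v' : Fin n → A) :
    vecMulVec u v * vecMulVec u' v' = (v ⬝ᵥ u') • vecMulVec u v' := by
  ext p q
  simp only [Matrix.mul_apply, vecMulVec_apply, Matrix.smul_apply, dotProduct,
    smul_eq_mul, Finset.sum_mul, Finset.mul_sum]
  exact Finset.sum_congr rfl fun k _ => by ring

lemma mul_vmv (M : Matrix (Fin n) (Fin n) A) (u v : Fin n → A) :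
    M * vecMulVec u v = vecMulVec (M *ᵥ u) v := by
  ext p q
  simp only [Matrix.mul_apply, vecMulVec_apply, Matrix.mulVec, dotProduct, Finset.sum_mul]
  exact Finset.sum_congr rfl fun k _ => by ring

lemma vmv_mul (u v : Fin n → A) (N : Matrix (Fin n) (Fin n) A) :
    vecMulVec u v * N = vecMulVec u (v ᵥ* N) := by
  ext p q
  simp only [Matrix.mul_apply, vecMulVec_apply, Matrix.vecMul, dotProduct, Finset.mul_sum]
  exact Finset.sum_congr rfl fun k _ => by ring

lemma vmv_mulVec (u v x : Fin n → A) : vecMulVec u v *ᵥ x = (v ⬝ᵥ x) • u := by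
  ext p
  simp only [Matrix.mulVec, vecMulVec_apply, dotProduct, Pi.smul_apply, smul_eq_mul,
    Finset.sum_mul]
  exact Finset.sum_congr rfl fun k _ => by ring

lemma vecMul_vmv (x u v : Fin n → A) : x ᵥ* vecMulVec u v = (x ⬝ᵥ u) • v := by
  ext p
  simp only [Matrix.vecMul, vecMulVec_apply, dotProduct, Pi.smul_apply, smul_eq_mul,
    Finset.sum_mul]
  exact Finset.sum_congr rfl fun k _ => by ring

lemma tv_mul (u v u' v' : Fin n → A) :
    tv u v * tv u' v' = 1 + vecMulVec u v + vecMulVec u' v' + (v ⬝ᵥ u') • vecMulVec u v' := by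
  simp only [tv, add_mul, mul_add, one_mul, mul_one, vmv_mul_vmv]
  abel

lemma tv_mul_orth {u v u' v' : Fin n → A} (h : v ⬝ᵥ u' = 0) :
    tv u v * tv u' v' = 1 + vecMulVec u v + vecMulVec u' v' := by
  rw [tv_mul, h, zero_smul, add_zero]

lemma tv_split_left {u u' v : Fin n → A} (h : v ⬝ᵥ u' = 0) :
    tv (u + u') v = tv u v * tv u' v := by
  rw [tv_mul_orth h, tv, vmv_add_left, add_assoc]

lemma tv_split_right {u v v' : Fin n → A} (h : v ⬝ᵥ u = 0) :
    tv u (v + v') = tv u v * tv u v' := by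
  rw [tv_mul_orth h, tv, vmv_add_right, add_assoc]

lemma tv_mulVec (w s x : Fin n → A) : tv w s *ᵥ x = x + (s ⬝ᵥ x) • w := by
  simp [tv, Matrix.add_mulVec, vmv_mulVec]

lemma vecMul_tv (x w s : Fin n → A) : x ᵥ* tv w s = x + (x ⬝ᵥ w) • s := by
  simp [tv, Matrix.vecMul_add, vecMul_vmv]

lemma conj_tv (g g' : Matrix (Fin n) (Fin n) A) (hgg' : g * g' = 1) (u v : Fin n → A) :
    g * tv u v * g' = 1 + vecMulVec (g *ᵥ u) (v ᵥ* g') := by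
  have : g * tv u v * g' = g * g' + g * vecMulVec u v * g' := by
    simp only [tv, mul_add, add_mul, mul_one]
  rw [this, hgg', mul_vmv, vmv_mul]

lemma smul_single (c : A) (j : Fin n) (d : A) :
    c • (Pi.single j d : Fin n → A) = Pi.single j (c * d) := by
  ext p; simp [Pi.single_apply, mul_ite]

lemma comm4 {M : Type} [Ring M] (X Y : M) (hXX : X * X = 0) (hYY : Y * Y = 0)
    (hYX : Y * X = 0) : (1 + X) * (1 + Y) * (1 - X) * (1 - Y) = 1 + X * Y := by
  have h1 : X * (Y * X) = 0 := by rw [hYX, mul_zero]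
  have s1 : (1 + X) * (1 + Y) * (1 - X) = 1 + Y + X * Y
      - (X * X) - Y * X - X * (Y * X) := by noncomm_ring
  have s2 : (1 + Y + X * Y) * (1 - Y) = 1 + X * Y - Y * Y - X * (Y * Y) := by noncomm_ring
  rw [s1, hXX, hYX, mul_zero, sub_zero, sub_zero, sub_zero, s2, hYY, mul_zero, sub_zero,
    sub_zero]

lemma elem_val (i j : Fin n) (hij : i ≠ j) (c : A) :
    (elem A i j hij c).val = tv (Pi.single i c) (Pi.single j 1) := by
  ext p q
  simp only [elem, Matrix.transvection, tv, Matrix.add_apply, Matrix.single,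
    Matrix.of_apply, vecMulVec_apply, Pi.single_apply]
  rcases eq_or_ne i p with hp | hp
  · subst hp
    rcases eq_or_ne j q with hq | hq
    · subst hq; simp
    · simp [hq, hq.symm]
  · simp [hp, hp.symm]

lemma elem_mul_same (i j : Fin n) (hij : i ≠ j) (a b : A) :
    elem A i j hij a * elem A i j hij b = elem A i j hij (a + b) :=
  Subtype.ext (Matrix.transvection_mul_transvection_same i j hij a b)

lemma elem_zero (i j : Fin n) (hij : i ≠ j) : elem A i j hij 0 = 1 :=
  Subtype.ext (Matrix.transvection_zero i j)

lemma elem_inv (i j : Fin n) (hij : i ≠ j) (a : A) :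
    (elem A i j hij a)⁻¹ = elem A i j hij (-a) := by
  apply inv_eq_of_mul_eq_one_right
  rw [elem_mul_same, add_neg_cancel, elem_zero]

/-- the conjugated elementary generator `z_{ij}(a, r)` -/
def zel (A : Type) [CommRing A] (n : ℕ) (i j : Fin n) (hij : i ≠ j) (a r : A) : SL n A :=
  elem A j i hij.symm r * elem A i j hij a * (elem A j i hij.symm r)⁻¹

/-- subgroup generated by the `z_{ij}(a,r)`, `a ∈ q`. -/
def Hgrp (A : Type) [CommRing A] (n : ℕ) (q : Ideal A) : Subgroup (SL n A) :=
  Subgroup.closure {x | ∃ (i j : Fin n) (hij : i ≠ j), ∃ a ∈ q, ∃ r : A,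
    x = zel A n i j hij a r}

lemma elem_eq_zel (i j : Fin n) (hij : i ≠ j) (a : A) :
    elem A i j hij a = zel A n i j hij a 0 := by
  rw [zel, elem_zero, one_mul, inv_one, mul_one]

lemma zel_add (i j : Fin n) (hij : i ≠ j) (a b r : A) :
    zel A n i j hij (a + b) r = zel A n i j hij a r * zel A n i j hij b r := by
  rw [zel, zel, zel, ← elem_mul_same]
  group

lemma single_neg' (j : Fin n) (r : A) : (Pi.single j (-r) : Fin n → A) = -Pi.single j r := by
  ext p; simp [Pi.single_apply]; split_ifs <;> simp

lemma zel_val (i j : Fin n) (hij : i ≠ j) (a r : A) :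
    (zel A n i j hij a r).val
      = tv (Pi.single i a + Pi.single j (a * r)) (Pi.single j 1 + Pi.single i (-r)) := by
  rw [zel, elem_inv]
  have hcoe : (elem A j i hij.symm r * elem A i j hij a * elem A j i hij.symm (-r)).val
      = (elem A j i hij.symm r).val * (elem A i j hij a).val
        * (elem A j i hij.symm (-r)).val := rfl
  rw [hcoe, elem_val, elem_val, elem_val]
  have h1 : tv (Pi.single j r) (Pi.single i 1) * tv (Pi.single j (-r)) (Pi.single i 1)
      = (1 : Matrix (Fin n) (Fin n) A) := by
    rw [tv_mul_orth (by simp [single_dotProduct, Pi.single_apply, hij]),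
      single_neg', vmv_neg_left]
    abel
  rw [conj_tv _ _ h1, tv_mulVec, vecMul_tv, single_dotProduct, single_dotProduct,
    Pi.single_eq_same, Pi.single_eq_same, one_mul, one_mul, smul_single, smul_single,
    mul_one, tv]

lemma conj_elem_val (k l : Fin n) (hkl : k ≠ l) (m : A) (g : SL n A) (u v : Fin n → A)
    (hg : g.val = tv u v) :
    (elem A k l hkl m * g * (elem A k l hkl m)⁻¹).val
      = tv (u + Pi.single k (u l * m)) (v + Pi.single l (v k * -m)) := by
  rw [elem_inv]
  have hcoe : (elem A k l hkl m * g * elem A k l hkl (-m)).val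
      = (elem A k l hkl m).val * g.val * (elem A k l hkl (-m)).val := rfl
  rw [hcoe, hg, elem_val, elem_val]
  have h1 : tv (Pi.single k m) (Pi.single l 1) * tv (Pi.single k (-m)) (Pi.single l 1)
      = (1 : Matrix (Fin n) (Fin n) A) := by
    rw [tv_mul_orth (by simp [single_dotProduct, Pi.single_apply, hkl.symm]),
      single_neg', vmv_neg_left]
    abel
  rw [conj_tv _ _ h1, tv_mulVec, vecMul_tv, single_dotProduct, one_mul,
    dotProduct_single, smul_single, smul_single, mul_one, tv]

lemma dot_vv_uu (i j : Fin n) (hij : i ≠ j) (a r : A) :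
    (Pi.single j 1 + Pi.single i (-r) : Fin n → A)
      ⬝ᵥ (Pi.single i a + Pi.single j (a * r)) = 0 := by
  simp [add_dotProduct, dotProduct_add, single_dotProduct, Pi.single_apply, hij, hij.symm]
  ring

lemma conjB (i j : Fin n) (hij : i ≠ j) (a r m : A) :
    elem A j i hij.symm m * zel A n i j hij a r * (elem A j i hij.symm m)⁻¹
      = zel A n i j hij a (m + r) := by
  rw [zel, zel, ← elem_mul_same j i hij.symm m r]
  group

lemma conjK (i j : Fin n) (hij : i ≠ j) (k l : Fin n) (hkl : k ≠ l) (hki : k ≠ i)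
    (hkj : k ≠ j) (a r m : A) :
    elem A k l hkl m * zel A n i j hij a r * (elem A k l hkl m)⁻¹
      = zel A n i j hij a r
        * elem A k j hkj (((Pi.single i a + Pi.single j (a * r) : Fin n → A)) l * m)
        * elem A k i hki (((Pi.single i a + Pi.single j (a * r) : Fin n → A)) l * m * -r) := by
  set d := (Pi.single i a + Pi.single j (a * r) : Fin n → A) l * m with hd
  have hvvk : (Pi.single j 1 + Pi.single i (-r) : Fin n → A) k = 0 := by
    simp [Pi.single_apply, hki, hkj]
  apply Subtype.ext
  rw [conj_elem_val k l hkl m _ _ _ (zel_val i j hij a r), hvvk, zero_mul, Pi.single_zero,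
    add_zero]
  have hcoe : (zel A n i j hij a r * elem A k j hkj d * elem A k i hki (d * -r)).val
      = (zel A n i j hij a r).val * ((elem A k j hkj d).val * (elem A k i hki (d * -r)).val) := by
    rw [mul_assoc]; rfl
  rw [hcoe, zel_val, elem_val, elem_val]
  have h2 : tv (Pi.single k d) (Pi.single j 1) * tv (Pi.single k (d * -r)) (Pi.single i 1)
      = tv (Pi.single k d) (Pi.single j 1 + Pi.single i (-r)) := by
    rw [tv_mul_orth (by simp [single_dotProduct, Pi.single_apply, hkj.symm]),
      vmv_single k i (d * -r) 1 d (-r) (by ring), tv, vmv_add_right, add_assoc]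
  rw [h2, ← tv_split_left (by rw [dotProduct_single, hvvk, zero_mul])]

lemma conjL (i j : Fin n) (hij : i ≠ j) (k l : Fin n) (hkl : k ≠ l) (hli : l ≠ i)
    (hlj : l ≠ j) (a r m : A) :
    elem A k l hkl m * zel A n i j hij a r * (elem A k l hkl m)⁻¹
      = zel A n i j hij a r
        * elem A i l hli.symm (a * ((Pi.single j 1 + Pi.single i (-r) : Fin n → A) k * -m))
        * elem A j l hlj.symm (a * r * ((Pi.single j 1 + Pi.single i (-r) : Fin n → A) k * -m)) := by
  set d := (Pi.single j (1 : A) + Pi.single i (-r) : Fin n → A) k * -m with hd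
  have huul : (Pi.single i a + Pi.single j (a * r) : Fin n → A) l = 0 := by
    simp [Pi.single_apply, hli, hlj]
  apply Subtype.ext
  rw [conj_elem_val k l hkl m _ _ _ (zel_val i j hij a r), huul, zero_mul, Pi.single_zero,
    add_zero]
  have hcoe : (zel A n i j hij a r * elem A i l hli.symm (a * d)
        * elem A j l hlj.symm (a * r * d)).val
      = (zel A n i j hij a r).val
        * ((elem A i l hli.symm (a * d)).val * (elem A j l hlj.symm (a * r * d)).val) := by
    rw [mul_assoc]; rfl
  rw [hcoe, zel_val, elem_val, elem_val]
  have h2 : tv (Pi.single i (a * d)) (Pi.single l 1) * tv (Pi.single j (a * r * d)) (Pi.single l 1)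
      = tv (Pi.single i a + Pi.single j (a * r)) (Pi.single l d) := by
    rw [tv_mul_orth (by simp [single_dotProduct, Pi.single_apply, hlj.symm]),
      vmv_single i l (a * d) 1 a d (by ring),
      vmv_single j l (a * r * d) 1 (a * r) d (by ring), tv, vmv_add_left, add_assoc]
  rw [h2, ← tv_split_right (dot_vv_uu i j hij a r)]

lemma conj1 (h i j : Fin n) (hhi : h ≠ i) (hjh : j ≠ h) (hji : j ≠ i) (b c : A) :
    elem A h i hhi c * elem A j h hjh b * (elem A h i hhi c)⁻¹
      = elem A j h hjh b * elem A j i hji (b * -c) := by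
  apply Subtype.ext
  rw [conj_elem_val h i hhi c _ _ _ (elem_val j h hjh b)]
  have h3 : (Pi.single j b : Fin n → A) i = 0 := by simp [Pi.single_apply, hji.symm]
  have h4 : (Pi.single h 1 : Fin n → A) h = 1 := Pi.single_eq_same h 1
  rw [h3, zero_mul, Pi.single_zero, add_zero, h4, one_mul]
  have hcoe : (elem A j h hjh b * elem A j i hji (b * -c)).val
      = (elem A j h hjh b).val * (elem A j i hji (b * -c)).val := rfl
  rw [hcoe, elem_val, elem_val,
    tv_mul_orth (by simp [single_dotProduct, Pi.single_apply, hjh.symm]),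
    vmv_single j i (b * -c) 1 b (-c) (by ring), tv, vmv_add_right, add_assoc]

variable {q π : Ideal A}

lemma elem_mem_F {i j : Fin n} {hij : i ≠ j} {a : A} (ha : a ∈ π) :
    elem A i j hij a ∈ Fgrp A n π :=
  Subgroup.subset_closure ⟨i, j, hij, a, ha, rfl⟩

lemma zel_mem_H {i j : Fin n} {hij : i ≠ j} {a : A} (ha : a ∈ q) (r : A) :
    zel A n i j hij a r ∈ Hgrp A n q :=
  Subgroup.subset_closure ⟨i, j, hij, a, ha, r, rfl⟩

lemma elem_mem_H {i j : Fin n} {hij : i ≠ j} {a : A} (ha : a ∈ q) :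
    elem A i j hij a ∈ Hgrp A n q := by
  rw [elem_eq_zel]; exact zel_mem_H ha 0

lemma uu_apply_mem {i j : Fin n} {a : A} (ha : a ∈ q) (r : A) (l : Fin n) :
    (Pi.single i a + Pi.single j (a * r) : Fin n → A) l ∈ q := by
  have h1 : (Pi.single i a : Fin n → A) l ∈ q := by
    rw [Pi.single_apply]; split_ifs; exacts [ha, q.zero_mem]
  have h2 : (Pi.single j (a * r) : Fin n → A) l ∈ q := by
    rw [Pi.single_apply]; split_ifs; exacts [Ideal.mul_mem_right r q ha, q.zero_mem]
  exact q.add_mem h1 h2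

/-- The "good cases" of conjugation of a `z` generator by an elementary matrix. -/
lemma conj_zel_mem_of_ne {k l i j : Fin n} (hkl : k ≠ l) (hij : i ≠ j)
    (hne : ¬(k = i ∧ l = j)) {a : A} (ha : a ∈ q) (r m : A) :
    elem A k l hkl m * zel A n i j hij a r * (elem A k l hkl m)⁻¹ ∈ Hgrp A n q := by
  by_cases hli : l = i
  · subst hli
    by_cases hkj : k = j
    · subst hkj
      have hrw : elem A k l hkl m = elem A k l hij.symm m := rfl
      rw [hrw, conjB l k hij a r m]
      exact zel_mem_H ha _
    · rw [conjK l j hij k l hkl hkl hkj a r m]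
      exact mul_mem
        (mul_mem (zel_mem_H ha r)
          (elem_mem_H (Ideal.mul_mem_right m q (uu_apply_mem ha r l))))
        (elem_mem_H (Ideal.mul_mem_right (-r) q
          (Ideal.mul_mem_right m q (uu_apply_mem ha r l))))
  · by_cases hlj : l = j
    · subst hlj
      have hki : k ≠ i := fun hk => hne ⟨hk, rfl⟩
      rw [conjK i l hij k l hkl hki hkl a r m]
      exact mul_mem
        (mul_mem (zel_mem_H ha r)
          (elem_mem_H (Ideal.mul_mem_right m q (uu_apply_mem ha r l))))
        (elem_mem_H (Ideal.mul_mem_right (-r) q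
          (Ideal.mul_mem_right m q (uu_apply_mem ha r l))))
    · rw [conjL i j hij k l hkl hli hlj a r m]
      exact mul_mem
        (mul_mem (zel_mem_H ha r) (elem_mem_H (Ideal.mul_mem_right _ q ha)))
        (elem_mem_H (Ideal.mul_mem_right _ q (Ideal.mul_mem_right r q ha)))

lemma exists_third (hn : 3 ≤ n) (i j : Fin n) : ∃ h : Fin n, h ≠ i ∧ h ≠ j := by
  by_contra hc
  push_neg at hc
  have hsub : (Finset.univ : Finset (Fin n)) ⊆ {i, j} := by
    intro x _
    rcases eq_or_ne x i with h | h
    · simp [h]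
    · simp [hc x h]
  have h2 : ({i, j} : Finset (Fin n)).card ≤ 2 :=
    le_trans (Finset.card_insert_le i {j}) (by simp)
  have h3 : n ≤ 2 := by
    calc n = (Finset.univ : Finset (Fin n)).card := by simp
    _ ≤ ({i, j} : Finset (Fin n)).card := Finset.card_le_card hsub
    _ ≤ 2 := h2
  omega

/-- The hard case: conjugation of `z_{ij}(a,r)` by `e_{ij}(m)`. -/
lemma conj_zel_mem_same (hn : 3 ≤ n) {i j : Fin n} (hij : i ≠ j) {a : A} (ha : a ∈ q)
    (r m : A) :
    elem A i j hij m * zel A n i j hij a r * (elem A i j hij m)⁻¹ ∈ Hgrp A n q := by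
  obtain ⟨h, hhi, hhj⟩ := exists_third hn i j
  have hih : i ≠ h := hhi.symm
  have hjh : j ≠ h := hhj.symm
  have hji : j ≠ i := hij.symm
  have key : elem A i j hij m * zel A n i j hij a r * (elem A i j hij m)⁻¹
      = (elem A i h hih (a + a * r * m) * elem A j h hjh (a * r))
        * (elem A h j hhj (1 + r * m) * elem A h i hhi (-r))
        * (elem A j h hjh (-(a * r)) * elem A i h hih (-(a + a * r * m)))
        * (elem A h i hhi (-(-r)) * elem A h j hhj (-(1 + r * m))) := by
    apply Subtype.ext
    have huj : (Pi.single i a + Pi.single j (a * r) : Fin n → A) j = a * r := by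
      simp [Pi.single_apply, hij.symm]
    have hvi : (Pi.single j 1 + Pi.single i (-r) : Fin n → A) i = -r := by
      simp [Pi.single_apply, hij]
    rw [conj_elem_val i j hij m _ _ _ (zel_val i j hij a r), huj, hvi]
    have hcoe : ((elem A i h hih (a + a * r * m) * elem A j h hjh (a * r))
        * (elem A h j hhj (1 + r * m) * elem A h i hhi (-r))
        * (elem A j h hjh (-(a * r)) * elem A i h hih (-(a + a * r * m)))
        * (elem A h i hhi (-(-r)) * elem A h j hhj (-(1 + r * m)))).val
        = ((elem A i h hih (a + a * r * m)).val * (elem A j h hjh (a * r)).val)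
          * ((elem A h j hhj (1 + r * m)).val * (elem A h i hhi (-r)).val)
          * ((elem A j h hjh (-(a * r))).val * (elem A i h hih (-(a + a * r * m))).val)
          * ((elem A h i hhi (-(-r))).val * (elem A h j hhj (-(1 + r * m))).val) := rfl
    rw [hcoe]
    have hPval : (elem A i h hih (a + a * r * m)).val * (elem A j h hjh (a * r)).val
        = 1 + vecMulVec (Pi.single i (a + a * r * m) + Pi.single j (a * r))
            (Pi.single h 1) := by
      rw [elem_val, elem_val,
        tv_mul_orth (by simp [single_dotProduct, Pi.single_apply, hhj]),
        vmv_add_left, add_assoc]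
    have hQval : (elem A h j hhj (1 + r * m)).val * (elem A h i hhi (-r)).val
        = 1 + vecMulVec (Pi.single h 1)
            (Pi.single j (1 + r * m) + Pi.single i (-r)) := by
      rw [elem_val, elem_val,
        tv_mul_orth (by simp [single_dotProduct, Pi.single_apply, hjh]),
        vmv_single h j (1 + r * m) 1 1 (1 + r * m) (by ring),
        vmv_single h i (-r) 1 1 (-r) (by ring),
        vmv_add_right, add_assoc]
    have hneg1 : (Pi.single j (-(a * r)) + Pi.single i (-(a + a * r * m)) : Fin n → A)
        = -(Pi.single i (a + a * r * m) + Pi.single j (a * r)) := by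
      ext p
      simp only [Pi.add_apply, Pi.neg_apply, Pi.single_apply]
      split_ifs <;> ring
    have hPival : (elem A j h hjh (-(a * r))).val * (elem A i h hih (-(a + a * r * m))).val
        = 1 - vecMulVec (Pi.single i (a + a * r * m) + Pi.single j (a * r))
            (Pi.single h 1) := by
      rw [elem_val, elem_val,
        tv_mul_orth (by simp [single_dotProduct, Pi.single_apply, hhi]),
        add_assoc, ← vmv_add_left, hneg1, vmv_neg_left, ← sub_eq_add_neg]
    have hneg2 : (Pi.single i (-(-r)) + Pi.single j (-(1 + r * m)) : Fin n → A)
        = -(Pi.single j (1 + r * m) + Pi.single i (-r)) := by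
      ext p
      simp only [Pi.add_apply, Pi.neg_apply, Pi.single_apply]
      split_ifs <;> ring
    have hQival : (elem A h i hhi (-(-r))).val * (elem A h j hhj (-(1 + r * m))).val
        = 1 - vecMulVec (Pi.single h 1)
            (Pi.single j (1 + r * m) + Pi.single i (-r)) := by
      rw [elem_val, elem_val,
        tv_mul_orth (by simp [single_dotProduct, Pi.single_apply, hih]),
        vmv_single h i (-(-r)) 1 1 (-(-r)) (by ring),
        vmv_single h j (-(1 + r * m)) 1 1 (-(1 + r * m)) (by ring),
        add_assoc, ← vmv_add_right, hneg2, vmv_neg_right, ← sub_eq_add_neg]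
    rw [hPval, hQval, hPival, hQival]
    have hXX : vecMulVec (Pi.single i (a + a * r * m) + Pi.single j (a * r))
          (Pi.single h (1 : A))
        * vecMulVec (Pi.single i (a + a * r * m) + Pi.single j (a * r))
          (Pi.single h (1 : A)) = 0 := by
      rw [vmv_mul_vmv]
      have : (Pi.single h (1 : A) : Fin n → A)
          ⬝ᵥ (Pi.single i (a + a * r * m) + Pi.single j (a * r)) = 0 := by
        simp [single_dotProduct, Pi.single_apply, hhi, hhj]
      rw [this, zero_smul]
    have hYY : vecMulVec (Pi.single h (1 : A))
          (Pi.single j (1 + r * m) + Pi.single i (-r))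
        * vecMulVec (Pi.single h (1 : A)) (Pi.single j (1 + r * m) + Pi.single i (-r))
        = 0 := by
      rw [vmv_mul_vmv]
      have : (Pi.single j (1 + r * m) + Pi.single i (-r) : Fin n → A)
          ⬝ᵥ (Pi.single h (1 : A)) = 0 := by
        simp [dotProduct_single, Pi.single_apply, hjh, hih]
      rw [this, zero_smul]
    have hYX : vecMulVec (Pi.single h (1 : A))
          (Pi.single j (1 + r * m) + Pi.single i (-r))
        * vecMulVec (Pi.single i (a + a * r * m) + Pi.single j (a * r))
            (Pi.single h (1 : A)) = 0 := by
      rw [vmv_mul_vmv]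
      have : (Pi.single j (1 + r * m) + Pi.single i (-r) : Fin n → A)
          ⬝ᵥ (Pi.single i (a + a * r * m) + Pi.single j (a * r)) = 0 := by
        simp [add_dotProduct, dotProduct_add, single_dotProduct, Pi.single_apply,
          hij, hij.symm]
        ring
      rw [this, zero_smul]
    rw [comm4 _ _ hXX hYY hYX, vmv_mul_vmv]
    have hdot : (Pi.single h (1 : A) : Fin n → A) ⬝ᵥ (Pi.single h 1) = 1 := by
      simp [single_dotProduct]
    rw [hdot, one_smul]
    have hv1 : (Pi.single i a + Pi.single j (a * r) + Pi.single i (a * r * m) : Fin n → A)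
        = Pi.single i (a + a * r * m) + Pi.single j (a * r) := by
      ext p
      simp only [Pi.add_apply, Pi.single_apply]
      split_ifs <;> ring
    have hv2 : (Pi.single j 1 + Pi.single i (-r) + Pi.single j (-r * -m) : Fin n → A)
        = Pi.single j (1 + r * m) + Pi.single i (-r) := by
      ext p
      simp only [Pi.add_apply, Pi.single_apply]
      split_ifs <;> ring
    rw [hv1, hv2, tv]
  rw [key]
  have ha1 : a + a * r * m ∈ q :=
    q.add_mem ha (Ideal.mul_mem_right m q (Ideal.mul_mem_right r q ha))
  have ha2 : a * r ∈ q := Ideal.mul_mem_right r q ha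
  have hQinv : elem A h i hhi (-(-r)) * elem A h j hhj (-(1 + r * m))
      = (elem A h j hhj (1 + r * m) * elem A h i hhi (-r))⁻¹ := by
    rw [_root_.mul_inv_rev, elem_inv, elem_inv]
  rw [hQinv]
  have grp : (elem A i h hih (a + a * r * m) * elem A j h hjh (a * r))
        * (elem A h j hhj (1 + r * m) * elem A h i hhi (-r))
        * (elem A j h hjh (-(a * r)) * elem A i h hih (-(a + a * r * m)))
        * (elem A h j hhj (1 + r * m) * elem A h i hhi (-r))⁻¹
      = (elem A i h hih (a + a * r * m) * elem A j h hjh (a * r))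
        * (((elem A h j hhj (1 + r * m) * elem A h i hhi (-r))
            * elem A j h hjh (-(a * r))
            * (elem A h j hhj (1 + r * m) * elem A h i hhi (-r))⁻¹)
          * ((elem A h j hhj (1 + r * m) * elem A h i hhi (-r))
            * elem A i h hih (-(a + a * r * m))
            * (elem A h j hhj (1 + r * m) * elem A h i hhi (-r))⁻¹)) := by
    group
  rw [grp]
  refine mul_mem (mul_mem (elem_mem_H ha1) (elem_mem_H ha2)) (mul_mem ?_ ?_)
  · -- Q E₁ Q⁻¹
    have e1 : (elem A h j hhj (1 + r * m) * elem A h i hhi (-r))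
          * elem A j h hjh (-(a * r))
          * (elem A h j hhj (1 + r * m) * elem A h i hhi (-r))⁻¹
        = elem A h j hhj (1 + r * m)
          * (elem A h i hhi (-r) * elem A j h hjh (-(a * r)) * (elem A h i hhi (-r))⁻¹)
          * (elem A h j hhj (1 + r * m))⁻¹ := by
      group
    rw [e1, conj1 h i j hhi hjh hji (-(a * r)) (-r)]
    have e2 : elem A h j hhj (1 + r * m)
          * (elem A j h hjh (-(a * r)) * elem A j i hji (-(a * r) * - -r))
          * (elem A h j hhj (1 + r * m))⁻¹
        = (elem A h j hhj (1 + r * m) * elem A j h hjh (-(a * r))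
            * (elem A h j hhj (1 + r * m))⁻¹)
          * (elem A h j hhj (1 + r * m) * elem A j i hji (-(a * r) * - -r)
            * (elem A h j hhj (1 + r * m))⁻¹) := by
      group
    rw [e2]
    refine mul_mem ?_ ?_
    · rw [elem_eq_zel j h hjh (-(a * r))]
      exact conj_zel_mem_of_ne hhj hjh (fun hc => hhj hc.1) (q.neg_mem ha2) 0 _
    · rw [elem_eq_zel j i hji (-(a * r) * - -r)]
      exact conj_zel_mem_of_ne hhj hji (fun hc => hhj hc.1)
        (Ideal.mul_mem_right _ q (q.neg_mem ha2)) 0 _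
  · -- Q E₂ Q⁻¹
    have e3 : (elem A h j hhj (1 + r * m) * elem A h i hhi (-r))
          * elem A i h hih (-(a + a * r * m))
          * (elem A h j hhj (1 + r * m) * elem A h i hhi (-r))⁻¹
        = elem A h j hhj (1 + r * m)
          * (elem A h i hhi (-r) * elem A i h hih (-(a + a * r * m))
            * (elem A h i hhi (-r))⁻¹)
          * (elem A h j hhj (1 + r * m))⁻¹ := by
      group
    have e4 : elem A h i hhi (-r) * elem A i h hih (-(a + a * r * m))
          * (elem A h i hhi (-r))⁻¹ = zel A n i h hih (-(a + a * r * m)) (-r) := rfl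
    rw [e3, e4]
    exact conj_zel_mem_of_ne hhj hih (fun hc => hhi hc.1) (q.neg_mem ha1) (-r) _

lemma conj_H (hn : 3 ≤ n) {k l : Fin n} (hkl : k ≠ l) (m : A) {x : SL n A}
    (hx : x ∈ Hgrp A n q) :
    elem A k l hkl m * x * (elem A k l hkl m)⁻¹ ∈ Hgrp A n q := by
  induction hx using Subgroup.closure_induction with
  | mem y hy =>
      obtain ⟨i, j, hij, a, ha, r, rfl⟩ := hy
      by_cases hc : k = i ∧ l = j
      · obtain ⟨hk, hl⟩ := hc
        subst hk; subst hl
        have hrw : elem A k l hkl m = elem A k l hij m := rfl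
        rw [hrw]
        exact conj_zel_mem_same hn hij ha r m
      · exact conj_zel_mem_of_ne hkl hij hc ha r m
  | one =>
      have e : elem A k l hkl m * 1 * (elem A k l hkl m)⁻¹ = 1 := by group
      rw [e]; exact one_mem _
  | mul y z hy hz hy' hz' =>
      have e : elem A k l hkl m * (y * z) * (elem A k l hkl m)⁻¹
          = (elem A k l hkl m * y * (elem A k l hkl m)⁻¹)
            * (elem A k l hkl m * z * (elem A k l hkl m)⁻¹) := by group
      rw [e]; exact mul_mem hy' hz'
  | inv y hy hy' =>
      have e : elem A k l hkl m * y⁻¹ * (elem A k l hkl m)⁻¹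
          = (elem A k l hkl m * y * (elem A k l hkl m)⁻¹)⁻¹ := by group
      rw [e]; exact inv_mem hy'

lemma egrpAbs_le_normalizer (hn : 3 ≤ n) :
    EgrpAbs A n ≤ Subgroup.normalizer (Hgrp A n q : Set (SL n A)) := by
  rw [EgrpAbs]
  refine (Subgroup.closure_le _).2 ?_
  rintro x ⟨i, j, hij, a, rfl⟩
  rw [SetLike.mem_coe, Subgroup.mem_normalizer_iff]
  intro y
  constructor
  · intro hy; exact conj_H hn hij a hy
  · intro hy
    have h2 := conj_H hn hij (-a) hy
    rw [← elem_inv] at h2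
    have e : (elem A i j hij a)⁻¹ * (elem A i j hij a * y * (elem A i j hij a)⁻¹)
        * ((elem A i j hij a)⁻¹)⁻¹ = y := by group
    rwa [e] at h2

lemma Egrp_le_Hgrp (hn : 3 ≤ n) (q : Ideal A) : Egrp A n q ≤ Hgrp A n q := by
  rw [Egrp]
  refine (Subgroup.closure_le _).2 ?_
  rintro x ⟨g, hg, i, j, hij, a, ha, rfl⟩
  exact (Subgroup.mem_normalizer_iff.1 (egrpAbs_le_normalizer hn hg) _).1 (elem_mem_H ha)

lemma zel_sq_mem_F (hn : 3 ≤ n) {i j : Fin n} (hij : i ≠ j) {b c : A} (hb : b ∈ π)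
    (hc : c ∈ π) (r : A) : zel A n i j hij (b * c) r ∈ Fgrp A n π := by
  obtain ⟨h, hhi, hhj⟩ := exists_third hn i j
  have hih : i ≠ h := hhi.symm
  have hjh : j ≠ h := hhj.symm
  have key : zel A n i j hij (b * c) r
      = (elem A i h hih b * elem A j h hjh (b * r))
        * (elem A h j hhj c * elem A h i hhi (c * -r))
        * (elem A j h hjh (-(b * r)) * elem A i h hih (-b))
        * (elem A h i hhi (-(c * -r)) * elem A h j hhj (-c)) := by
    apply Subtype.ext
    rw [zel_val]
    have hcoe : ((elem A i h hih b * elem A j h hjh (b * r))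
        * (elem A h j hhj c * elem A h i hhi (c * -r))
        * (elem A j h hjh (-(b * r)) * elem A i h hih (-b))
        * (elem A h i hhi (-(c * -r)) * elem A h j hhj (-c))).val
        = ((elem A i h hih b).val * (elem A j h hjh (b * r)).val)
          * ((elem A h j hhj c).val * (elem A h i hhi (c * -r)).val)
          * ((elem A j h hjh (-(b * r))).val * (elem A i h hih (-b)).val)
          * ((elem A h i hhi (-(c * -r))).val * (elem A h j hhj (-c)).val) := rfl
    rw [hcoe]
    have hPval : (elem A i h hih b).val * (elem A j h hjh (b * r)).val
        = 1 + vecMulVec (Pi.single i b + Pi.single j (b * r)) (Pi.single h (1 : A)) := by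
      rw [elem_val, elem_val,
        tv_mul_orth (by simp [single_dotProduct, Pi.single_apply, hhj]),
        vmv_add_left, add_assoc]
    have hQval : (elem A h j hhj c).val * (elem A h i hhi (c * -r)).val
        = 1 + vecMulVec (Pi.single h c) (Pi.single j 1 + Pi.single i (-r)) := by
      rw [elem_val, elem_val,
        tv_mul_orth (by simp [single_dotProduct, Pi.single_apply, hjh]),
        vmv_single h i (c * -r) 1 c (-r) (by ring),
        vmv_add_right, add_assoc]
    have hneg1 : (Pi.single j (-(b * r)) + Pi.single i (-b) : Fin n → A)
        = -(Pi.single i b + Pi.single j (b * r)) := by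
      ext p
      simp only [Pi.add_apply, Pi.neg_apply, Pi.single_apply]
      split_ifs <;> ring
    have hPival : (elem A j h hjh (-(b * r))).val * (elem A i h hih (-b)).val
        = 1 - vecMulVec (Pi.single i b + Pi.single j (b * r)) (Pi.single h (1 : A)) := by
      rw [elem_val, elem_val,
        tv_mul_orth (by simp [single_dotProduct, Pi.single_apply, hhi]),
        add_assoc, ← vmv_add_left, hneg1, vmv_neg_left, ← sub_eq_add_neg]
    have hmat : vecMulVec (Pi.single h (-(c * -r))) (Pi.single i (1 : A))
          + vecMulVec (Pi.single h (-c)) (Pi.single j 1)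
        = -vecMulVec (Pi.single h c) (Pi.single j 1 + Pi.single i (-r)) := by
      ext p p'
      simp only [Matrix.add_apply, Matrix.neg_apply, vecMulVec_apply, Pi.add_apply,
        Pi.single_apply]
      split_ifs <;> ring
    have hQival : (elem A h i hhi (-(c * -r))).val * (elem A h j hhj (-c)).val
        = 1 - vecMulVec (Pi.single h c) (Pi.single j 1 + Pi.single i (-r)) := by
      rw [elem_val, elem_val,
        tv_mul_orth (by simp [single_dotProduct, Pi.single_apply, hih]),
        add_assoc, hmat, ← sub_eq_add_neg]
    rw [hPval, hQval, hPival, hQival]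
    have hXX : vecMulVec (Pi.single i b + Pi.single j (b * r)) (Pi.single h (1 : A))
        * vecMulVec (Pi.single i b + Pi.single j (b * r)) (Pi.single h (1 : A)) = 0 := by
      rw [vmv_mul_vmv]
      have hz : (Pi.single h (1 : A) : Fin n → A)
          ⬝ᵥ (Pi.single i b + Pi.single j (b * r)) = 0 := by
        simp [single_dotProduct, Pi.single_apply, hhi, hhj]
      rw [hz, zero_smul]
    have hYY : vecMulVec (Pi.single h c) (Pi.single j 1 + Pi.single i (-r))
        * vecMulVec (Pi.single h c) (Pi.single j 1 + Pi.single i (-r)) = 0 := by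
      rw [vmv_mul_vmv]
      have hz : (Pi.single j (1 : A) + Pi.single i (-r) : Fin n → A)
          ⬝ᵥ (Pi.single h c) = 0 := by
        simp [dotProduct_single, Pi.single_apply, hjh, hih]
      rw [hz, zero_smul]
    have hYX : vecMulVec (Pi.single h c) (Pi.single j 1 + Pi.single i (-r))
        * vecMulVec (Pi.single i b + Pi.single j (b * r)) (Pi.single h (1 : A)) = 0 := by
      rw [vmv_mul_vmv, dot_vv_uu i j hij b r, zero_smul]
    rw [comm4 _ _ hXX hYY hYX, vmv_mul_vmv]
    have hdot : (Pi.single h (1 : A) : Fin n → A) ⬝ᵥ (Pi.single h c) = c := by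
      simp [single_dotProduct]
    have hsm : (c • (Pi.single i b + Pi.single j (b * r)) : Fin n → A)
        = Pi.single i (b * c) + Pi.single j (b * c * r) := by
      ext p
      simp only [Pi.smul_apply, Pi.add_apply, Pi.single_apply, smul_eq_mul]
      split_ifs <;> ring
    rw [hdot, ← vmv_smul_left, hsm, tv]
  rw [key]
  exact mul_mem (mul_mem (mul_mem
    (mul_mem (elem_mem_F hb) (elem_mem_F (Ideal.mul_mem_right r _ hb)))
    (mul_mem (elem_mem_F hc) (elem_mem_F (Ideal.mul_mem_right _ _ hc))))
    (mul_mem (elem_mem_F (neg_mem (Ideal.mul_mem_right r _ hb)))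
      (elem_mem_F (neg_mem hb))))
    (mul_mem (elem_mem_F (neg_mem (Ideal.mul_mem_right _ _ hc)))
      (elem_mem_F (neg_mem hc)))

lemma Hgrp_le_Fgrp (hn : 3 ≤ n) (π : Ideal A) : Hgrp A n (π ^ 2) ≤ Fgrp A n π := by
  rw [Hgrp]
  refine (Subgroup.closure_le _).2 ?_
  rintro x ⟨i, j, hij, a, ha, r, rfl⟩
  rw [pow_two] at ha
  exact Submodule.mul_induction_on ha
    (fun b hb c hc => zel_sq_mem_F hn hij hb hc r)
    (fun y z hy hz => by rw [zel_add]; exact mul_mem hy hz)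

end TitsProof

/-- **Tits' theorem.** For a commutative unital ring `A`, an ideal `π` of `A` and `n ≥ 3`,
the normal elementary subgroup `E_n(π²)` is contained in the true elementary subgroup
`F_n(π)`. -/
theorem tits_theorem (A : Type) [CommRing A] (π : Ideal A) (n : ℕ) (hn : 3 ≤ n) :
    Egrp A n (π ^ 2) ≤ Fgrp A n π :=
  le_trans (TitsProof.Egrp_le_Hgrp hn (π ^ 2)) (TitsProof.Hgrp_le_Fgrp hn π)
end

section
/- Let A be a commutative unital ring and let x, y, z₁, z₂ ∈ A. Then in SL_3(A) the following commutator identity holds: the block-diagonal matrix diag(S(x,y;z₁z₂), 1), i.e. [[1+xyz₁z₂, −x²z₁z₂, 0],[y²z₁z₂, 1−xyz₁z₂, 0],[0,0,1]], equals the commutator [g, h] = g⁻¹h⁻¹gh where g = [[1,0,xz₁],[0,1,yz₁],[0,0,1]] and h = [[1,0,0],[0,1,0],[yz₂,−xz₂,1]]. -/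
open Matrix

/-- The matrix `diag(S(x,y;z₁z₂), 1) ∈ SL_3(A)`. -/
def suspSymbol3 (A : Type) [CommRing A] (x y z₁ z₂ : A) : SL 3 A :=
  ⟨!![1 + x * y * (z₁ * z₂), -(x ^ 2 * (z₁ * z₂)), 0;
      y ^ 2 * (z₁ * z₂), 1 - x * y * (z₁ * z₂), 0;
      0, 0, 1], by simp [Matrix.det_fin_three, Matrix.vecHead, Matrix.vecTail]; ring⟩

/-- The matrix `g = [[1,0,xz₁],[0,1,yz₁],[0,0,1]] ∈ SL_3(A)`. -/
def upperG (A : Type) [CommRing A] (x y z₁ : A) : SL 3 A :=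
  ⟨!![1, 0, x * z₁; 0, 1, y * z₁; 0, 0, 1], by
    simp [Matrix.det_fin_three, Matrix.vecHead, Matrix.vecTail]⟩

/-- The matrix `h = [[1,0,0],[0,1,0],[yz₂,−xz₂,1]] ∈ SL_3(A)`. -/
def lowerH (A : Type) [CommRing A] (x y z₂ : A) : SL 3 A :=
  ⟨!![1, 0, 0; 0, 1, 0; y * z₂, -(x * z₂), 1], by
    simp [Matrix.det_fin_three, Matrix.vecHead, Matrix.vecTail]⟩

/-- In `SL_3(A)`, the matrix `diag(S(x,y;z₁z₂), 1)` equals the commutator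
`[g,h] = g⁻¹h⁻¹gh` of `g = [[1,0,xz₁],[0,1,yz₁],[0,0,1]]` and
`h = [[1,0,0],[0,1,0],[yz₂,−xz₂,1]]`. -/
theorem commutator_identity (A : Type) [CommRing A] (x y z₁ z₂ : A) :
    suspSymbol3 A x y z₁ z₂ =
      (upperG A x y z₁)⁻¹ * (lowerH A x y z₂)⁻¹ * upperG A x y z₁ * lowerH A x y z₂ := by
  have key : lowerH A x y z₂ * upperG A x y z₁ * suspSymbol3 A x y z₁ z₂ =
      upperG A x y z₁ * lowerH A x y z₂ := by
    ext i j
    rw [Matrix.SpecialLinearGroup.coe_mul, Matrix.SpecialLinearGroup.coe_mul, Matrix.SpecialLinearGroup.coe_mul]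
    fin_cases i <;> fin_cases j <;>
      simp [lowerH, upperG, suspSymbol3, Matrix.mul_apply, Fin.sum_univ_three] <;> ring
  calc suspSymbol3 A x y z₁ z₂
      = (lowerH A x y z₂ * upperG A x y z₁)⁻¹ *
        (lowerH A x y z₂ * upperG A x y z₁ * suspSymbol3 A x y z₁ z₂) := by group
    _ = (upperG A x y z₁)⁻¹ * (lowerH A x y z₂)⁻¹ * upperG A x y z₁ * lowerH A x y z₂ := by
        rw [key]; group
end

section
/- Let A be a commutative unital ring, let π be an ideal of A, and let n ≥ 3. For all x, y ∈ A, all z ∈ π, and all indices k ≠ l, the (k,l)-suspension of the symbol S(x,y;z) lies in the normal elementary subgroup E_n(π). -/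
open Matrix

lemma vmv_mul {n : ℕ} {A : Type} [CommRing A] (a b c d : Fin n → A) :
    vecMulVec a b * vecMulVec c d = (b ⬝ᵥ c) • vecMulVec a d := by
  ext i j
  simp only [Matrix.mul_apply, vecMulVec_apply, Matrix.smul_apply, smul_eq_mul, dotProduct,
    Finset.sum_mul]
  apply Finset.sum_congr rfl
  intros; ring

lemma key_identity {n : ℕ} {A : Type} [CommRing A] (v w em : Fin n → A)
    (h1 : w ⬝ᵥ v = 0) (h2 : em ⬝ᵥ v = 0) (h3 : w ⬝ᵥ em = 0) (h4 : em ⬝ᵥ em = 1) :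
    (1 + vecMulVec v em) * (1 + vecMulVec em w) * (1 + vecMulVec (-v) em) =
      (1 + vecMulVec v w) * (1 + vecMulVec em w) := by
  have hneg : vecMulVec (-v) em = -vecMulVec v em := by
    ext i j; simp [vecMulVec_apply]
  set a := vecMulVec v em with ha
  set b := vecMulVec em w with hb
  set c := vecMulVec v w with hc
  have haa : a * a = 0 := by rw [ha, vmv_mul, h2, zero_smul]
  have hab : a * b = c := by rw [ha, hb, vmv_mul, h4, one_smul, hc]
  have hba : b * a = 0 := by rw [ha, hb, vmv_mul, h1, zero_smul]
  have hca : c * a = 0 := by rw [ha, hc, vmv_mul, h1, zero_smul]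
  have hcb : c * b = 0 := by rw [hb, hc, vmv_mul, h3, zero_smul]
  rw [hneg]
  have expand : (1 + a) * (1 + b) * (1 + -a) =
      1 + a + b + a*b + (-a) + (a * -a) + (b * -a) + (a*b*(-a)) := by noncomm_ring
  rw [expand]
  have expand2 : (1 + c) * (1 + b) = 1 + c + b + c*b := by noncomm_ring
  rw [expand2, hab, hcb]
  simp only [mul_neg, haa, hca, hba, neg_zero, add_zero]
  abel

lemma trans_pair {n : ℕ} {A : Type} [CommRing A] (k l m : Fin n) (hkl : k ≠ l) (hml : m ≠ l) (a b : A) :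
    transvection k m a * transvection l m b =
      1 + vecMulVec (fun p => if p = k then a else if p = l then b else 0)
        (fun q => if q = m then (1:A) else 0) := by
  have h0 : Matrix.single k m a * Matrix.single l m b = 0 :=
    Matrix.single_mul_single_of_ne (c := a) k m l hml b
  rw [transvection, transvection, add_mul, mul_add, mul_add, one_mul, mul_one, one_mul, h0,
    add_zero]
  clear h0
  ext p q
  simp only [Matrix.add_apply, Matrix.one_apply, Matrix.single, of_apply, vecMulVec_apply]
  split_ifs <;> first
    | (exfalso; omega)
    | (subst_vars; simp_all)

lemma trans_pair' {n : ℕ} {A : Type} [CommRing A] (k l m : Fin n) (hkl : k ≠ l) (hkm : k ≠ m) (a b : A) :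
    transvection m k a * transvection m l b =
      1 + vecMulVec (fun p => if p = m then (1:A) else 0)
        (fun q => if q = k then a else if q = l then b else 0) := by
  have h0 : Matrix.single m k a * Matrix.single m l b = 0 :=
    Matrix.single_mul_single_of_ne (c := a) m k m hkm b
  rw [transvection, transvection, add_mul, mul_add, mul_add, one_mul, mul_one, one_mul, h0,
    add_zero]
  clear h0
  ext p q
  simp only [Matrix.add_apply, Matrix.one_apply, Matrix.single, of_apply, vecMulVec_apply]
  split_ifs <;> first
    | (exfalso; omega)
    | (subst_vars; simp_all)

open Matrix

/-- The `(k,l)`-suspension of the symbol `S(x,y;z)`: the matrix obtained from the identity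
matrix `1_n` by grafting `1+xyz` in the `(k,k)`-entry, `-x²z` in the `(k,l)`-entry,
`y²z` in the `(l,k)`-entry and `1-xyz` in the `(l,l)`-entry. -/
def suspMat (A : Type) [CommRing A] {n : ℕ} (k l : Fin n) (x y z : A) :
    Matrix (Fin n) (Fin n) A := fun p q =>
  if p = k ∧ q = k then 1 + x * y * z
  else if p = k ∧ q = l then -(x ^ 2 * z)
  else if p = l ∧ q = k then y ^ 2 * z
  else if p = l ∧ q = l then 1 - x * y * z
  else if p = q then 1 else 0

lemma suspMat_eq (A : Type) [CommRing A] {n : ℕ} (k l : Fin n) (hkl : k ≠ l) (x y z : A) :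
    suspMat A k l x y z =
      1 + Matrix.replicateCol (Fin 1) (fun p => if p = k then x * z else if p = l then y * z else 0) *
        Matrix.replicateRow (Fin 1) (fun q => if q = k then y else if q = l then -x else 0) := by
  ext p q
  simp only [suspMat, Matrix.add_apply, Matrix.mul_apply, Matrix.replicateCol_apply, Matrix.replicateRow_apply,
    Finset.univ_unique, Finset.sum_singleton, Matrix.one_apply]
  split_ifs <;> simp_all <;> ring

lemma suspMat_det (A : Type) [CommRing A] {n : ℕ} (k l : Fin n) (hkl : k ≠ l) (x y z : A) :
    (suspMat A k l x y z).det = 1 := by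
  rw [suspMat_eq A k l hkl]
  refine (Matrix.det_one_add_replicateCol_mul_replicateRow _ _).trans ?_
  have : (fun q => if q = k then y else if q = l then -x else 0) ⬝ᵥ
      (fun p => if p = k then x * z else if p = l then y * z else 0) = 0 := by
    unfold dotProduct
    have h : ∀ q : Fin n, (if q = k then y else if q = l then -x else 0) *
        (if q = k then x * z else if q = l then y * z else 0)
        = (if q = k then y * (x * z) else 0) + (if q = l then -x * (y * z) else 0) := by
      intro q
      split_ifs with h1 h2 <;> simp_all
    simp only [h, Finset.sum_add_distrib, Finset.sum_ite_eq', Finset.mem_univ, if_true]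
    ring
  rw [this, add_zero]

/-- The `(k,l)`-suspension of the symbol `S(x,y;z)` as an element of `SL_n(A)` (for `k ≠ l`). -/
def suspS (A : Type) [CommRing A] {n : ℕ} (k l : Fin n) (hkl : k ≠ l) (x y z : A) : SL n A :=
  ⟨suspMat A k l x y z, suspMat_det A k l hkl x y z⟩

/-- For `n ≥ 3`, `x, y ∈ A`, `z ∈ π` and `k ≠ l`, the `(k,l)`-suspension of the symbol
`S(x,y;z)` lies in the normal elementary subgroup `E_n(π)`. -/
theorem suspension_mem_normalElementary (A : Type) [CommRing A] (π : Ideal A) (n : ℕ)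
    (hn : 3 ≤ n) (x y z : A) (hz : z ∈ π) (k l : Fin n) (hkl : k ≠ l) :
    suspS A k l hkl x y z ∈ Egrp A n π := by
  -- choose an auxiliary index m distinct from k and l
  have hm : ∃ m : Fin n, m ≠ k ∧ m ≠ l := by
    by_contra hcon
    push_neg at hcon
    have hsub : (Finset.univ : Finset (Fin n)) ⊆ {k, l} := by
      intro p _
      simp only [Finset.mem_insert, Finset.mem_singleton]
      by_cases h : p = k
      · exact Or.inl h
      · exact Or.inr (hcon p h)
    have hcard := Finset.card_le_card hsub
    have h2 : ({k, l} : Finset (Fin n)).card ≤ 2 := by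
      refine le_trans (Finset.card_insert_le _ _) ?_
      simp
    simp only [Finset.card_univ, Fintype.card_fin] at hcard
    omega
  obtain ⟨m, hmk, hml⟩ := hm
  -- the three vectors
  set v : Fin n → A := fun p => if p = k then x * z else if p = l then y * z else 0 with hv
  set w : Fin n → A := fun q => if q = k then y else if q = l then -x else 0 with hw
  set em : Fin n → A := fun p => if p = m then (1 : A) else 0 with hem
  -- dot product relations
  have h1 : w ⬝ᵥ v = 0 := by
    simp only [dotProduct, hv, hw]
    have h : ∀ q : Fin n, (if q = k then y else if q = l then -x else 0) *
        (if q = k then x * z else if q = l then y * z else 0)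
        = (if q = k then y * (x * z) else 0) + (if q = l then -x * (y * z) else 0) := by
      intro q
      split_ifs with hh1 hh2 <;> simp_all
    simp only [h, Finset.sum_add_distrib, Finset.sum_ite_eq', Finset.mem_univ, if_true]
    ring
  have h2 : em ⬝ᵥ v = 0 := by
    simp only [dotProduct, hv, hem, ite_mul, one_mul, zero_mul,
      Finset.sum_ite_eq', Finset.mem_univ, if_true]
    simp [hmk, hml]
  have h3 : w ⬝ᵥ em = 0 := by
    simp only [dotProduct, hw, hem, mul_ite, mul_one, mul_zero,
      Finset.sum_ite_eq', Finset.mem_univ, if_true]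
    simp [hmk, hml]
  have h4 : em ⬝ᵥ em = 1 := by
    simp only [dotProduct, hem, ite_mul, one_mul, zero_mul,
      Finset.sum_ite_eq', Finset.mem_univ, if_true]
  -- the elementary matrices
  set g1 : SL n A := elem A k m hmk.symm (x * z) with hg1
  set g2 : SL n A := elem A l m hml.symm (y * z) with hg2
  set q1 : SL n A := elem A m k hmk y with hq1
  set q2 : SL n A := elem A m l hml (-x) with hq2
  set g3 : SL n A := elem A l m hml.symm (-(y * z)) with hg3
  set g4 : SL n A := elem A k m hmk.symm (-(x * z)) with hg4
  -- matrix level facts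
  have hP : (g1 : Matrix (Fin n) (Fin n) A) * (g2 : Matrix (Fin n) (Fin n) A)
      = 1 + vecMulVec v em := trans_pair k l m hkl hml (x * z) (y * z)
  have hQ : (q1 : Matrix (Fin n) (Fin n) A) * (q2 : Matrix (Fin n) (Fin n) A)
      = 1 + vecMulVec em w := trans_pair' k l m hkl hmk.symm y (-x)
  have hvneg : (fun p => if p = l then -(y * z) else if p = k then -(x * z) else 0) = -v := by
    funext p
    simp only [hv, Pi.neg_apply]
    split_ifs <;> first
      | (exfalso; exact hkl (by omega))
      | simp
  have hP' : (g3 : Matrix (Fin n) (Fin n) A) * (g4 : Matrix (Fin n) (Fin n) A)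
      = 1 + vecMulVec (-v) em := by
    have := trans_pair l k m hkl.symm hmk (-(y * z)) (-(x * z))
    rw [hvneg] at this
    exact this
  -- the main group identity
  have hmain : suspS A k l hkl x y z * (q1 * q2) = (g1 * g2) * (q1 * q2) * (g3 * g4) := by
    apply Subtype.ext
    simp only [Matrix.SpecialLinearGroup.coe_mul]
    have hsusp : (suspS A k l hkl x y z : Matrix (Fin n) (Fin n) A)
        = 1 + vecMulVec v w := by
      show suspMat A k l x y z = _
      rw [suspMat_eq A k l hkl, vecMulVec_eq (Fin 1)]
      rfl
    rw [hsusp, hP, hQ, hP']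
    exact (key_identity v w em h1 h2 h3 h4).symm
  have h5 : suspS A k l hkl x y z
      = (g1 * g2) * ((q1 * q2) * (g3 * g4) * (q1 * q2)⁻¹) := by
    calc suspS A k l hkl x y z
        = suspS A k l hkl x y z * (q1 * q2) * (q1 * q2)⁻¹ := by group
      _ = (g1 * g2) * (q1 * q2) * (g3 * g4) * (q1 * q2)⁻¹ := by rw [hmain]
      _ = (g1 * g2) * ((q1 * q2) * (g3 * g4) * (q1 * q2)⁻¹) := by group
  -- membership
  have memgen : ∀ (g : SL n A), g ∈ EgrpAbs A n → ∀ (i j : Fin n) (hij : i ≠ j) (a : A),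
      a ∈ π → g * elem A i j hij a * g⁻¹ ∈ Egrp A n π := by
    intro g hg i j hij a hA
    exact Subgroup.subset_closure ⟨g, hg, i, j, hij, a, hA, rfl⟩
  have he : ∀ (i j : Fin n) (hij : i ≠ j) (a : A), a ∈ π →
      elem A i j hij a ∈ Egrp A n π := by
    intro i j hij a hA
    have := memgen 1 (one_mem _) i j hij a hA
    simpa using this
  have hQmem : q1 * q2 ∈ EgrpAbs A n := by
    refine mul_mem ?_ ?_
    · exact Subgroup.subset_closure ⟨m, k, hmk, y, hq1⟩
    · exact Subgroup.subset_closure ⟨m, l, hml, -x, hq2⟩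
  have hconj : (q1 * q2) * (g3 * g4) * (q1 * q2)⁻¹
      = ((q1 * q2) * g3 * (q1 * q2)⁻¹) * ((q1 * q2) * g4 * (q1 * q2)⁻¹) := by group
  rw [h5, hconj]
  have hxz : x * z ∈ π := π.mul_mem_left x hz
  have hyz : y * z ∈ π := π.mul_mem_left y hz
  refine mul_mem (mul_mem ?_ ?_) (mul_mem ?_ ?_)
  · exact he k m hmk.symm (x * z) hxz
  · exact he l m hml.symm (y * z) hyz
  · exact memgen (q1 * q2) hQmem l m hml.symm (-(y * z)) (π.neg_mem hyz)
  · exact memgen (q1 * q2) hQmem k m hmk.symm (-(x * z)) (π.neg_mem hxz)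
end

section
/- Let A be a commutative unital ring, let π be an ideal of A, and let n ≥ 3. For every a ∈ π² (the product ideal) and all indices i ≠ j, the elementary matrix e_{ij}(a) lies in the commutator subgroup [F_n(π), F_n(π)]. -/
open Matrix
open scoped commutatorElement

lemma elem_mul_elem (A : Type) [CommRing A] {n : ℕ} (i j : Fin n) (hij : i ≠ j) (a b : A) :
    elem A i j hij a * elem A i j hij b = elem A i j hij (a + b) := by
  apply Subtype.ext
  exact Matrix.transvection_mul_transvection_same i j hij a b

lemma elem_inv (A : Type) [CommRing A] {n : ℕ} (i j : Fin n) (hij : i ≠ j) (a : A) :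
    (elem A i j hij a)⁻¹ = elem A i j hij (-a) := by
  apply inv_eq_of_mul_eq_one_right
  rw [elem_mul_elem, add_neg_cancel]
  apply Subtype.ext
  simp [elem, Matrix.transvection]

lemma sbm_neg (A : Type) [CommRing A] {n : ℕ} (i j : Fin n) (c : A) :
    Matrix.single i j (-c) = -Matrix.single i j c := by
  ext a b
  simp [Matrix.single]
  split <;> simp

lemma sbm_mul_ne (A : Type) [CommRing A] {n : ℕ} {i j k l : Fin n} (h : j ≠ k) (c d : A) :
    Matrix.single i j c * Matrix.single k l d = 0 :=
  Matrix.single_mul_single_of_ne c _ _ _ h _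

lemma elem_comm (A : Type) [CommRing A] {n : ℕ} (i j k : Fin n) (hik : i ≠ k) (hkj : k ≠ j)
    (hij : i ≠ j) (x y : A) :
    ⁅elem A i k hik x, elem A k j hkj y⁆ = elem A i j hij (x * y) := by
  rw [commutatorElement_def, elem_inv, elem_inv]
  apply Subtype.ext
  show Matrix.transvection i k x * Matrix.transvection k j y * Matrix.transvection i k (-x) *
      Matrix.transvection k j (-y) = Matrix.transvection i j (x * y)
  simp only [Matrix.transvection, Matrix.add_mul, Matrix.mul_add, Matrix.one_mul, Matrix.mul_one,
    Matrix.smul_mul, Matrix.mul_smul, Matrix.single_mul_single_same,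
    sbm_mul_ne A (Ne.symm hik), sbm_mul_ne A hkj,
    sbm_mul_ne A (Ne.symm hij), sbm_mul_ne A (Ne.symm hkj),
    Matrix.zero_mul, Matrix.mul_zero, add_zero, zero_add, mul_neg, neg_mul, neg_neg, sbm_neg]
  abel

/-- For `n ≥ 3`, `a ∈ π²` and `i ≠ j`, the elementary matrix `e_{ij}(a)` lies in the
commutator subgroup `[F_n(π), F_n(π)]`. -/
theorem elementary_mem_commutator (A : Type) [CommRing A] (π : Ideal A) (n : ℕ)
    (hn : 3 ≤ n) (a : A) (ha : a ∈ π ^ 2) (i j : Fin n) (hij : i ≠ j) :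
    elem A i j hij a ∈ ⁅Fgrp A n π, Fgrp A n π⁆ := by
  obtain ⟨k, hk⟩ : ∃ k : Fin n, k ∉ ({i, j} : Finset (Fin n)) := by
    by_contra h
    push_neg at h
    have h1 : (Finset.univ : Finset (Fin n)) ⊆ {i, j} := fun x _ => h x
    have := Finset.card_le_card h1
    have h2 : ({i, j} : Finset (Fin n)).card ≤ 2 := Finset.card_insert_le _ _ |>.trans (by simp)
    simp [Finset.card_univ] at this
    omega
  simp only [Finset.mem_insert, Finset.mem_singleton, not_or] at hk
  obtain ⟨hki, hkj⟩ := hk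
  rw [sq] at ha
  refine Submodule.mul_induction_on ha (fun x hx y hy => ?_) (fun x y hx hy => ?_)
  · rw [← elem_comm A i j k (Ne.symm hki) hkj hij x y]
    apply Subgroup.commutator_mem_commutator
    · exact Subgroup.subset_closure ⟨i, k, Ne.symm hki, x, hx, rfl⟩
    · exact Subgroup.subset_closure ⟨k, j, hkj, y, hy, rfl⟩
  · rw [← elem_mul_elem]
    exact mul_mem hx hy
end

section
/- Let A be a commutative unital ring, let n ≥ 2, let g ∈ SL_n(A), let a ∈ A, and fix indices i ≠ j. Let v denote the i-th column of g⁻¹ and set c_{kl} = g_{jk}·g_{il} − g_{jl}·g_{ik} for k < l. Then g⁻¹·e_{ij}(a)·g = ∏_{k<l} (1_n + a·c_{kl} · v·(v_l·e_k − v_k·e_l)), where e_k denotes the k-th basic row vector and v·(v_l·e_k − v_k·e_l) is the n×n matrix obtained as the product of the column vector v with the row vector v_l·e_k − v_k·e_l (the factors in the product pairwise commute, so the product is independent of the ordering of the pairs (k,l)). -/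
open Matrix

/-- The factor indexed by the pair `p = (k,l)` in the Suslin factorization:
`1_n + a·c_{kl} · v·(v_l·e_k − v_k·e_l)`, where `v` is the `i`-th column of `g⁻¹`,
`c_{kl} = g_{jk}·g_{il} − g_{jl}·g_{ik}`, and `v·(v_l·e_k − v_k·e_l)` is the product of the
column vector `v` with the row vector `v_l·e_k − v_k·e_l`. -/
def suslinFactor (A : Type) [CommRing A] {n : ℕ} (g : SL n A) (a : A) (i j : Fin n)
    (p : Fin n × Fin n) : Matrix (Fin n) (Fin n) A :=
  1 + (a * ((g : Matrix (Fin n) (Fin n) A) j p.1 * (g : Matrix (Fin n) (Fin n) A) i p.2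
          - (g : Matrix (Fin n) (Fin n) A) j p.2 * (g : Matrix (Fin n) (Fin n) A) i p.1)) •
    Matrix.vecMulVec (fun s => ((g⁻¹ : SL n A) : Matrix (Fin n) (Fin n) A) s i)
      (fun s => (if s = p.1 then ((g⁻¹ : SL n A) : Matrix (Fin n) (Fin n) A) p.2 i else 0)
              - (if s = p.2 then ((g⁻¹ : SL n A) : Matrix (Fin n) (Fin n) A) p.1 i else 0))

section Aux

variable {A : Type} [CommRing A] {n : ℕ}

/-- The `i`-th column of `g⁻¹`. -/
def vv (g : SL n A) (i : Fin n) : Fin n → A :=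
  fun s => ((g⁻¹ : SL n A) : Matrix (Fin n) (Fin n) A) s i

/-- The row vector `v_{p.2}·e_{p.1} − v_{p.1}·e_{p.2}`. -/
def rr (g : SL n A) (i : Fin n) (p : Fin n × Fin n) : Fin n → A :=
  fun s => (if s = p.1 then vv g i p.2 else 0) - (if s = p.2 then vv g i p.1 else 0)

/-- The coefficient `c_{kl} = g_{jk}·g_{il} − g_{jl}·g_{ik}`. -/
def cc (g : SL n A) (i j : Fin n) (p : Fin n × Fin n) : A :=
  (g : Matrix (Fin n) (Fin n) A) j p.1 * (g : Matrix (Fin n) (Fin n) A) i p.2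
    - (g : Matrix (Fin n) (Fin n) A) j p.2 * (g : Matrix (Fin n) (Fin n) A) i p.1

lemma suslinFactor_eq (g : SL n A) (a : A) (i j : Fin n) (p : Fin n × Fin n) :
    suslinFactor A g a i j p =
      1 + (a * cc g i j p) • Matrix.vecMulVec (vv g i) (rr g i p) := rfl

lemma rr_dot (g : SL n A) (i : Fin n) (p : Fin n × Fin n) :
    ∑ u, rr g i p u * vv g i u = 0 := by
  simp only [rr, sub_mul, ite_mul, zero_mul, Finset.sum_sub_distrib, Finset.sum_ite_eq',
    Finset.mem_univ, if_true]
  ring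

lemma vmv_mul_s10 (g : SL n A) (i : Fin n) (p q : Fin n × Fin n) :
    Matrix.vecMulVec (vv g i) (rr g i p) * Matrix.vecMulVec (vv g i) (rr g i q) = 0 := by
  ext s t
  simp only [Matrix.mul_apply, Matrix.vecMulVec_apply, Matrix.zero_apply]
  calc ∑ u, vv g i s * rr g i p u * (vv g i u * rr g i q t)
      = (vv g i s * rr g i q t) * ∑ u, rr g i p u * vv g i u := by
        rw [Finset.mul_sum]; exact Finset.sum_congr rfl fun u _ => by ring
    _ = 0 := by rw [rr_dot]; ring

lemma factor_mul (g : SL n A) (a : A) (i j : Fin n) (p q : Fin n × Fin n) :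
    suslinFactor A g a i j p * suslinFactor A g a i j q =
      1 + ((a * cc g i j p) • Matrix.vecMulVec (vv g i) (rr g i p)
         + (a * cc g i j q) • Matrix.vecMulVec (vv g i) (rr g i q)) := by
  rw [suslinFactor_eq, suslinFactor_eq]
  have hz : ((a * cc g i j p) • Matrix.vecMulVec (vv g i) (rr g i p))
      * ((a * cc g i j q) • Matrix.vecMulVec (vv g i) (rr g i q)) = 0 := by
    rw [smul_mul_assoc, mul_smul_comm, vmv_mul_s10, smul_zero, smul_zero]
  rw [add_mul, one_mul, mul_add, mul_one, hz, add_zero]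
  abel

lemma noncommProd_one_add {R : Type*} [Ring R] {ι : Type*} [DecidableEq ι] (f : ι → R)
    (h : ∀ x y, f x * f y = 0) (s : Finset ι)
    (hc : (s : Set ι).Pairwise (Function.onFun Commute (fun x => 1 + f x))) :
    s.noncommProd (fun x => 1 + f x) hc = 1 + ∑ x ∈ s, f x := by
  revert hc
  induction s using Finset.induction_on with
  | empty => intro hc; simp
  | @insert b s hb ih =>
      intro hc
      rw [Finset.noncommProd_insert_of_notMem _ _ _ _ hb,
        ih (hc.mono (Finset.coe_subset.mpr (Finset.subset_insert b s))),
        Finset.sum_insert hb]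
      have hz : f b * ∑ x ∈ s, f x = 0 := by
        rw [Finset.mul_sum]
        exact Finset.sum_eq_zero fun x _ => h b x
      simp only [mul_add, add_mul, one_mul, mul_one, hz, add_zero]
      abel

lemma g_mul_vv (g : SL n A) (i k : Fin n) :
    ∑ u, (g : Matrix (Fin n) (Fin n) A) k u * vv g i u
      = (1 : Matrix (Fin n) (Fin n) A) k i := by
  have h : (g : Matrix (Fin n) (Fin n) A) * ((g⁻¹ : SL n A) : Matrix (Fin n) (Fin n) A)
      = 1 := by
    rw [← Matrix.SpecialLinearGroup.coe_mul, mul_inv_cancel,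
      Matrix.SpecialLinearGroup.coe_one]
  have := congrFun (congrFun h k) i
  simpa [Matrix.mul_apply, vv] using this

lemma key_sum (g : SL n A) (i j : Fin n) (hij : i ≠ j) (t : Fin n) :
    ∑ p ∈ Finset.univ.filter (fun p : Fin n × Fin n => p.1 < p.2),
      cc g i j p * rr g i p t = (g : Matrix (Fin n) (Fin n) A) j t := by
  rw [Finset.sum_filter, Fintype.sum_prod_type]
  have hterm : ∀ k l : Fin n,
      (if (k, l).1 < (k, l).2 then cc g i j (k, l) * rr g i (k, l) t else 0)
        = (if t = k ∧ k < l then cc g i j (t, l) * vv g i l else 0)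
        + (if t = l ∧ k < l then cc g i j (t, k) * vv g i k else 0) := by
    intro k l
    by_cases hkl : k < l
    · have hkl' : k ≠ l := ne_of_lt hkl
      simp only [hkl, and_true, if_true]
      by_cases h1 : t = k
      · have h2 : ¬ t = l := by rw [h1]; exact hkl'
        subst h1
        simp [rr, h2, cc]
      · by_cases h2 : t = l
        · subst h2
          have h3 : ¬(t = k ∧ k < t) := fun hh => h1 hh.1
          simp only [rr, cc, if_neg h1, if_neg h3, eq_self_iff_true, true_and, hkl,
            if_true, zero_add, zero_sub]
          ring
        · simp [rr, h1, h2]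
    · simp [hkl]
  calc ∑ k, ∑ l, (if (k, l).1 < (k, l).2 then cc g i j (k, l) * rr g i (k, l) t else 0)
      = ∑ k, ∑ l, ((if t = k ∧ k < l then cc g i j (t, l) * vv g i l else 0)
          + (if t = l ∧ k < l then cc g i j (t, k) * vv g i k else 0)) :=
        Finset.sum_congr rfl fun k _ => Finset.sum_congr rfl fun l _ => hterm k l
    _ = (∑ k, ∑ l, if t = k ∧ k < l then cc g i j (t, l) * vv g i l else 0)
        + (∑ k, ∑ l, if t = l ∧ k < l then cc g i j (t, k) * vv g i k else 0) := by
        rw [← Finset.sum_add_distrib]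
        exact Finset.sum_congr rfl fun k _ => Finset.sum_add_distrib
    _ = (∑ l, if t < l then cc g i j (t, l) * vv g i l else 0)
        + (∑ k, if k < t then cc g i j (t, k) * vv g i k else 0) := by
        congr 1
        · rw [Finset.sum_comm]
          simp [ite_and, Finset.sum_ite_eq]
        · simp [ite_and, Finset.sum_ite_eq]
    _ = ∑ u, cc g i j (t, u) * vv g i u := by
        rw [← Finset.sum_add_distrib]
        refine Finset.sum_congr rfl fun u _ => ?_
        rcases lt_trichotomy t u with h | h | h
        · simp [h, asymm h]
        · subst h; simp [lt_irrefl, cc]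
        · simp [h, asymm h, not_lt_of_gt h]
    _ = (g : Matrix (Fin n) (Fin n) A) j t := by
        have h1 := g_mul_vv g i i
        have h2 := g_mul_vv g i j
        calc ∑ u, cc g i j (t, u) * vv g i u
            = (g : Matrix (Fin n) (Fin n) A) j t
                * (∑ u, (g : Matrix (Fin n) (Fin n) A) i u * vv g i u)
              - (g : Matrix (Fin n) (Fin n) A) i t
                * (∑ u, (g : Matrix (Fin n) (Fin n) A) j u * vv g i u) := by
              rw [Finset.mul_sum, Finset.mul_sum, ← Finset.sum_sub_distrib]
              exact Finset.sum_congr rfl fun u _ => by simp only [cc]; ring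
          _ = (g : Matrix (Fin n) (Fin n) A) j t := by
              rw [h1, h2, Matrix.one_apply_eq, Matrix.one_apply_ne (Ne.symm hij)]
              ring

end Aux

/-- **The Suslin factorization.** For `n ≥ 2`, `g ∈ SL_n(A)`, `a ∈ A` and `i ≠ j`,
`g⁻¹·e_{ij}(a)·g = ∏_{k<l} (1_n + a·c_{kl}·v·(v_l·e_k − v_k·e_l))`, where `v` is the `i`-th
column of `g⁻¹` and `c_{kl} = g_{jk}·g_{il} − g_{jl}·g_{ik}`; the factors pairwise commute,
so the product (here a `Finset.noncommProd` over the pairs `(k,l)` with `k < l`) does not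
depend on the ordering of the pairs. -/
theorem suslin_factorization (A : Type) [CommRing A] (n : ℕ) (hn : 2 ≤ n) (g : SL n A)
    (a : A) (i j : Fin n) (hij : i ≠ j) :
    ∃ hc : ((Finset.univ.filter fun p : Fin n × Fin n => p.1 < p.2 : Finset (Fin n × Fin n)) :
        Set (Fin n × Fin n)).Pairwise (Function.onFun Commute (suslinFactor A g a i j)),
      ((g⁻¹ * elem A i j hij a * g : SL n A) : Matrix (Fin n) (Fin n) A) =
        (Finset.univ.filter fun p : Fin n × Fin n => p.1 < p.2).noncommProd
          (suslinFactor A g a i j) hc := by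
  set f : Fin n × Fin n → Matrix (Fin n) (Fin n) A :=
    fun p => (a * cc g i j p) • Matrix.vecMulVec (vv g i) (rr g i p) with hf
  have hff : ∀ p q, f p * f q = 0 := by
    intro p q
    simp only [hf, smul_mul_assoc, mul_smul_comm, vmv_mul_s10, smul_zero]
  have hcomm : ∀ p q, Commute (suslinFactor A g a i j p) (suslinFactor A g a i j q) := by
    intro p q
    unfold Commute SemiconjBy
    rw [factor_mul, factor_mul, add_comm ((a * cc g i j q) • _)]
  have hc : ((Finset.univ.filter fun p : Fin n × Fin n => p.1 < p.2 :
      Finset (Fin n × Fin n)) : Set (Fin n × Fin n)).Pairwise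
      (Function.onFun Commute (suslinFactor A g a i j)) :=
    fun p _ q _ _ => hcomm p q
  refine ⟨hc, ?_⟩
  have hfun : suslinFactor A g a i j = fun p => 1 + f p := by
    funext p; rw [suslinFactor_eq, hf]
  have hprod : (Finset.univ.filter fun p : Fin n × Fin n => p.1 < p.2).noncommProd
      (suslinFactor A g a i j) hc
      = 1 + ∑ p ∈ Finset.univ.filter fun p : Fin n × Fin n => p.1 < p.2, f p := by
    rw [Finset.noncommProd_congr rfl (fun p _ => congrFun hfun p) (hfun ▸ hc)]
    exact noncommProd_one_add f hff _ _
  rw [hprod]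
  have hg1 : ((g⁻¹ : SL n A) : Matrix (Fin n) (Fin n) A) * (g : Matrix (Fin n) (Fin n) A)
      = 1 := by
    rw [← Matrix.SpecialLinearGroup.coe_mul, inv_mul_cancel,
      Matrix.SpecialLinearGroup.coe_one]
  have hlhs : ((g⁻¹ * elem A i j hij a * g : SL n A) : Matrix (Fin n) (Fin n) A)
      = 1 + ((g⁻¹ : SL n A) : Matrix (Fin n) (Fin n) A)
          * Matrix.single i j a * (g : Matrix (Fin n) (Fin n) A) := by
    rw [Matrix.SpecialLinearGroup.coe_mul, Matrix.SpecialLinearGroup.coe_mul]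
    have : ((elem A i j hij a : SL n A) : Matrix (Fin n) (Fin n) A)
        = 1 + Matrix.single i j a := rfl
    rw [this, mul_add, add_mul, mul_one, hg1, mul_assoc]
  rw [hlhs]
  congr 1
  ext s t
  rw [Matrix.sum_apply]
  have hR : ∀ p : Fin n × Fin n, f p s t
      = (a * cc g i j p) * (vv g i s * rr g i p t) := by
    intro p
    simp [hf, Matrix.vecMulVec_apply]
  calc (((g⁻¹ : SL n A) : Matrix (Fin n) (Fin n) A)
        * Matrix.single i j a * (g : Matrix (Fin n) (Fin n) A)) s t
      = vv g i s * a * (g : Matrix (Fin n) (Fin n) A) j t := by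
        simp [Matrix.mul_apply, Matrix.single, vv, ite_and, Finset.mul_sum,
          Finset.sum_ite_eq, mul_comm, mul_assoc, mul_left_comm]
    _ = ∑ p ∈ Finset.univ.filter fun p : Fin n × Fin n => p.1 < p.2, f p s t := by
        rw [show (∑ p ∈ Finset.univ.filter fun p : Fin n × Fin n => p.1 < p.2, f p s t)
            = a * vv g i s * ∑ p ∈ Finset.univ.filter fun p : Fin n × Fin n => p.1 < p.2,
                cc g i j p * rr g i p t by
          rw [Finset.mul_sum]
          exact Finset.sum_congr rfl fun p _ => by rw [hR]; ring]
        rw [key_sum g i j hij t]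
        ring
end

section
/- Let A be a commutative unital ring, let n ≥ 2, let g ∈ SL_n(A), and fix indices i ≠ j. Let v denote the i-th column of g⁻¹, let w denote the j-th row of g, and set c_{kl} = g_{jk}·g_{il} − g_{jl}·g_{ik} for k < l. Then w = ∑_{k<l} c_{kl}·(v_l·e_k − v_k·e_l), where e_k denotes the k-th basic row vector. -/
open Matrix

/-- For `n ≥ 2`, `g ∈ SL_n(A)` and `i ≠ j`: the `j`-th row `w` of `g` satisfies
`w = ∑_{k<l} c_{kl}·(v_l·e_k − v_k·e_l)`, where `v` is the `i`-th column of `g⁻¹`,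
`c_{kl} = g_{jk}·g_{il} − g_{jl}·g_{ik}` and `e_k` is the `k`-th basic row vector. -/
theorem row_decomposition (A : Type) [CommRing A] (n : ℕ) (hn : 2 ≤ n) (g : SL n A)
    (i j : Fin n) (hij : i ≠ j) :
    (fun q => (g : Matrix (Fin n) (Fin n) A) j q) =
      ∑ p ∈ Finset.univ.filter fun p : Fin n × Fin n => p.1 < p.2,
        ((g : Matrix (Fin n) (Fin n) A) j p.1 * (g : Matrix (Fin n) (Fin n) A) i p.2
          - (g : Matrix (Fin n) (Fin n) A) j p.2 * (g : Matrix (Fin n) (Fin n) A) i p.1) •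
        fun s => (if s = p.1 then ((g⁻¹ : SL n A) : Matrix (Fin n) (Fin n) A) p.2 i else 0)
               - (if s = p.2 then ((g⁻¹ : SL n A) : Matrix (Fin n) (Fin n) A) p.1 i else 0) := by
  set G : Matrix (Fin n) (Fin n) A := (g : Matrix (Fin n) (Fin n) A) with hG
  set Gi : Matrix (Fin n) (Fin n) A := ((g⁻¹ : SL n A) : Matrix (Fin n) (Fin n) A) with hGi
  have hGGi : G * Gi = 1 := by
    rw [hG, hGi, ← Matrix.SpecialLinearGroup.coe_mul, mul_inv_cancel]
    rfl
  funext s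
  set F : Fin n × Fin n → A := fun p =>
    (G j p.1 * G i p.2 - G j p.2 * G i p.1) * (if s = p.1 then Gi p.2 i else 0) with hF
  rw [Finset.sum_apply]
  have hterm : ∀ p : Fin n × Fin n,
      ((G j p.1 * G i p.2 - G j p.2 * G i p.1) •
        fun t => (if t = p.1 then Gi p.2 i else 0) - (if t = p.2 then Gi p.1 i else 0)) s
      = F p + F p.swap := by
    intro p
    simp only [Pi.smul_apply, smul_eq_mul, hF, Prod.fst_swap, Prod.snd_swap]
    ring
  rw [Finset.sum_congr rfl (fun p _ => hterm p), Finset.sum_add_distrib]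
  have hswap : (∑ p ∈ Finset.univ.filter fun p : Fin n × Fin n => p.1 < p.2, F p.swap)
      = ∑ p ∈ Finset.univ.filter fun p : Fin n × Fin n => p.2 < p.1, F p := by
    apply Finset.sum_nbij' (fun p => Prod.swap p) (fun p => Prod.swap p) <;>
      simp [Finset.mem_filter]
  rw [hswap]
  have hdiag : (∑ p ∈ Finset.univ.filter fun p : Fin n × Fin n => p.1 = p.2, F p) = 0 := by
    apply Finset.sum_eq_zero
    intro p hp
    simp only [Finset.mem_filter] at hp
    simp [hF, hp.2, mul_comm]
  have htotal : (∑ p ∈ Finset.univ.filter fun p : Fin n × Fin n => p.1 < p.2, F p)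
      + (∑ p ∈ Finset.univ.filter fun p : Fin n × Fin n => p.2 < p.1, F p)
      = ∑ p : Fin n × Fin n, F p := by
    have := hdiag
    rw [← Finset.sum_filter_add_sum_filter_not Finset.univ
        (fun p : Fin n × Fin n => p.1 < p.2) F]
    congr 1
    rw [← Finset.sum_filter_add_sum_filter_not
        (Finset.univ.filter fun p : Fin n × Fin n => ¬ p.1 < p.2)
        (fun p : Fin n × Fin n => p.2 < p.1) F, Finset.filter_filter, Finset.filter_filter]
    have h1 : (Finset.univ.filter fun p : Fin n × Fin n => ¬ p.1 < p.2 ∧ p.2 < p.1)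
        = Finset.univ.filter fun p : Fin n × Fin n => p.2 < p.1 := by
      apply Finset.filter_congr; intro p _
      simp only [eq_iff_iff, and_iff_right_iff_imp]
      exact fun h => not_lt_of_gt h
    have h2 : (∑ p ∈ Finset.univ.filter
        fun p : Fin n × Fin n => ¬ p.1 < p.2 ∧ ¬ p.2 < p.1, F p) = 0 := by
      rw [show (Finset.univ.filter fun p : Fin n × Fin n => ¬ p.1 < p.2 ∧ ¬ p.2 < p.1)
          = Finset.univ.filter fun p : Fin n × Fin n => p.1 = p.2 from ?_]
      · exact hdiag
      · apply Finset.filter_congr; intro p _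
        simp only [eq_iff_iff, not_lt]
        constructor
        · rintro ⟨h1, h2⟩; exact le_antisymm h2 h1
        · rintro h; exact ⟨h.ge, h.le⟩
    rw [h1, h2, add_zero]
  rw [htotal]
  -- now compute the full sum
  have : (∑ p : Fin n × Fin n, F p) = ∑ l : Fin n, F (s, l) := by
    rw [Fintype.sum_prod_type]
    rw [Finset.sum_eq_single s]
    · intro k _ hk
      apply Finset.sum_eq_zero
      intro l _
      simp [hF, Ne.symm hk]
    · intro h; exact absurd (Finset.mem_univ s) h
  rw [this]
  have hii : (∑ l : Fin n, G i l * Gi l i) = 1 := by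
    have := congrArg (fun M => M i i) hGGi
    simpa [Matrix.mul_apply, Matrix.one_apply] using this
  have hji : (∑ l : Fin n, G j l * Gi l i) = 0 := by
    have := congrArg (fun M => M j i) hGGi
    simpa [Matrix.mul_apply, Matrix.one_apply, Ne.symm hij] using this
  have expand : (∑ l : Fin n, F (s, l))
      = G j s * (∑ l : Fin n, G i l * Gi l i) - G i s * (∑ l : Fin n, G j l * Gi l i) := by
    rw [Finset.mul_sum, Finset.mul_sum, ← Finset.sum_sub_distrib]
    apply Finset.sum_congr rfl
    intro l _
    simp only [hF, if_pos, if_true]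
    ring
  rw [expand, hii, hji, mul_one, mul_zero, sub_zero]
end

section
/- Let A be a commutative unital ring, let π be an ideal of A, and let n ≥ 2. Then the secondary congruence subgroup Δ_n(π) is a normal subgroup of Ω_n(π). -/
open Matrix

/-- The secondary congruence subgroup
`Δ_n(π) = {g ∈ SL_n(A) : g ≡ 1_n mod π, g_{ii} ≡ 1 mod π²}`, as a set. -/
def Δset (A : Type) [CommRing A] (n : ℕ) (π : Ideal A) : Set (SL n A) :=
  {g | (∀ p q : Fin n, (g : Matrix (Fin n) (Fin n) A) p q
          - (1 : Matrix (Fin n) (Fin n) A) p q ∈ π) ∧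
       (∀ p : Fin n, (g : Matrix (Fin n) (Fin n) A) p p - 1 ∈ π ^ 2)}

section aux

variable {A : Type} [CommRing A] {π : Ideal A} {n : ℕ}

lemma sq_mem {a b : A} (ha : a ∈ π) (hb : b ∈ π) : a * b ∈ π ^ 2 := by
  rw [pow_two]; exact Ideal.mul_mem_mul ha hb

lemma omega_inv_mem {g : SL n A} (hg : g ∈ Ωset A n π) : g⁻¹ ∈ Ωset A n π := by
  intro p q hpq
  set φ := Ideal.Quotient.mk π
  have hmap : φ.mapMatrix (g : Matrix (Fin n) (Fin n) A)
      = Matrix.diagonal (fun i => φ ((g : Matrix (Fin n) (Fin n) A) i i)) := by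
    ext i j
    rcases eq_or_ne i j with rfl | hij
    · simp [φ]
    · simp only [RingHom.mapMatrix_apply, Matrix.map_apply, Matrix.diagonal_apply_ne _ hij]
      exact (Ideal.Quotient.eq_zero_iff_mem).mpr (hg i j hij)
  have h1 : ((g⁻¹ : SL n A) : Matrix (Fin n) (Fin n) A)
      = Matrix.adjugate (g : Matrix (Fin n) (Fin n) A) :=
    Matrix.SpecialLinearGroup.coe_inv g
  have h2 : φ ((g⁻¹ : SL n A).val p q) = 0 := by
    have := congrArg (fun M => M p q)
      ((φ.map_adjugate (g : Matrix (Fin n) (Fin n) A)).trans (by rw [hmap, adjugate_diagonal]))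
    simp only [RingHom.mapMatrix_apply, Matrix.map_apply] at this
    rw [show ((g⁻¹ : SL n A) : Matrix (Fin n) (Fin n) A) p q
        = Matrix.adjugate (g : Matrix (Fin n) (Fin n) A) p q from by rw [h1]]
    rw [this, Matrix.diagonal_apply_ne _ hpq]
  exact (Ideal.Quotient.eq_zero_iff_mem).mp h2

lemma delta_mul_mem {g h : SL n A} (hg : g ∈ Δset A n π) (hh : h ∈ Δset A n π) :
    g * h ∈ Δset A n π := by
  obtain ⟨hg1, hg2⟩ := hg
  obtain ⟨hh1, hh2⟩ := hh
  have key : ∀ p q : Fin n, ((g * h : SL n A) : Matrix (Fin n) (Fin n) A) p q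
      - (1 : Matrix (Fin n) (Fin n) A) p q
      = (∑ k, ((g : Matrix (Fin n) (Fin n) A) p k - (1 : Matrix (Fin n) (Fin n) A) p k)
          * ((h : Matrix (Fin n) (Fin n) A) k q - (1 : Matrix (Fin n) (Fin n) A) k q))
        + ((g : Matrix (Fin n) (Fin n) A) p q - (1 : Matrix (Fin n) (Fin n) A) p q)
        + ((h : Matrix (Fin n) (Fin n) A) p q - (1 : Matrix (Fin n) (Fin n) A) p q) := by
    intro p q
    have e1 : ∑ k, (1 : Matrix (Fin n) (Fin n) A) p k * (h : Matrix (Fin n) (Fin n) A) k q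
        = (h : Matrix (Fin n) (Fin n) A) p q := by
      rw [← Matrix.mul_apply, Matrix.one_mul]
    have e2 : ∑ k, (g : Matrix (Fin n) (Fin n) A) p k * (1 : Matrix (Fin n) (Fin n) A) k q
        = (g : Matrix (Fin n) (Fin n) A) p q := by
      rw [← Matrix.mul_apply, Matrix.mul_one]
    have e3 : ∑ k, (1 : Matrix (Fin n) (Fin n) A) p k * (1 : Matrix (Fin n) (Fin n) A) k q
        = (1 : Matrix (Fin n) (Fin n) A) p q := by
      rw [← Matrix.mul_apply, Matrix.mul_one]
    simp only [Matrix.SpecialLinearGroup.coe_mul, Matrix.mul_apply, sub_mul, mul_sub,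
      Finset.sum_sub_distrib, e1, e2, e3]
    ring
  constructor
  · intro p q
    rw [key p q]
    refine Ideal.add_mem _ (Ideal.add_mem _ (Ideal.sum_mem _ fun k _ => ?_) (hg1 p q)) (hh1 p q)
    exact Ideal.mul_mem_right _ _ (hg1 p k)
  · intro p
    have := key p p
    simp only [Matrix.one_apply_eq] at this
    rw [this]
    refine Ideal.add_mem _ (Ideal.add_mem _ (Ideal.sum_mem _ fun k _ => ?_) (hg2 p)) (hh2 p)
    exact sq_mem (by simpa using hg1 p k) (by simpa using hh1 k p)

lemma delta_inv_mem {g : SL n A} (hg : g ∈ Δset A n π) : g⁻¹ ∈ Δset A n π := by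
  obtain ⟨hg1, hg2⟩ := hg
  set h : Matrix (Fin n) (Fin n) A := ((g⁻¹ : SL n A) : Matrix (Fin n) (Fin n) A) with hh
  have hgh : (g : Matrix (Fin n) (Fin n) A) * h = 1 := by
    rw [hh, ← Matrix.SpecialLinearGroup.coe_mul, mul_inv_cancel]
    rfl
  have key : ∀ p q : Fin n, h p q - (1 : Matrix (Fin n) (Fin n) A) p q
      = - ∑ k, ((g : Matrix (Fin n) (Fin n) A) p k - (1 : Matrix (Fin n) (Fin n) A) p k)
          * h k q := by
    intro p q
    have e1 : ∑ k, (g : Matrix (Fin n) (Fin n) A) p k * h k q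
        = (1 : Matrix (Fin n) (Fin n) A) p q := by
      rw [← Matrix.mul_apply, hgh]
    have e2 : ∑ k, (1 : Matrix (Fin n) (Fin n) A) p k * h k q = h p q := by
      rw [← Matrix.mul_apply, Matrix.one_mul]
    simp only [sub_mul, Finset.sum_sub_distrib, e1, e2]
    ring
  have hpi : ∀ p q : Fin n, h p q - (1 : Matrix (Fin n) (Fin n) A) p q ∈ π := by
    intro p q
    rw [key p q]
    exact neg_mem (Ideal.sum_mem _ fun k _ => Ideal.mul_mem_right _ _ (hg1 p k))
  refine ⟨hpi, fun p => ?_⟩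
  have := key p p
  simp only [Matrix.one_apply_eq] at this
  rw [this]
  refine neg_mem (Ideal.sum_mem _ fun k _ => ?_)
  rcases eq_or_ne k p with rfl | hkp
  · exact Ideal.mul_mem_right _ _ (by simpa using hg2 k)
  · refine sq_mem (by simpa using hg1 p k) ?_
    have := hpi k p
    rwa [Matrix.one_apply_ne hkp, sub_zero] at this

lemma delta_subset_omega : Δset A n π ⊆ Ωset A n π := by
  intro g hg p q hpq
  have := hg.1 p q
  rwa [Matrix.one_apply_ne hpq, sub_zero] at this

lemma delta_conj {g x : SL n A} (hg : g ∈ Ωset A n π) (hx : x ∈ Δset A n π) :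
    g * x * g⁻¹ ∈ Δset A n π := by
  obtain ⟨hx1, hx2⟩ := hx
  have hginv := omega_inv_mem hg
  set G : Matrix (Fin n) (Fin n) A := (g : Matrix (Fin n) (Fin n) A) with hG
  set H : Matrix (Fin n) (Fin n) A := ((g⁻¹ : SL n A) : Matrix (Fin n) (Fin n) A) with hH
  set X : Matrix (Fin n) (Fin n) A := (x : Matrix (Fin n) (Fin n) A) with hX
  have hGH : G * H = 1 := by
    rw [hG, hH, ← Matrix.SpecialLinearGroup.coe_mul, mul_inv_cancel]; rfl
  have key : ∀ p q : Fin n,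
      ((g * x * g⁻¹ : SL n A) : Matrix (Fin n) (Fin n) A) p q
        - (1 : Matrix (Fin n) (Fin n) A) p q
      = ∑ k, ∑ l, G p k * ((X k l - (1 : Matrix (Fin n) (Fin n) A) k l) * H l q) := by
    intro p q
    have expand : (G * (X - 1) * H) p q
        = ∑ k, ∑ l, G p k * ((X k l - (1 : Matrix (Fin n) (Fin n) A) k l) * H l q) := by
      simp only [Matrix.mul_apply, Finset.sum_mul, Matrix.sub_apply]
      rw [Finset.sum_comm]
      refine Finset.sum_congr rfl fun k _ => ?_
      refine Finset.sum_congr rfl fun l _ => ?_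
      ring
    rw [← expand]
    have : G * (X - 1) * H = G * X * H - 1 := by
      rw [Matrix.mul_sub, Matrix.mul_one, Matrix.sub_mul, hGH]
    rw [this]
    have hco : ((g * x * g⁻¹ : SL n A) : Matrix (Fin n) (Fin n) A) = G * X * H := by
      simp only [Matrix.SpecialLinearGroup.coe_mul]
      rfl
    rw [hco]
    simp [Matrix.sub_apply]
  constructor
  · intro p q
    rw [key p q]
    exact Ideal.sum_mem _ fun k _ => Ideal.sum_mem _ fun l _ =>
      Ideal.mul_mem_left _ _ (Ideal.mul_mem_right _ _ (hx1 k l))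
  · intro p
    have := key p p
    simp only [Matrix.one_apply_eq] at this
    rw [this]
    refine Ideal.sum_mem _ fun k _ => Ideal.sum_mem _ fun l _ => ?_
    rcases eq_or_ne k p with rfl | hkp
    · rcases eq_or_ne l k with rfl | hlk
      · exact Ideal.mul_mem_left _ _ (Ideal.mul_mem_right _ _ (by simpa using hx2 l))
      · exact Ideal.mul_mem_left _ _ (sq_mem (by simpa [Matrix.one_apply_ne' hlk] using hx1 k l)
          (hginv l k hlk))
    · rw [← mul_assoc]
      exact Ideal.mul_mem_right _ _ (sq_mem (hg p k (Ne.symm hkp))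
        (by simpa [Matrix.one_apply] using hx1 k l))

end aux

/-- For a commutative unital ring `A`, an ideal `π` of `A` and `n ≥ 2`, the secondary
congruence subgroup `Δ_n(π)` is a normal subgroup of `Ω_n(π)`: both sets are (carriers of)
subgroups of `SL_n(A)`, `Δ_n(π) ⊆ Ω_n(π)`, and `Δ_n(π)` is stable under conjugation by the
elements of `Ω_n(π)`. -/
theorem secondaryCongruence_normal_in_Omega (A : Type) [CommRing A] (π : Ideal A) (n : ℕ)
    (hn : 2 ≤ n) :
    ∃ D O : Subgroup (SL n A), (D : Set (SL n A)) = Δset A n π ∧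
      (O : Set (SL n A)) = Ωset A n π ∧ D ≤ O ∧
      ∀ g ∈ O, ∀ x ∈ D, g * x * g⁻¹ ∈ D := by
  refine ⟨{ carrier := Δset A n π
            one_mem' := ⟨fun p q => by simp, fun p => by simp⟩
            mul_mem' := fun hg hh => delta_mul_mem hg hh
            inv_mem' := fun hg => delta_inv_mem hg },
          { carrier := Ωset A n π
            one_mem' := fun p q hpq => by simp [Matrix.one_apply_ne hpq]
            mul_mem' := ?_
            inv_mem' := fun hg => omega_inv_mem hg }, rfl, rfl, fun g hg => delta_subset_omega hg,
          fun g hg x hx => delta_conj hg hx⟩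
  · intro g h hg hh p q hpq
    show ((g * h : SL n A) : Matrix (Fin n) (Fin n) A) p q ∈ π
    rw [Matrix.SpecialLinearGroup.coe_mul, Matrix.mul_apply]
    refine Ideal.sum_mem _ fun k _ => ?_
    rcases eq_or_ne k p with rfl | hkp
    · exact Ideal.mul_mem_left _ _ (hh k q hpq)
    · exact Ideal.mul_mem_right _ _ (hg p k (Ne.symm hkp))
end

section
/- Let A be a commutative unital ring, let π be an ideal of A, and let n ≥ 2. The reduction map r : Γ_n(π) → gl_n(π/π²) given by g ↦ (g − 1_n) mod π² is a group homomorphism from Γ_n(π) to the additive group of n×n matrices over π/π², its image lies in the zero-trace subgroup sl_n(π/π²), it is surjective onto sl_n(π/π²), and its kernel is Γ_n(π²). -/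
open Matrix

/-- The principal congruence subgroup `Γ_n(π) = {g ∈ SL_n(A) : g ≡ 1_n mod π}`, as a set. -/
def Γset (A : Type) [CommRing A] (n : ℕ) (π : Ideal A) : Set (SL n A) :=
  {g | ∀ p q : Fin n, (g : Matrix (Fin n) (Fin n) A) p q - (1 : Matrix (Fin n) (Fin n) A) p q ∈ π}

/-- The reduction map `r : Γ_n(π) → gl_n(π/π²)`, `g ↦ (g − 1_n) mod π²`; here
`gl_n(π/π²)` is realized as the additive group of `n×n` matrices over `A/π²` whose entries
lie in the image ideal `π.map (Ideal.Quotient.mk (π^2))`, i.e. in `π/π²`. -/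
def redMap (A : Type) [CommRing A] (n : ℕ) (π : Ideal A) (g : SL n A) :
    Matrix (Fin n) (Fin n) (A ⧸ π ^ 2) := fun p q =>
  Ideal.Quotient.mk (π ^ 2)
    ((g : Matrix (Fin n) (Fin n) A) p q - (1 : Matrix (Fin n) (Fin n) A) p q)

section Aux

variable {A : Type} [CommRing A] {n : ℕ}

lemma aux_prod_one_add_sub (π : Ideal A) (s : Finset (Fin n)) (f : Fin n → A)
    (hf : ∀ i, f i ∈ π) :
    (∏ i ∈ s, (1 + f i)) - 1 - ∑ i ∈ s, f i ∈ π ^ 2 := by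
  classical
  induction s using Finset.induction_on with
  | empty => simpa using (π ^ 2).zero_mem
  | insert a s ha ih =>
    rw [Finset.prod_insert ha, Finset.sum_insert ha]
    have hS : (∑ i ∈ s, f i) ∈ π := Ideal.sum_mem _ fun i _ => hf i
    have hP1 : (∏ i ∈ s, (1 + f i)) - 1 ∈ π := by
      have h2 : ((∏ i ∈ s, (1 + f i)) - 1 - ∑ i ∈ s, f i) + ∑ i ∈ s, f i ∈ π :=
        π.add_mem (Ideal.pow_le_self two_ne_zero ih) hS
      simpa using h2
    have key : (1 + f a) * (∏ i ∈ s, (1 + f i)) - 1 - (f a + ∑ i ∈ s, f i)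
        = ((∏ i ∈ s, (1 + f i)) - 1 - ∑ i ∈ s, f i)
          + f a * ((∏ i ∈ s, (1 + f i)) - 1) := by ring
    rw [key]
    exact (π ^ 2).add_mem ih (by rw [pow_two]; exact Ideal.mul_mem_mul (hf a) hP1)

lemma aux_det_one_add_mem (π : Ideal A) (x : Matrix (Fin n) (Fin n) A)
    (hx : ∀ p q, x p q ∈ π) :
    det (1 + x) - 1 - trace x ∈ π ^ 2 := by
  classical
  rw [Matrix.det_apply', ← Finset.add_sum_erase _ _ (Finset.mem_univ (1 : Equiv.Perm (Fin n)))]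
  have h1 : (Equiv.Perm.sign (1 : Equiv.Perm (Fin n)) : A)
        * ∏ i, (1 + x) ((1 : Equiv.Perm (Fin n)) i) i
      = ∏ i, (1 + x i i) := by
    simp [Matrix.add_apply, Matrix.one_apply]
  rw [h1]
  have key : (∏ i, (1 + x i i)) + (∑ σ ∈ Finset.univ.erase (1 : Equiv.Perm (Fin n)),
        (Equiv.Perm.sign σ : A) * ∏ i, (1 + x) (σ i) i) - 1 - trace x
      = ((∏ i, (1 + x i i)) - 1 - ∑ i, x i i)
        + (∑ σ ∈ Finset.univ.erase (1 : Equiv.Perm (Fin n)),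
          (Equiv.Perm.sign σ : A) * ∏ i, (1 + x) (σ i) i) := by
    rw [Matrix.trace]; simp [Matrix.diag]; ring
  rw [key]
  refine (π ^ 2).add_mem (aux_prod_one_add_sub π _ _ fun i => hx i i) (Ideal.sum_mem _ ?_)
  intro σ hσ
  refine Ideal.mul_mem_left _ _ ?_
  have hσ1 : σ ≠ 1 := (Finset.mem_erase.mp hσ).1
  have hne : ¬ ∀ i, σ i = i := fun h => hσ1 (Equiv.ext h)
  push_neg at hne
  obtain ⟨i, hi⟩ := hne
  set j := σ⁻¹ i with hj
  have hji : j ≠ i := by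
    intro h
    apply hi
    have h2 : σ⁻¹ i = i := by rw [← hj, h]
    exact (Equiv.Perm.inv_eq_iff_eq.mp h2).symm
  have hσj : σ j ≠ j := by
    rw [hj]
    simp only [← Equiv.Perm.mul_apply, mul_inv_cancel, Equiv.Perm.one_apply]
    intro h
    exact hji (by rw [hj, ← h])
  rw [← Finset.mul_prod_erase _ _ (Finset.mem_univ i),
    ← Finset.mul_prod_erase _ _ (Finset.mem_erase.mpr ⟨hji, Finset.mem_univ j⟩), pow_two]
  have m1 : (1 + x) (σ i) i ∈ π := by
    rw [Matrix.add_apply, Matrix.one_apply_ne hi]; simpa using hx _ _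
  have m2 : (1 + x) (σ j) j ∈ π := by
    rw [Matrix.add_apply, Matrix.one_apply_ne hσj]; simpa using hx _ _
  exact Ideal.mul_mem_mul m1 (Ideal.mul_mem_right _ _ m2)

lemma aux_transvection_triple (p q : Fin n) (hpq : p ≠ q) (x : A) :
    transvection p q 1 * transvection q p x * transvection p q (-1)
      = 1 + Matrix.single p p x - Matrix.single q q x + Matrix.single q p x
        - Matrix.single p q x := by
  have h0 : (Matrix.single p q (1:A)) * Matrix.single p q (-1) = 0 :=
    Matrix.single_mul_single_of_ne _ _ _ _ (Ne.symm hpq) _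
  simp only [transvection, add_mul, mul_add, one_mul, mul_one,
    Matrix.single_mul_single_same, h0]
  ext a b
  simp only [Matrix.add_apply, Matrix.sub_apply, Matrix.zero_apply, Matrix.single,
    Matrix.of_apply, Matrix.one_apply]
  split_ifs <;> ring

lemma aux_SL_mul_sub_one (g h : SL n A) :
    ((g * h : SL n A) : Matrix (Fin n) (Fin n) A) - 1
      = ((g : Matrix (Fin n) (Fin n) A) - 1) * ((h : Matrix (Fin n) (Fin n) A) - 1)
        + ((g : Matrix (Fin n) (Fin n) A) - 1) + ((h : Matrix (Fin n) (Fin n) A) - 1) := by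
  have hc : ((g * h : SL n A) : Matrix (Fin n) (Fin n) A)
      = (g : Matrix (Fin n) (Fin n) A) * (h : Matrix (Fin n) (Fin n) A) := rfl
  rw [hc]; noncomm_ring

lemma aux_prod_entry_mem (π : Ideal A) {g h : Matrix (Fin n) (Fin n) A}
    (hg : ∀ p q, g p q ∈ π) (hh : ∀ p q, h p q ∈ π) (p q : Fin n) :
    (g * h) p q ∈ π ^ 2 := by
  rw [Matrix.mul_apply, pow_two]
  exact Ideal.sum_mem _ fun k _ => Ideal.mul_mem_mul (hg p k) (hh k q)

lemma aux_Γ_mul (π : Ideal A) {g h : SL n A} (hg : g ∈ Γset A n π) (hh : h ∈ Γset A n π) :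
    g * h ∈ Γset A n π := by
  intro p q
  have h2 : ((g * h : SL n A) : Matrix (Fin n) (Fin n) A) p q - (1 : Matrix (Fin n) (Fin n) A) p q
      = (((g : Matrix (Fin n) (Fin n) A) - 1) * ((h : Matrix (Fin n) (Fin n) A) - 1)) p q
        + ((g : Matrix (Fin n) (Fin n) A) p q - (1 : Matrix (Fin n) (Fin n) A) p q)
        + ((h : Matrix (Fin n) (Fin n) A) p q - (1 : Matrix (Fin n) (Fin n) A) p q) := by
    rw [← Matrix.sub_apply, aux_SL_mul_sub_one]
    simp [Matrix.add_apply, Matrix.sub_apply]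
  rw [h2]
  refine π.add_mem (π.add_mem ?_ (hg p q)) (hh p q)
  refine Ideal.pow_le_self two_ne_zero
    (aux_prod_entry_mem π (fun a b => ?_) (fun a b => ?_) p q)
  · simpa [Matrix.sub_apply] using hg a b
  · simpa [Matrix.sub_apply] using hh a b

lemma aux_red_mul (π : Ideal A) {g h : SL n A} (hg : g ∈ Γset A n π) (hh : h ∈ Γset A n π) :
    redMap A n π (g * h) = redMap A n π g + redMap A n π h := by
  funext p q
  show Ideal.Quotient.mk (π ^ 2) _ = redMap A n π g p q + redMap A n π h p q
  rw [redMap, redMap, ← map_add, Ideal.Quotient.mk_eq_mk_iff_sub_mem]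
  have h2 : ((g * h : SL n A) : Matrix (Fin n) (Fin n) A) p q - (1 : Matrix (Fin n) (Fin n) A) p q
        - (((g : Matrix (Fin n) (Fin n) A) p q - (1 : Matrix (Fin n) (Fin n) A) p q)
          + ((h : Matrix (Fin n) (Fin n) A) p q - (1 : Matrix (Fin n) (Fin n) A) p q))
      = (((g : Matrix (Fin n) (Fin n) A) - 1) * ((h : Matrix (Fin n) (Fin n) A) - 1)) p q := by
    have h3 := congrFun (congrFun (aux_SL_mul_sub_one g h) p) q
    simp only [Matrix.sub_apply, Matrix.add_apply] at h3 ⊢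
    linear_combination h3
  rw [h2]
  refine aux_prod_entry_mem π (fun a b => ?_) (fun a b => ?_) p q
  · simpa [Matrix.sub_apply] using hg a b
  · simpa [Matrix.sub_apply] using hh a b

lemma aux_std_mem (π : Ideal A) {x : A} (hx : x ∈ π) (i j a b : Fin n) :
    Matrix.single i j x a b ∈ π := by
  simp only [Matrix.single, Matrix.of_apply]
  split_ifs
  · exact hx
  · exact π.zero_mem

lemma aux_mk_std (π : Ideal A) (x : A) (i j a b : Fin n) :
    Ideal.Quotient.mk (π ^ 2) (Matrix.single i j x a b)
      = Matrix.single i j (Ideal.Quotient.mk (π ^ 2) x) a b := by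
  simp only [Matrix.single, Matrix.of_apply, apply_ite (Ideal.Quotient.mk (π ^ 2)), map_zero]

lemma aux_gen1 (π : Ideal A) {p q : Fin n} (hpq : p ≠ q) {x : A} (hx : x ∈ π) :
    ∃ g ∈ Γset A n π, redMap A n π g
      = Matrix.single p q (Ideal.Quotient.mk (π ^ 2) x) := by
  have key : ∀ a b : Fin n, (transvection p q x) a b - (1 : Matrix (Fin n) (Fin n) A) a b
      = Matrix.single p q x a b := by
    intro a b
    simp [transvection, Matrix.add_apply]
  refine ⟨⟨transvection p q x, Matrix.det_transvection_of_ne p q hpq x⟩, ?_, ?_⟩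
  · intro a b
    rw [show ((⟨transvection p q x, _⟩ : SL n A) : Matrix (Fin n) (Fin n) A)
        = transvection p q x from rfl, key a b]
    exact aux_std_mem π hx p q a b
  · funext a b
    show Ideal.Quotient.mk (π ^ 2) _ = _
    rw [show ((⟨transvection p q x, _⟩ : SL n A) : Matrix (Fin n) (Fin n) A)
        = transvection p q x from rfl, key a b]
    exact aux_mk_std π x p q a b

lemma aux_genP (π : Ideal A) {p q : Fin n} (hpq : p ≠ q) {x : A} (hx : x ∈ π) :
    ∃ g ∈ Γset A n π, redMap A n π g
      = Matrix.single p p (Ideal.Quotient.mk (π ^ 2) x)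
        - Matrix.single q q (Ideal.Quotient.mk (π ^ 2) x)
        + Matrix.single q p (Ideal.Quotient.mk (π ^ 2) x)
        - Matrix.single p q (Ideal.Quotient.mk (π ^ 2) x) := by
  have hdet : det (transvection p q 1 * transvection q p x * transvection p q (-1)) = 1 := by
    rw [det_mul, det_mul, Matrix.det_transvection_of_ne p q hpq,
      Matrix.det_transvection_of_ne q p (Ne.symm hpq),
      Matrix.det_transvection_of_ne p q hpq]
    ring
  have key : ∀ a b : Fin n,
      ((transvection p q 1 * transvection q p x * transvection p q (-1) :
          Matrix (Fin n) (Fin n) A)) a b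
        - (1 : Matrix (Fin n) (Fin n) A) a b
      = Matrix.single p p x a b - Matrix.single q q x a b + Matrix.single q p x a b
        - Matrix.single p q x a b := by
    intro a b
    rw [aux_transvection_triple p q hpq x]
    simp only [Matrix.add_apply, Matrix.sub_apply]
    ring
  refine ⟨⟨_, hdet⟩, ?_, ?_⟩
  · intro a b
    rw [show ((⟨transvection p q 1 * transvection q p x * transvection p q (-1), hdet⟩ :
        SL n A) : Matrix (Fin n) (Fin n) A)
        = transvection p q 1 * transvection q p x * transvection p q (-1) from rfl, key a b]
    exact π.sub_mem (π.add_mem (π.sub_mem (aux_std_mem π hx _ _ _ _) (aux_std_mem π hx _ _ _ _))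
      (aux_std_mem π hx _ _ _ _)) (aux_std_mem π hx _ _ _ _)
  · funext a b
    show Ideal.Quotient.mk (π ^ 2) _ = _
    rw [show ((⟨transvection p q 1 * transvection q p x * transvection p q (-1), hdet⟩ :
        SL n A) : Matrix (Fin n) (Fin n) A)
        = transvection p q 1 * transvection q p x * transvection p q (-1) from rfl, key a b]
    simp only [map_sub, map_add, aux_mk_std π x]
    simp [Matrix.sub_apply, Matrix.add_apply]

end Aux

/-- For `n ≥ 2`, the reduction map `r : Γ_n(π) → gl_n(π/π²)`, `g ↦ (g − 1_n) mod π²`, is a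
group homomorphism (from the multiplicative group `Γ_n(π)` to the additive group of
matrices), its image lies in the zero-trace subgroup `sl_n(π/π²)`, it is surjective onto
`sl_n(π/π²)`, and its kernel is `Γ_n(π²)`. -/
theorem reduction_hom_surjective_kernel (A : Type) [CommRing A] (π : Ideal A) (n : ℕ)
    (hn : 2 ≤ n) :
    (∀ g ∈ Γset A n π, ∀ h ∈ Γset A n π,
        redMap A n π (g * h) = redMap A n π g + redMap A n π h) ∧
    (∀ g ∈ Γset A n π,
        (∀ p q : Fin n, redMap A n π g p q ∈ π.map (Ideal.Quotient.mk (π ^ 2))) ∧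
        Matrix.trace (redMap A n π g) = 0) ∧
    (∀ M : Matrix (Fin n) (Fin n) (A ⧸ π ^ 2),
        (∀ p q : Fin n, M p q ∈ π.map (Ideal.Quotient.mk (π ^ 2))) → Matrix.trace M = 0 →
        ∃ g ∈ Γset A n π, redMap A n π g = M) ∧
    (∀ g ∈ Γset A n π, (redMap A n π g = 0 ↔ g ∈ Γset A n (π ^ 2))) := by
  classical
  refine ⟨fun g hg h hh => aux_red_mul π hg hh, ?_, ?_, ?_⟩
  · -- image in sl_n
    intro g hg
    refine ⟨fun p q => Ideal.mem_map_of_mem _ (hg p q), ?_⟩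
    have h1 : det ((g : Matrix (Fin n) (Fin n) A)) = 1 := g.property
    have h2 : det (1 + ((g : Matrix (Fin n) (Fin n) A) - 1)) - 1
        - trace ((g : Matrix (Fin n) (Fin n) A) - 1) ∈ π ^ 2 :=
      aux_det_one_add_mem π _ (fun p q => by simpa [Matrix.sub_apply] using hg p q)
    rw [show (1 : Matrix (Fin n) (Fin n) A) + ((g : Matrix (Fin n) (Fin n) A) - 1)
        = (g : Matrix (Fin n) (Fin n) A) by abel, h1] at h2
    have h3 : trace ((g : Matrix (Fin n) (Fin n) A) - 1) ∈ π ^ 2 := by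
      simpa using (π ^ 2).neg_mem h2
    have h4 : trace (redMap A n π g)
        = Ideal.Quotient.mk (π ^ 2) (trace ((g : Matrix (Fin n) (Fin n) A) - 1)) := by
      rw [Matrix.trace, Matrix.trace, map_sum]
      exact Finset.sum_congr rfl fun i _ => by simp [redMap, Matrix.diag, Matrix.sub_apply]
    rw [h4, Ideal.Quotient.eq_zero_iff_mem]
    exact h3
  · -- surjectivity onto sl_n
    intro M hM htr
    have hz : 0 < n := by omega
    set z : Fin n := ⟨0, hz⟩ with hzdef
    choose X hX using fun p q => (Ideal.mem_map_iff_of_surjective _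
      Ideal.Quotient.mk_surjective).mp (hM p q)
    set S : AddSubmonoid (Matrix (Fin n) (Fin n) (A ⧸ π ^ 2)) :=
      { carrier := {N | ∃ g ∈ Γset A n π, redMap A n π g = N}
        zero_mem' := ⟨1, fun p q => by simp, by
          funext p q
          show Ideal.Quotient.mk (π ^ 2) _ = _
          simp⟩
        add_mem' := by
          rintro N N' ⟨g, hg, rfl⟩ ⟨h, hh, rfl⟩
          exact ⟨g * h, aux_Γ_mul π hg hh, aux_red_mul π hg hh⟩ } with hSdef
    have hoff : ∀ p q : Fin n, p ≠ q → Matrix.single p q (M p q) ∈ S := by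
      intro p q hpq
      obtain ⟨g, hg, he⟩ := aux_gen1 π hpq (hX p q).1
      rw [(hX p q).2] at he
      exact ⟨g, hg, he⟩
    have hdiag : ∀ p : Fin n,
        Matrix.single p p (M p p) - Matrix.single z z (M p p) ∈ S := by
      intro p
      by_cases hp : p = z
      · rw [hp, sub_self]
        exact S.zero_mem
      · obtain ⟨g1, hg1, e1⟩ := aux_genP π hp (hX p p).1
        obtain ⟨g2, hg2, e2⟩ := aux_gen1 π hp (hX p p).1
        obtain ⟨g3, hg3, e3⟩ := aux_gen1 π (Ne.symm hp) (π.neg_mem (hX p p).1)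
        have hmem : (Matrix.single p p (Ideal.Quotient.mk (π ^ 2) (X p p))
            - Matrix.single z z (Ideal.Quotient.mk (π ^ 2) (X p p))
            + Matrix.single z p (Ideal.Quotient.mk (π ^ 2) (X p p))
            - Matrix.single p z (Ideal.Quotient.mk (π ^ 2) (X p p)))
            + Matrix.single p z (Ideal.Quotient.mk (π ^ 2) (X p p))
            + Matrix.single z p (Ideal.Quotient.mk (π ^ 2) (-(X p p))) ∈ S :=
          S.add_mem (S.add_mem ⟨g1, hg1, e1⟩ ⟨g2, hg2, e2⟩) ⟨g3, hg3, e3⟩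
        have hneg : Matrix.single z p (Ideal.Quotient.mk (π ^ 2) (-(X p p)))
            = - Matrix.single z p (Ideal.Quotient.mk (π ^ 2) (X p p)) := by
          ext a b
          simp only [map_neg, Matrix.single, Matrix.of_apply, Matrix.neg_apply]
          split_ifs <;> simp
        rw [hneg] at hmem
        have heq : (Matrix.single p p (Ideal.Quotient.mk (π ^ 2) (X p p))
            - Matrix.single z z (Ideal.Quotient.mk (π ^ 2) (X p p))
            + Matrix.single z p (Ideal.Quotient.mk (π ^ 2) (X p p))
            - Matrix.single p z (Ideal.Quotient.mk (π ^ 2) (X p p)))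
            + Matrix.single p z (Ideal.Quotient.mk (π ^ 2) (X p p))
            + (- Matrix.single z p (Ideal.Quotient.mk (π ^ 2) (X p p)))
            = Matrix.single p p (Ideal.Quotient.mk (π ^ 2) (X p p))
              - Matrix.single z z (Ideal.Quotient.mk (π ^ 2) (X p p)) := by abel
        rw [heq, (hX p p).2] at hmem
        exact hmem
    have hdecomp : M = ∑ p : Fin n, ∑ q : Fin n,
        (Matrix.single p q (M p q) - if p = q then Matrix.single z z (M p p) else 0) := by
      have hsum : ∑ p : Fin n, Matrix.single z z (M p p) = 0 := by
        ext a b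
        simp only [Matrix.sum_apply, Matrix.single, Matrix.of_apply, Matrix.zero_apply]
        split_ifs with h
        · simpa [Matrix.trace, Matrix.diag] using htr
        · simp
      have hstep : ∑ p : Fin n, ∑ q : Fin n,
          (Matrix.single p q (M p q) - if p = q then Matrix.single z z (M p p) else 0)
          = (∑ p : Fin n, ∑ q : Fin n, Matrix.single p q (M p q))
            - ∑ p : Fin n, Matrix.single z z (M p p) := by
        rw [← Finset.sum_sub_distrib]
        refine Finset.sum_congr rfl fun p _ => ?_
        rw [Finset.sum_sub_distrib, Finset.sum_ite_eq]
        simp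
      rw [hstep, hsum, sub_zero]
      exact Matrix.matrix_eq_sum_single M
    have hMS : M ∈ S := by
      rw [hdecomp]
      refine AddSubmonoid.sum_mem S fun p _ => AddSubmonoid.sum_mem S fun q _ => ?_
      by_cases hpq : p = q
      · subst hpq
        simpa using hdiag p
      · simpa [hpq] using hoff p q hpq
    exact hMS
  · -- kernel
    intro g hg
    constructor
    · intro h p q
      have h2 := congrFun (congrFun h p) q
      exact Ideal.Quotient.eq_zero_iff_mem.mp h2
    · intro h
      funext p q
      exact Ideal.Quotient.eq_zero_iff_mem.mpr (h p q)
end
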